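/- arXiv:2006.15180 — 9 statements merged into one kernel-verified Lean document; each statement's English description precedes it below -/
import Mathlib

section
/- Let N, M ≥ 1, let σ_1, …, σ_M > 0, and let X_1, …, X_M be random N×N complex matrices on a probability space whose entries x^{(k)}_{i,j} (over all indices k, i, j) form a jointly independent family of complex random variables with E[x^{(k)}_{i,j}] = 0 and E[|x^{(k)}_{i,j}|^2] = σ_k^2. Then for every z ∈ ℂ the random variable det(z·I_N − X_1⋯X_M) is integrable and E[det(z·I_N − X_1⋯X_M)] = z^N. -/
open MeasureTheory ProbabilityTheory Matrix Finset

section AuxLemmas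

variable {Ω : Type*} [MeasurableSpace Ω] {μ : Measure Ω}


lemma det_add_smul_vecMulVec {n : ℕ} (C : Matrix (Fin n) (Fin n) ℂ) (u w : Fin n → ℂ) :
    ∃ a b : ℂ, ∀ t : ℂ, (C + t • vecMulVec u w).det = a + t * b := by
  classical
  -- block matrix trick
  have key : ∀ t : ℂ, (C + t • vecMulVec u w).det
      = (fromBlocks C (replicateCol (Fin 1) (fun i => -(t * u i))) (replicateRow (Fin 1) w) 1).det := by
    intro t
    rw [det_fromBlocks_one₂₂]
    congr 1
    ext i j
    simp [vecMulVec_apply, mul_apply, Matrix.replicateCol, Matrix.replicateRow, sub_eq_add_neg]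
    ring
  -- the block matrix is an updateCol of a fixed matrix
  set M₀ : Matrix (Fin n ⊕ Fin 1) (Fin n ⊕ Fin 1) ℂ :=
    fromBlocks C 0 (replicateRow (Fin 1) w) 1 with hM₀
  have key2 : ∀ t : ℂ,
      fromBlocks C (replicateCol (Fin 1) (fun i => -(t * u i))) (replicateRow (Fin 1) w) 1
        = M₀.updateCol (Sum.inr 0) ((Sum.elim (0 : Fin n → ℂ) 1) + t • (Sum.elim (fun i => -u i) 0)) := by
    intro t
    ext i j
    rcases i with i | i <;> rcases j with j | j <;>
      (try obtain rfl := Fin.eq_zero i) <;> (try obtain rfl := Fin.eq_zero j) <;>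
      simp [M₀, Matrix.updateCol_apply, fromBlocks, Matrix.replicateCol, Matrix.replicateRow, Matrix.one_apply] <;>
      ring
  refine ⟨(M₀.updateCol (Sum.inr 0) (Sum.elim (0 : Fin n → ℂ) 1)).det,
    (M₀.updateCol (Sum.inr 0) (Sum.elim (fun i => -u i) 0)).det, fun t => ?_⟩
  rw [key, key2, det_updateCol_add, det_updateCol_smul]


lemma mul_vecMulVec_mul {n : ℕ} (L R : Matrix (Fin n) (Fin n) ℂ) (a b : Fin n → ℂ) :
    L * vecMulVec a b * R = vecMulVec (L *ᵥ a) (b ᵥ* R) := by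
  ext i j
  simp only [mul_apply, vecMulVec_apply, mulVec, vecMul, dotProduct, Finset.sum_mul,
    Finset.mul_sum]
  refine Finset.sum_congr rfl fun x _ => Finset.sum_congr rfl fun y _ => by ring

lemma list_ofFn_update {α : Type*} {M : ℕ} (f : Fin M → α) (k : Fin M) (B : α) :
    List.ofFn (Function.update f k B) = (List.ofFn f).set k B := by
  apply List.ext_getElem
  · simp
  · intro n h1 h2
    simp only [List.getElem_ofFn] at *
    rw [List.getElem_set]
    split_ifs with h
    · subst h; simp [Fin.eta]
    · simp only [List.getElem_ofFn]
      have hne : (⟨n, by simpa using h2⟩ : Fin M) ≠ k := by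
        intro hc
        exact h (by rw [← hc])
      rw [Function.update_of_ne hne]

lemma prod_ofFn_update {n M : ℕ} (f : Fin M → Matrix (Fin n) (Fin n) ℂ) (k : Fin M)
    (B : Matrix (Fin n) (Fin n) ℂ) :
    (List.ofFn (Function.update f k B)).prod
      = ((List.ofFn f).take k).prod * B * ((List.ofFn f).drop (k+1)).prod := by
  rw [list_ofFn_update, List.prod_set]
  simp [k.isLt]

def matOf {N M : ℕ} (v : Fin M × Fin N × Fin N → ℂ) : Fin M → Matrix (Fin N) (Fin N) ℂ :=
  fun k => Matrix.of fun i j => v (k, i, j)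

lemma G_affine {N M : ℕ} (z : ℂ) (p : Fin M × Fin N × Fin N) (v : Fin M × Fin N × Fin N → ℂ) :
    ∃ a b : ℂ, ∀ t : ℂ,
      (z • (1 : Matrix (Fin N) (Fin N) ℂ)
        - (List.ofFn (matOf (Function.update v p t))).prod).det = a + t * b := by
  classical
  obtain ⟨k, i, j⟩ := p
  set B₀ : Matrix (Fin N) (Fin N) ℂ :=
    Matrix.of (fun i' j' => if i' = i ∧ j' = j then 0 else v (k, i', j')) with hB₀
  have hm : ∀ t : ℂ, matOf (Function.update v (k, i, j) t)
      = Function.update (matOf v) k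
          (B₀ + t • vecMulVec (Pi.single i 1) (Pi.single j 1)) := by
    intro t
    funext k'
    by_cases hk : k' = k
    · subst hk
      ext i' j'
      by_cases hij : i' = i ∧ j' = j
      · obtain ⟨rfl, rfl⟩ := hij
        simp [matOf, B₀, Function.update_self, vecMulVec_apply]
      · have : (k', i', j') ≠ (k', i, j) := by
          simp only [ne_eq, Prod.mk.injEq, true_and]
          tauto
        simp only [matOf, Matrix.of_apply, Function.update_self, Function.update_of_ne this,
          Matrix.add_apply, Matrix.smul_apply, vecMulVec_apply, B₀, Matrix.of_apply, if_neg hij]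
        rcases not_and_or.mp hij with h | h
        · simp [Pi.single_apply, h]
        · simp [Pi.single_apply, h]
    · ext i' j'
      have : (k', i', j') ≠ (k, i, j) := by
        simp only [ne_eq, Prod.mk.injEq]; tauto
      simp [matOf, Function.update_of_ne this, Function.update_of_ne hk]
  set L := ((List.ofFn (matOf v)).take k).prod with hL
  set R := ((List.ofFn (matOf v)).drop (k+1)).prod with hR
  have hprod : ∀ t : ℂ, (List.ofFn (matOf (Function.update v (k, i, j) t))).prod
      = (z • (1 : Matrix (Fin N) (Fin N) ℂ)) - ((z • (1 : Matrix (Fin N) (Fin N) ℂ) - L * B₀ * R)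
          + (-t) • vecMulVec (L *ᵥ Pi.single i 1) ((Pi.single j 1) ᵥ* R)) := by
    intro t
    rw [hm t, prod_ofFn_update, Matrix.mul_add, Matrix.add_mul, Matrix.mul_smul,
      Matrix.smul_mul, mul_vecMulVec_mul]
    module
  obtain ⟨a, b, hab⟩ := det_add_smul_vecMulVec
    (z • (1 : Matrix (Fin N) (Fin N) ℂ) - L * B₀ * R)
    (L *ᵥ Pi.single i 1) ((Pi.single j 1) ᵥ* R)
  refine ⟨a, -b, fun t => ?_⟩
  have := hab (-t)
  rw [hprod t, sub_sub_cancel, this]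
  ring



lemma const_of_invariant {ι : Type*} [DecidableEq ι] (U : Finset ι) (f : (ι → ℂ) → ℂ)
    (hinv : ∀ q ∈ U, ∀ v t, f (Function.update v q t) = f v) :
    ∀ v w, (∀ q ∉ U, v q = w q) → f v = f w := by
  classical
  induction U using Finset.induction_on with
  | empty =>
    intro v w h
    have : v = w := funext fun q => h q (by simp)
    rw [this]
  | @insert q U' hq ih =>
    intro v w h
    have h1 : f v = f (Function.update v q (w q)) :=
      (hinv q (mem_insert_self _ _) v (w q)).symm
    rw [h1]
    refine ih (fun r hr v t => hinv r (mem_insert_of_mem hr) v t) _ _ fun r hr => ?_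
    by_cases hrq : r = q
    · subst hrq; simp
    · rw [Function.update_of_ne hrq]
      exact h r (by simp [hrq, hr])

lemma multiaffine_expansion {ι : Type*} [DecidableEq ι] [Fintype ι] (T : Finset ι)
    (f : (ι → ℂ) → ℂ)
    (haff : ∀ p ∈ T, ∀ v t, f (Function.update v p t)
      = f (Function.update v p 0) + t * (f (Function.update v p 1) - f (Function.update v p 0)))
    (hinv : ∀ q ∉ T, ∀ v t, f (Function.update v q t) = f v) :
    ∃ c : Finset ι → ℂ, ∀ v, f v = ∑ S ∈ T.powerset, c S * ∏ p ∈ S, v p := by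
  classical
  induction T using Finset.induction_on generalizing f with
  | empty =>
    refine ⟨fun _ => f 0, fun v => ?_⟩
    rw [powerset_empty, sum_singleton, prod_empty, mul_one]
    exact const_of_invariant univ f (fun q _ v t => hinv q (by simp) v t) v 0 (by simp)
  | @insert p T' hp ih =>
    set f₀ : (ι → ℂ) → ℂ := fun v => f (Function.update v p 0) with hf₀
    set f₁ : (ι → ℂ) → ℂ := fun v => f (Function.update v p 1) - f₀ v with hf₁
    have hqp : ∀ q ∈ T', q ≠ p := fun q hq hc => hp (hc ▸ hq)
    have key : ∀ (s : ℂ) q, q ≠ p → ∀ v t,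
        f (Function.update (Function.update v q t) p s)
          = f (Function.update (Function.update v p s) q t) := by
      intro s q hq v t; rw [Function.update_comm hq]
    have haff₀ : ∀ q ∈ T', ∀ v t, f₀ (Function.update v q t)
        = f₀ (Function.update v q 0) + t * (f₀ (Function.update v q 1) - f₀ (Function.update v q 0)) := by
      intro q hq v t
      simp only [hf₀]
      rw [key 0 q (hqp q hq), haff q (mem_insert_of_mem hq) _ t,
        ← key 0 q (hqp q hq), ← key 0 q (hqp q hq)]
    have haff1 : ∀ q ∈ T', ∀ v t, f (Function.update (Function.update v q t) p 1)
        = f (Function.update (Function.update v q 0) p 1)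
          + t * (f (Function.update (Function.update v q 1) p 1)
            - f (Function.update (Function.update v q 0) p 1)) := by
      intro q hq v t
      rw [key 1 q (hqp q hq), haff q (mem_insert_of_mem hq) _ t,
        ← key 1 q (hqp q hq), ← key 1 q (hqp q hq)]
    have haff₁ : ∀ q ∈ T', ∀ v t, f₁ (Function.update v q t)
        = f₁ (Function.update v q 0) + t * (f₁ (Function.update v q 1) - f₁ (Function.update v q 0)) := by
      intro q hq v t
      have h0 := haff₀ q hq v t
      have h1 := haff1 q hq v t
      simp only [hf₁]
      linear_combination h1 - h0 + (0:ℂ)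
    have hinvp : ∀ (s : ℂ) v t, f (Function.update (Function.update v p t) p s)
        = f (Function.update v p s) := by
      intro s v t; rw [Function.update_idem]
    have hinv₀ : ∀ q ∉ T', ∀ v t, f₀ (Function.update v q t) = f₀ v := by
      intro q hq v t
      by_cases hqp' : q = p
      · subst hqp'; exact hinvp 0 v t
      · simp only [hf₀]
        rw [key 0 q hqp', hinv q (by simp [hqp', hq]) _ t]
    have hinv₁ : ∀ q ∉ T', ∀ v t, f₁ (Function.update v q t) = f₁ v := by
      intro q hq v t
      by_cases hqp' : q = p
      · subst hqp'
        simp only [hf₁, hf₀]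
        rw [hinvp 1 v t, hinvp 0 v t]
      · simp only [hf₁, hf₀]
        rw [key 0 q hqp', key 1 q hqp', hinv q (by simp [hqp', hq]) _ t,
          hinv q (by simp [hqp', hq]) _ t]
    obtain ⟨c₀, hc₀⟩ := ih f₀ haff₀ hinv₀
    obtain ⟨c₁, hc₁⟩ := ih f₁ haff₁ hinv₁
    refine ⟨fun S => if p ∈ S then c₁ (S.erase p) else c₀ S, fun v => ?_⟩
    have hfv : f v = f₀ v + v p * f₁ v := by
      have := haff p (mem_insert_self _ _) v (v p)
      rw [Function.update_eq_self] at this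
      simp only [hf₁, hf₀]
      linear_combination this
    rw [hfv, hc₀ v, hc₁ v, powerset_insert, sum_union, sum_image]
    · have h1 : ∀ S ∈ T'.powerset, (if p ∈ S then c₁ (S.erase p) else c₀ S) * ∏ q ∈ S, v q
          = c₀ S * ∏ q ∈ S, v q := by
        intro S hS
        have : p ∉ S := fun hc => hp (mem_powerset.mp hS hc)
        rw [if_neg this]
      have h2 : ∀ S ∈ T'.powerset,
          (if p ∈ insert p S then c₁ ((insert p S).erase p) else c₀ (insert p S))
            * ∏ q ∈ insert p S, v q = c₁ S * (v p * ∏ q ∈ S, v q) := by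
        intro S hS
        have hpS : p ∉ S := fun hc => hp (mem_powerset.mp hS hc)
        rw [if_pos (mem_insert_self _ _), erase_insert hpS, prod_insert hpS]
      rw [sum_congr rfl h1, sum_congr rfl h2, mul_sum]
      congr 1
      refine sum_congr rfl fun S hS => by ring
    · intro S hS S' hS' he
      have hpS : p ∉ S := fun hc => hp (mem_powerset.mp (by simpa using hS) hc)
      have hpS' : p ∉ S' := fun hc => hp (mem_powerset.mp (by simpa using hS') hc)
      rw [← erase_insert hpS, ← erase_insert hpS', he]
    · rw [disjoint_left]
      intro S hS hS'
      have hpS : p ∉ S := fun hc => hp (mem_powerset.mp hS hc)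
      obtain ⟨S', _, rfl⟩ := mem_image.mp hS'
      exact hpS (mem_insert_self _ _)


variable {Ω : Type*} [MeasurableSpace Ω] {μ : Measure Ω}

lemma iIndepFun_ae_eq {ι : Type*} {β : ι → Type*} [m : ∀ i, MeasurableSpace (β i)]
    {f g : ∀ i, Ω → β i} (hf : iIndepFun f μ) (h : ∀ i, f i =ᵐ[μ] g i) :
    iIndepFun g μ := by
  rw [ProbabilityTheory.iIndepFun_iff_measure_inter_preimage_eq_mul] at hf ⊢
  intro S sets hsets
  have hae : ∀ᵐ ω ∂μ, ∀ i ∈ S, f i ω = g i ω := by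
    have h2 := (MeasureTheory.ae_ball_iff S.countable_toSet).2 (fun i _ => h i)
    filter_upwards [h2] with ω hω i hi using hω i hi
  have h1 : (⋂ i ∈ S, f i ⁻¹' sets i) =ᵐ[μ] (⋂ i ∈ S, g i ⁻¹' sets i) := by
    filter_upwards [hae] with ω hω
    show (ω ∈ ⋂ i ∈ S, f i ⁻¹' sets i) = (ω ∈ ⋂ i ∈ S, g i ⁻¹' sets i)
    simp only [Set.mem_iInter₂, Set.mem_preimage, eq_iff_iff]
    constructor
    · intro hmem a ha; rw [← hω a ha]; exact hmem a ha
    · intro hmem a ha; rw [hω a ha]; exact hmem a ha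
  rw [← measure_congr h1, hf S hsets]
  exact Finset.prod_congr rfl fun i hi =>
    measure_congr ((h i).fun_comp (· ∈ sets i))

lemma ProbabilityTheory.IndepFun.integral_mul_complex {X Y : Ω → ℂ} (h : IndepFun X Y μ)
    (hX : Integrable X μ) (hY : Integrable Y μ) :
    ∫ ω, X ω * Y ω ∂μ = (∫ ω, X ω ∂μ) * ∫ ω, Y ω ∂μ := by
  have hXr : Integrable (fun ω => (X ω).re) μ := hX.re
  have hXi : Integrable (fun ω => (X ω).im) μ := hX.im
  have hYr : Integrable (fun ω => (Y ω).re) μ := hY.re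
  have hYi : Integrable (fun ω => (Y ω).im) μ := hY.im
  have hrr : IndepFun (fun ω => (X ω).re) (fun ω => (Y ω).re) μ :=
    h.comp Complex.measurable_re Complex.measurable_re
  have hri : IndepFun (fun ω => (X ω).re) (fun ω => (Y ω).im) μ :=
    h.comp Complex.measurable_re Complex.measurable_im
  have hir : IndepFun (fun ω => (X ω).im) (fun ω => (Y ω).re) μ :=
    h.comp Complex.measurable_im Complex.measurable_re
  have hii : IndepFun (fun ω => (X ω).im) (fun ω => (Y ω).im) μ :=
    h.comp Complex.measurable_im Complex.measurable_im
  have e1 : ∫ ω, (X ω).re * (Y ω).re ∂μ = (∫ ω, (X ω).re ∂μ) * ∫ ω, (Y ω).re ∂μ :=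
    hrr.integral_mul_eq_mul_integral hXr.1 hYr.1
  have e2 : ∫ ω, (X ω).re * (Y ω).im ∂μ = (∫ ω, (X ω).re ∂μ) * ∫ ω, (Y ω).im ∂μ :=
    hri.integral_mul_eq_mul_integral hXr.1 hYi.1
  have e3 : ∫ ω, (X ω).im * (Y ω).re ∂μ = (∫ ω, (X ω).im ∂μ) * ∫ ω, (Y ω).re ∂μ :=
    hir.integral_mul_eq_mul_integral hXi.1 hYr.1
  have e4 : ∫ ω, (X ω).im * (Y ω).im ∂μ = (∫ ω, (X ω).im ∂μ) * ∫ ω, (Y ω).im ∂μ :=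
    hii.integral_mul_eq_mul_integral hXi.1 hYi.1
  have hmul : Integrable (fun ω => X ω * Y ω) μ := by
    have := h.integrable_mul hX hY
    exact this
  have hre : ∀ (f : Ω → ℂ), Integrable f μ →
      (∫ ω, f ω ∂μ).re = ∫ ω, (f ω).re ∂μ := by
    intro f hf
    rw [← RCLike.re_eq_complex_re, integral_re hf, RCLike.re_eq_complex_re]
  have him : ∀ (f : Ω → ℂ), Integrable f μ →
      (∫ ω, f ω ∂μ).im = ∫ ω, (f ω).im ∂μ := by
    intro f hf
    rw [← RCLike.im_eq_complex_im, integral_im hf, RCLike.im_eq_complex_im]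
  apply Complex.ext
  · rw [Complex.mul_re, hre _ hmul, hre _ hX, hre _ hY, him _ hX, him _ hY]
    simp only [Complex.mul_re]
    have m1 : Integrable (fun ω => (X ω).re * (Y ω).re) μ := hrr.integrable_mul hXr hYr
    have m2 : Integrable (fun ω => (X ω).im * (Y ω).im) μ := hii.integrable_mul hXi hYi
    rw [MeasureTheory.integral_sub m1 m2, e1, e4]
  · rw [Complex.mul_im, him _ hmul, hre _ hX, hre _ hY, him _ hX, him _ hY]
    simp only [Complex.mul_im]
    have m1 : Integrable (fun ω => (X ω).re * (Y ω).im) μ := hri.integrable_mul hXr hYi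
    have m2 : Integrable (fun ω => (X ω).im * (Y ω).re) μ := hir.integrable_mul hXi hYr
    rw [MeasureTheory.integral_add m1 m2, e2, e3]

lemma prod_integrable_integral {ι : Type*} [IsProbabilityMeasure μ]
    {Y : ι → Ω → ℂ} (hmeas : ∀ i, Measurable (Y i)) (hint : ∀ i, Integrable (Y i) μ)
    (hindep : iIndepFun Y μ) (S : Finset ι) :
    Integrable (fun ω => ∏ i ∈ S, Y i ω) μ ∧
      (∫ ω, ∏ i ∈ S, Y i ω ∂μ) = ∏ i ∈ S, ∫ ω, Y i ω ∂μ := by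
  classical
  induction S using Finset.induction_on with
  | empty => simp
  | @insert i S hi ih =>
    have hIF : IndepFun (∏ j ∈ S, Y j) (Y i) μ :=
      hindep.indepFun_finsetProd_of_notMem hmeas hi
    have hprodeq : (fun ω => ∏ j ∈ S, Y j ω) = ∏ j ∈ S, Y j := by
      funext ω; simp
    have hint' : Integrable (∏ j ∈ S, Y j) μ := hprodeq ▸ ih.1
    have hIF' : IndepFun (fun ω => ∏ j ∈ S, Y j ω) (Y i) μ := hprodeq ▸ hIF
    have hmul : Integrable (fun ω => (∏ j ∈ S, Y j ω) * Y i ω) μ := by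
      have := hIF.integrable_mul hint' (hint i)
      have h2 : ((∏ j ∈ S, Y j) * Y i) = (fun ω => (∏ j ∈ S, Y j ω) * Y i ω) := by
        funext ω; simp
      rwa [h2] at this
    constructor
    · have h3 : (fun ω => ∏ j ∈ insert i S, Y j ω)
          = fun ω => (∏ j ∈ S, Y j ω) * Y i ω := by
        funext ω; rw [Finset.prod_insert hi, mul_comm]
      rw [h3]; exact hmul
    · have h3 : (fun ω => ∏ j ∈ insert i S, Y j ω)
          = fun ω => (∏ j ∈ S, Y j ω) * Y i ω := by
        funext ω; rw [Finset.prod_insert hi, mul_comm]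
      rw [Finset.prod_insert hi, h3,
        hIF'.integral_mul_complex ih.1 (hint i), ih.2, mul_comm]

end AuxLemmas

/-- For independent Wigner matrices, the average of a single characteristic polynomial of the
(non-hermitised) product `X₁⋯X_M` is trivial: `E[det(z·I − X₁⋯X_M)] = z^N`. -/
theorem average_single_char_poly_product
    {Ω : Type*} [MeasurableSpace Ω] (μ : Measure Ω) [IsProbabilityMeasure μ]
    (N M : ℕ) (hN : 1 ≤ N) (hM : 1 ≤ M)
    (σ : Fin M → ℝ) (hσ : ∀ k, 0 < σ k)
    (X : Fin M → Ω → Matrix (Fin N) (Fin N) ℂ)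
    (hindep : iIndepFun
      (fun (p : Fin M × Fin N × Fin N) ω => X p.1 ω p.2.1 p.2.2) μ)
    (hL2 : ∀ k i j, MemLp (fun ω => X k ω i j) 2 μ)
    (hmean : ∀ k i j, ∫ ω, X k ω i j ∂μ = 0)
    (hvar : ∀ k i j, ∫ ω, ‖X k ω i j‖ ^ 2 ∂μ = (σ k) ^ 2) :
    ∀ z : ℂ,
      Integrable (fun ω =>
        (z • (1 : Matrix (Fin N) (Fin N) ℂ) - (List.ofFn fun k => X k ω).prod).det) μ ∧
      ∫ ω, (z • (1 : Matrix (Fin N) (Fin N) ℂ) - (List.ofFn fun k => X k ω).prod).det ∂μ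
        = z ^ N := by
  intro z
  classical
  set f : (Fin M × Fin N × Fin N → ℂ) → ℂ := fun v =>
    (z • (1 : Matrix (Fin N) (Fin N) ℂ) - (List.ofFn (matOf v)).prod).det with hf
  have haff : ∀ p ∈ (univ : Finset (Fin M × Fin N × Fin N)), ∀ v t,
      f (Function.update v p t) = f (Function.update v p 0)
        + t * (f (Function.update v p 1) - f (Function.update v p 0)) := by
    intro p _ v t
    obtain ⟨a, b, hab⟩ := G_affine z p v
    simp only [hf]
    rw [hab t, hab 0, hab 1]
    ring
  obtain ⟨c, hc⟩ := multiaffine_expansion univ f haff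
    (fun q hq => absurd (mem_univ q) hq)
  -- the constant coefficient is z ^ N
  have hf0 : f 0 = z ^ N := by
    have hzero : matOf (0 : Fin M × Fin N × Fin N → ℂ)
        = fun _ => (0 : Matrix (Fin N) (Fin N) ℂ) := by
      funext k; ext i j; simp [matOf]
    have hprod0 : (List.ofFn (matOf (0 : Fin M × Fin N × Fin N → ℂ))).prod = 0 := by
      rw [hzero]
      obtain ⟨M', rfl⟩ : ∃ M', M = M' + 1 := ⟨M - 1, by omega⟩
      rw [List.ofFn_succ, List.prod_cons, Matrix.zero_mul]
    simp only [hf]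
    rw [hprod0, sub_zero, Matrix.det_smul, det_one, mul_one, Fintype.card_fin]
  have hc0 : c ∅ = z ^ N := by
    rw [← hf0, hc 0]
    rw [Finset.sum_eq_single ∅]
    · simp
    · intro S _ hne
      obtain ⟨p, hp⟩ := Finset.nonempty_iff_ne_empty.mpr hne
      rw [Finset.prod_eq_zero hp (by simp), mul_zero]
    · intro h; exact absurd (Finset.empty_mem_powerset _) h
  -- random variables
  set Y : Fin M × Fin N × Fin N → Ω → ℂ := fun p ω => X p.1 ω p.2.1 p.2.2 with hY
  have hsm : ∀ p : Fin M × Fin N × Fin N, AEStronglyMeasurable (Y p) μ :=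
    fun p => (hL2 p.1 p.2.1 p.2.2).aestronglyMeasurable
  set Y' : Fin M × Fin N × Fin N → Ω → ℂ := fun p => (hsm p).mk (Y p) with hY'
  have hmeas' : ∀ p, Measurable (Y' p) :=
    fun p => (hsm p).stronglyMeasurable_mk.measurable
  have hae : ∀ p, Y p =ᵐ[μ] Y' p := fun p => (hsm p).ae_eq_mk
  have hindep' : iIndepFun Y' μ :=
    iIndepFun_ae_eq hindep hae
  have hint' : ∀ p, Integrable (Y' p) μ := fun p =>
    ((hL2 p.1 p.2.1 p.2.2).integrable one_le_two).congr (hae p)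
  have hmean' : ∀ p, ∫ ω, Y' p ω ∂μ = 0 := by
    intro p
    rw [← integral_congr_ae (hae p)]
    exact hmean p.1 p.2.1 p.2.2
  -- ae equality of the two determinant processes
  have haeall : ∀ᵐ ω ∂μ, ∀ p, Y p ω = Y' p ω := ae_all_iff.mpr hae
  have hDae : (fun ω => f (fun p => Y p ω)) =ᵐ[μ] (fun ω => f (fun p => Y' p ω)) := by
    filter_upwards [haeall] with ω hω
    congr 1
    funext p
    exact hω p
  -- integrability and integral of the primed process
  have hD'eq : (fun ω => f (fun p => Y' p ω))
      = fun ω => ∑ S ∈ (univ : Finset (Fin M × Fin N × Fin N)).powerset,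
          c S * ∏ p ∈ S, Y' p ω := by
    funext ω; exact hc _
  have hPI := fun S => prod_integrable_integral hmeas' hint' hindep' S
  have hintD' : Integrable (fun ω => f (fun p => Y' p ω)) μ := by
    rw [hD'eq]
    exact integrable_finset_sum _ fun S _ => ((hPI S).1.const_mul (c S))
  have hintegralD' : ∫ ω, f (fun p => Y' p ω) ∂μ = z ^ N := by
    rw [hD'eq, integral_finset_sum _ fun S _ => ((hPI S).1.const_mul (c S))]
    have hterm : ∀ S ∈ (univ : Finset (Fin M × Fin N × Fin N)).powerset,
        ∫ ω, c S * ∏ p ∈ S, Y' p ω ∂μ = if S = ∅ then z ^ N else 0 := by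
      intro S _
      rw [integral_const_mul, (hPI S).2]
      by_cases hS : S = ∅
      · subst hS; simp [hc0]
      · obtain ⟨p, hp⟩ := Finset.nonempty_iff_ne_empty.mpr hS
        rw [if_neg hS, Finset.prod_eq_zero hp (hmean' p), mul_zero]
    rw [Finset.sum_congr rfl hterm, Finset.sum_ite_eq' _ ∅ (fun _ => z ^ N)]
    simp
  -- transfer back
  have hsame : (fun ω =>
      (z • (1 : Matrix (Fin N) (Fin N) ℂ) - (List.ofFn fun k => X k ω).prod).det)
      = fun ω => f (fun p => Y p ω) := rfl
  rw [hsame]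
  exact ⟨hintD'.congr hDae.symm, by rw [integral_congr_ae hDae, hintegralD']⟩
end

section
/- Let N ≥ 1 and 1 ≤ r ≤ N, and let X be a random N×N complex matrix whose entries x_{i,j} form a jointly independent family of complex random variables with E[x_{i,j}] = 0 and E[|x_{i,j}|^2] = σ^2 for some σ > 0. Let K, K̃, L, L̃ ⊆ {1,…,N} be subsets of cardinality r. Then the random variable det(X[K, K̃]) · det(X^*[L̃, L]) is integrable, and its expectation equals r! σ^{2r} if K = L and K̃ = L̃, and equals 0 otherwise. -/
open MeasureTheory ProbabilityTheory Matrix Finset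

section Aux

variable {Ω : Type*} [MeasurableSpace Ω] {μ : Measure Ω}

private lemma aux_iIndepFun_congr {ι : Type*} {β : ι → Type*} [m : ∀ i, MeasurableSpace (β i)]
    {f g : ∀ i, Ω → β i} (h : iIndepFun f μ) (hfg : ∀ i, f i =ᵐ[μ] g i) :
    iIndepFun g μ := by
  rw [iIndepFun_iff_measure_inter_preimage_eq_mul] at h ⊢
  intro S sets H
  have hset : ∀ i : ι, (f i ⁻¹' sets i : Set Ω) =ᵐ[μ] (g i ⁻¹' sets i : Set Ω) := by
    intro i
    filter_upwards [hfg i] with ω hω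
    show (f i ω ∈ sets i) = (g i ω ∈ sets i)
    rw [hω]
  have hint : ((⋂ i ∈ S, f i ⁻¹' sets i) : Set Ω) =ᵐ[μ] ((⋂ i ∈ S, g i ⁻¹' sets i) : Set Ω) := by
    filter_upwards [(Filter.eventually_all_finset S).2 fun i _ => hfg i] with ω hω
    show (ω ∈ ⋂ i ∈ S, f i ⁻¹' sets i) = (ω ∈ ⋂ i ∈ S, g i ⁻¹' sets i)
    simp only [Set.mem_iInter, Set.mem_preimage, eq_iff_iff]
    exact ⟨fun h' i hi => (hω i hi) ▸ (h' i hi), fun h' i hi => (hω i hi) ▸ (h' i hi)⟩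
  rw [← measure_congr hint, h S H]
  exact Finset.prod_congr rfl fun i _ => measure_congr (hset i)

private lemma aux_integral_mul [IsProbabilityMeasure μ] {f g : Ω → ℂ}
    (h : IndepFun f g μ) (hf : Measurable f) (hg : Measurable g) :
    (∫ ω, f ω * g ω ∂μ) = (∫ ω, f ω ∂μ) * ∫ ω, g ω ∂μ := by
  have hmap := (indepFun_iff_map_prod_eq_prod_map_map hf.aemeasurable hg.aemeasurable).1 h
  have hpair : AEMeasurable (fun ω => (f ω, g ω)) μ := (hf.prodMk hg).aemeasurable
  have h1 : IsProbabilityMeasure (μ.map f) := Measure.isProbabilityMeasure_map hf.aemeasurable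
  have h2 : IsProbabilityMeasure (μ.map g) := Measure.isProbabilityMeasure_map hg.aemeasurable
  have hmul : AEStronglyMeasurable (fun p : ℂ × ℂ => p.1 * p.2)
      (μ.map (fun ω => (f ω, g ω))) :=
    (continuous_fst.mul continuous_snd).aestronglyMeasurable
  have e1 : (∫ ω, f ω * g ω ∂μ) = ∫ p, p.1 * p.2 ∂(μ.map (fun ω => (f ω, g ω))) :=
    (integral_map hpair hmul).symm
  have e2 : (∫ x, x ∂(μ.map f)) = ∫ ω, f ω ∂μ :=
    integral_map hf.aemeasurable aestronglyMeasurable_id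
  have e3 : (∫ x, x ∂(μ.map g)) = ∫ ω, g ω ∂μ :=
    integral_map hg.aemeasurable aestronglyMeasurable_id
  rw [e1, hmap, integral_prod_mul (fun x : ℂ => x) (fun y : ℂ => y), e2, e3]

private lemma aux_indep_prod [IsProbabilityMeasure μ] {ι : Type*} {Y : ι → Ω → ℂ}
    (h : iIndepFun Y μ) (hm : ∀ i, Measurable (Y i))
    (s : Finset ι) (hint : ∀ i ∈ s, Integrable (Y i) μ) :
    Integrable (fun ω => ∏ i ∈ s, Y i ω) μ ∧
      (∫ ω, ∏ i ∈ s, Y i ω ∂μ) = ∏ i ∈ s, ∫ ω, Y i ω ∂μ := by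
  classical
  induction s using Finset.induction_on with
  | empty => simp
  | @insert a s ha ih =>
    have hr := ih (fun i hi => hint i (Finset.mem_insert_of_mem hi))
    have hIa : Integrable (Y a) μ := hint a (Finset.mem_insert_self a s)
    have hprodeq : (∏ j ∈ s, Y j) = fun ω => ∏ j ∈ s, Y j ω := by
      funext ω; exact Finset.prod_apply ω s Y
    have hI : IndepFun (fun ω => ∏ j ∈ s, Y j ω) (Y a) μ := by
      have := h.indepFun_finsetProd_of_notMem hm ha
      rwa [hprodeq] at this
    constructor
    · simp only [Finset.prod_insert ha]
      exact hI.symm.integrable_mul hIa hr.1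
    · simp only [Finset.prod_insert ha]
      rw [← hr.2]
      exact aux_integral_mul hI.symm (hm a)
        (Finset.measurable_prod s (fun i _ => hm i))

end Aux

/-- **Lemma 4, Eq. (14):** for a Wigner matrix `X` with i.i.d.-type independent entries of mean
zero and variance `σ²`, and subsets `K, K̃, L, L̃ ⊆ {1,…,N}` of cardinality `r`,
`E[det X[K,K̃] · det X*[L̃,L]] = r! σ^{2r}` if `K = L` and `K̃ = L̃`, and `= 0` otherwise. -/
theorem expected_product_of_minors
    {Ω : Type*} [MeasurableSpace Ω] (μ : Measure Ω) [IsProbabilityMeasure μ]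
    (N r : ℕ) (hN : 1 ≤ N) (hr1 : 1 ≤ r) (hrN : r ≤ N)
    (σ : ℝ) (hσ : 0 < σ)
    (X : Ω → Matrix (Fin N) (Fin N) ℂ)
    (hindep : iIndepFun
      (fun (p : Fin N × Fin N) ω => X ω p.1 p.2) μ)
    (hL2 : ∀ i j, MemLp (fun ω => X ω i j) 2 μ)
    (hmean : ∀ i j, ∫ ω, X ω i j ∂μ = 0)
    (hvar : ∀ i j, ∫ ω, ‖X ω i j‖ ^ 2 ∂μ = σ ^ 2)
    (K Kt L Lt : Finset (Fin N))
    (hK : K.card = r) (hKt : Kt.card = r) (hL : L.card = r) (hLt : Lt.card = r) :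
    Integrable (fun ω =>
      ((X ω).submatrix (fun i : Fin r => (K.orderIsoOfFin hK i : Fin N))
          (fun j : Fin r => (Kt.orderIsoOfFin hKt j : Fin N))).det *
      ((X ω)ᴴ.submatrix (fun i : Fin r => (Lt.orderIsoOfFin hLt i : Fin N))
          (fun j : Fin r => (L.orderIsoOfFin hL j : Fin N))).det) μ ∧
    ∫ ω, ((X ω).submatrix (fun i : Fin r => (K.orderIsoOfFin hK i : Fin N))
          (fun j : Fin r => (Kt.orderIsoOfFin hKt j : Fin N))).det *
        ((X ω)ᴴ.submatrix (fun i : Fin r => (Lt.orderIsoOfFin hLt i : Fin N))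
          (fun j : Fin r => (L.orderIsoOfFin hL j : Fin N))).det ∂μ
      = if K = L ∧ Kt = Lt then (r.factorial : ℂ) * ((σ : ℂ)) ^ (2 * r) else 0 := by
  classical
  set k : Fin r → Fin N := fun i => (K.orderIsoOfFin hK i : Fin N) with hkdef
  set kt : Fin r → Fin N := fun i => (Kt.orderIsoOfFin hKt i : Fin N) with hktdef
  set l : Fin r → Fin N := fun i => (L.orderIsoOfFin hL i : Fin N) with hldef
  set lt : Fin r → Fin N := fun i => (Lt.orderIsoOfFin hLt i : Fin N) with hltdef
  have hkinj : Function.Injective k :=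
    fun a b hab => (K.orderIsoOfFin hK).injective (Subtype.coe_injective hab)
  have hktinj : Function.Injective kt :=
    fun a b hab => (Kt.orderIsoOfFin hKt).injective (Subtype.coe_injective hab)
  have hlinj : Function.Injective l :=
    fun a b hab => (L.orderIsoOfFin hL).injective (Subtype.coe_injective hab)
  have hltinj : Function.Injective lt :=
    fun a b hab => (Lt.orderIsoOfFin hLt).injective (Subtype.coe_injective hab)
  have hkmem : ∀ i, k i ∈ K := fun i => (K.orderIsoOfFin hK i).2
  have hktmem : ∀ i, kt i ∈ Kt := fun i => (Kt.orderIsoOfFin hKt i).2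
  have hlmem : ∀ i, l i ∈ L := fun i => (L.orderIsoOfFin hL i).2
  have hltmem : ∀ i, lt i ∈ Lt := fun i => (Lt.orderIsoOfFin hLt i).2
  have hksurj : ∀ x ∈ K, ∃ i, k i = x := fun x hx =>
    ⟨(K.orderIsoOfFin hK).symm ⟨x, hx⟩,
      congrArg Subtype.val ((K.orderIsoOfFin hK).apply_symm_apply ⟨x, hx⟩)⟩
  have hktsurj : ∀ x ∈ Kt, ∃ i, kt i = x := fun x hx =>
    ⟨(Kt.orderIsoOfFin hKt).symm ⟨x, hx⟩,
      congrArg Subtype.val ((Kt.orderIsoOfFin hKt).apply_symm_apply ⟨x, hx⟩)⟩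
  have hlsurj : ∀ x ∈ L, ∃ i, l i = x := fun x hx =>
    ⟨(L.orderIsoOfFin hL).symm ⟨x, hx⟩,
      congrArg Subtype.val ((L.orderIsoOfFin hL).apply_symm_apply ⟨x, hx⟩)⟩
  have hltsurj : ∀ x ∈ Lt, ∃ i, lt i = x := fun x hx =>
    ⟨(Lt.orderIsoOfFin hLt).symm ⟨x, hx⟩,
      congrArg Subtype.val ((Lt.orderIsoOfFin hLt).apply_symm_apply ⟨x, hx⟩)⟩
  -- measurable modifications of the entries
  set Y : Fin N × Fin N → Ω → ℂ := fun p => (hL2 p.1 p.2).1.mk (fun ω => X ω p.1 p.2) with hYdef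
  have hYmeas : ∀ p, Measurable (Y p) := fun p =>
    (hL2 p.1 p.2).1.stronglyMeasurable_mk.measurable
  have hYae : ∀ p : Fin N × Fin N, (fun ω => X ω p.1 p.2) =ᵐ[μ] Y p := fun p =>
    (hL2 p.1 p.2).1.ae_eq_mk
  have hYindep : iIndepFun Y μ :=
    aux_iIndepFun_congr hindep hYae
  have hYL2 : ∀ p, MemLp (Y p) 2 μ := fun p => (hL2 p.1 p.2).ae_eq (hYae p)
  have hYint : ∀ p, Integrable (Y p) μ := fun p => (hYL2 p).integrable one_le_two
  have hYmean : ∀ p, (∫ ω, Y p ω ∂μ) = 0 := fun p => by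
    rw [← integral_congr_ae (hYae p)]; exact hmean p.1 p.2
  have hofReal : ∀ (g : Ω → ℝ), Integrable g μ →
      (∫ ω, ((g ω : ℝ) : ℂ) ∂μ) = (((∫ ω, g ω ∂μ) : ℝ) : ℂ) := by
    intro g hg
    have := Complex.ofRealCLM.integral_comp_comm hg
    simpa using this
  have hconjrep : ∀ z : ℂ, (starRingEnd ℂ) z = 2 * (z.re : ℂ) - z := by
    intro z
    apply Complex.ext <;> simp <;> ring
  have hYconjint : ∀ p, Integrable (fun ω => (starRingEnd ℂ) (Y p ω)) μ := by
    intro p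
    simp only [hconjrep]
    exact ((hYint p).re.ofReal.const_mul 2).sub (hYint p)
  have hnormsq : ∀ z : ℂ, z * (starRingEnd ℂ) z = ((‖z‖ ^ 2 : ℝ) : ℂ) := by
    intro z
    rw [Complex.mul_conj]
    norm_cast
    rw [Complex.sq_norm]
  have hYsqint : ∀ p, Integrable (fun ω => Y p ω * (starRingEnd ℂ) (Y p ω)) μ := by
    intro p
    simp only [hnormsq]
    exact ((memLp_two_iff_integrable_sq_norm (hYL2 p).1).1 (hYL2 p)).ofReal
  have hYsqval : ∀ p, (∫ ω, Y p ω * (starRingEnd ℂ) (Y p ω) ∂μ) = ((σ ^ 2 : ℝ) : ℂ) := by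
    intro p
    simp only [hnormsq]
    rw [hofReal _ ((memLp_two_iff_integrable_sq_norm (hYL2 p).1).1 (hYL2 p))]
    norm_cast
    rw [← hvar p.1 p.2]
    refine integral_congr_ae ?_
    filter_upwards [hYae p] with ω hω
    rw [hω]
  -- index pair sets
  set A : Equiv.Perm (Fin r) → Finset (Fin N × Fin N) :=
    fun π => Finset.image (fun i => (k (π i), kt i)) Finset.univ with hAdef
  set B : Equiv.Perm (Fin r) → Finset (Fin N × Fin N) :=
    fun ρ => Finset.image (fun i => (l i, lt (ρ i))) Finset.univ with hBdef
  have hAinj : ∀ π : Equiv.Perm (Fin r), Function.Injective (fun i => (k (π i), kt i)) :=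
    fun π a b hab => hktinj (congrArg Prod.snd hab)
  have hBinj : ∀ ρ : Equiv.Perm (Fin r), Function.Injective (fun i => (l i, lt (ρ i))) :=
    fun ρ a b hab => hlinj (congrArg Prod.fst hab)
  have hAcard : ∀ π, (A π).card = r := by
    intro π
    rw [hAdef]
    rw [Finset.card_image_of_injective _ (hAinj π), Finset.card_univ, Fintype.card_fin]
  -- the factor functions
  set F : Equiv.Perm (Fin r) → Equiv.Perm (Fin r) → (Fin N × Fin N) → Ω → ℂ := fun π ρ p ω =>
    (if p ∈ A π then Y p ω else 1) * (if p ∈ B ρ then (starRingEnd ℂ) (Y p ω) else 1) with hFdef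
  set G : Equiv.Perm (Fin r) → Equiv.Perm (Fin r) → Ω → ℂ := fun π ρ ω =>
    ∏ p ∈ A π ∪ B ρ, F π ρ p ω with hGdef
  have hFmeas : ∀ π ρ p, Measurable (F π ρ p) := by
    intro π ρ p
    rw [hFdef]
    by_cases h1 : p ∈ A π <;> by_cases h2 : p ∈ B ρ <;>
      simp only [h1, h2, if_true, if_false, mul_one, one_mul]
    · exact (hYmeas p).mul (Complex.continuous_conj.measurable.comp (hYmeas p))
    · exact hYmeas p
    · exact Complex.continuous_conj.measurable.comp (hYmeas p)
    · exact measurable_const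
  have hFint : ∀ π ρ p, Integrable (F π ρ p) μ := by
    intro π ρ p
    rw [hFdef]
    by_cases h1 : p ∈ A π <;> by_cases h2 : p ∈ B ρ <;>
      simp only [h1, h2, if_true, if_false, mul_one, one_mul]
    · exact hYsqint p
    · exact hYint p
    · exact hYconjint p
    · exact integrable_const 1
  have hFindep : ∀ π ρ, iIndepFun (F π ρ) μ := by
    intro π ρ
    have h := hYindep.comp
      (fun p z => (if p ∈ A π then z else 1) * (if p ∈ B ρ then (starRingEnd ℂ) z else 1))
      (fun p => by
        by_cases h1 : p ∈ A π <;> by_cases h2 : p ∈ B ρ <;>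
          simp only [h1, h2, if_true, if_false, mul_one, one_mul]
        · exact measurable_id.mul Complex.continuous_conj.measurable
        · exact measurable_id
        · exact Complex.continuous_conj.measurable
        · exact measurable_const)
    exact h
  have hFval : ∀ π ρ p, (∫ ω, F π ρ p ω ∂μ) =
      if p ∈ A π ∧ p ∈ B ρ then ((σ ^ 2 : ℝ) : ℂ)
      else (if p ∈ A π ∨ p ∈ B ρ then 0 else 1) := by
    intro π ρ p
    rw [hFdef]
    by_cases h1 : p ∈ A π <;> by_cases h2 : p ∈ B ρ <;>
      simp only [h1, h2, if_true, if_false, mul_one, one_mul, true_and, false_and, and_false,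
        true_or, or_true, false_or, or_false]
    · exact hYsqval p
    · exact hYmean p
    · rw [integral_conj, hYmean p, map_zero]
    · simp
  have hGkey : ∀ π ρ, Integrable (G π ρ) μ ∧
      (∫ ω, G π ρ ω ∂μ) = ∏ p ∈ A π ∪ B ρ, ∫ ω, F π ρ p ω ∂μ := by
    intro π ρ
    exact aux_indep_prod (hFindep π ρ) (hFmeas π ρ) _ (fun p _ => hFint π ρ p)
  have hGval : ∀ π ρ, (∫ ω, G π ρ ω ∂μ) =
      if A π = B ρ then ((σ ^ 2 : ℝ) : ℂ) ^ r else 0 := by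
    intro π ρ
    rw [(hGkey π ρ).2]
    by_cases hAB : A π = B ρ
    · rw [if_pos hAB, ← hAB, Finset.union_self]
      have hval : ∀ p ∈ A π, (∫ ω, F π ρ p ω ∂μ) = ((σ ^ 2 : ℝ) : ℂ) := by
        intro p hp
        rw [hFval π ρ p, if_pos ⟨hp, hAB ▸ hp⟩]
      rw [Finset.prod_congr rfl hval, Finset.prod_const, hAcard π]
    · rw [if_neg hAB]
      have hwit : ∃ p, (p ∈ A π ∧ p ∉ B ρ) ∨ (p ∈ B ρ ∧ p ∉ A π) := by
        by_contra hc
        push_neg at hc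
        apply hAB
        apply Finset.ext
        intro p
        have := hc p
        tauto
      obtain ⟨p, hp⟩ := hwit
      refine Finset.prod_eq_zero (i := p) ?_ ?_
      · rcases hp with ⟨h1, _⟩ | ⟨h1, _⟩
        · exact Finset.mem_union_left _ h1
        · exact Finset.mem_union_right _ h1
      · rcases hp with ⟨h1, h2⟩ | ⟨h1, h2⟩ <;> rw [hFval π ρ p]
        · rw [if_neg (by tauto), if_pos (Or.inl h1)]
        · rw [if_neg (by tauto), if_pos (Or.inr h1)]
  -- the sign coefficients
  set c : Equiv.Perm (Fin r) → Equiv.Perm (Fin r) → ℂ := fun π ρ =>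
    ((Equiv.Perm.sign π : ℤ) : ℂ) * ((Equiv.Perm.sign ρ : ℤ) : ℂ) with hcdef
  -- a.e. identification of the product of minors with the expansion
  have hdetae : (fun ω =>
      ((X ω).submatrix k kt).det * ((X ω)ᴴ.submatrix lt l).det) =ᵐ[μ]
      (fun ω => ∑ π : Equiv.Perm (Fin r), ∑ ρ : Equiv.Perm (Fin r), c π ρ * G π ρ ω) := by
    have hall : ∀ᵐ ω ∂μ, ∀ p : Fin N × Fin N, X ω p.1 p.2 = Y p ω := by
      rw [ae_all_iff]; exact fun p => hYae p
    filter_upwards [hall] with ω hω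
    rw [Matrix.det_apply', Matrix.det_apply', Finset.sum_mul_sum]
    refine Finset.sum_congr rfl fun π _ => Finset.sum_congr rfl fun ρ _ => ?_
    have hGexp : G π ρ ω =
        (∏ i, Y (k (π i), kt i) ω) * ∏ i, (starRingEnd ℂ) (Y (l i, lt (ρ i)) ω) := by
      rw [hGdef]
      dsimp only
      rw [hFdef]
      dsimp only
      rw [Finset.prod_mul_distrib]
      congr 1
      · rw [Finset.prod_ite_mem (A π ∪ B ρ) (A π) (fun p => Y p ω),
          Finset.union_inter_cancel_left, hAdef]
        rw [Finset.prod_image (fun a _ b _ h => hAinj π h)]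
      · rw [Finset.prod_ite_mem (A π ∪ B ρ) (B ρ) (fun p => (starRingEnd ℂ) (Y p ω)),
          Finset.union_inter_cancel_right, hBdef]
        rw [Finset.prod_image (fun a _ b _ h => hBinj ρ h)]
    rw [hGexp]
    simp only [Matrix.submatrix_apply, Matrix.conjTranspose_apply, RCLike.star_def]
    have e1 : (∏ i, X ω (k (π i)) (kt i)) = ∏ i, Y (k (π i), kt i) ω :=
      Finset.prod_congr rfl fun i _ => hω (k (π i), kt i)
    have e2 : (∏ i, (starRingEnd ℂ) (X ω (l i) (lt (ρ i)))) =
        ∏ i, (starRingEnd ℂ) (Y (l i, lt (ρ i)) ω) :=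
      Finset.prod_congr rfl fun i _ => congrArg _ (hω (l i, lt (ρ i)))
    rw [e1, e2]
    simp only [hcdef]
    ring
  have hSint : Integrable
      (fun ω => ∑ π : Equiv.Perm (Fin r), ∑ ρ : Equiv.Perm (Fin r), c π ρ * G π ρ ω) μ := by
    apply integrable_finset_sum
    intro π _
    apply integrable_finset_sum
    intro ρ _
    exact (hGkey π ρ).1.const_mul _
  refine ⟨hSint.congr hdetae.symm, ?_⟩
  rw [integral_congr_ae hdetae,
    integral_finset_sum _ (fun π _ => integrable_finset_sum _
      (fun ρ _ => (hGkey π ρ).1.const_mul _))]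
  have hsum : ∀ π, (∫ ω, ∑ ρ : Equiv.Perm (Fin r), c π ρ * G π ρ ω ∂μ) =
      ∑ ρ : Equiv.Perm (Fin r), c π ρ * (if A π = B ρ then ((σ ^ 2 : ℝ) : ℂ) ^ r else 0) := by
    intro π
    rw [integral_finset_sum _ (fun ρ _ => (hGkey π ρ).1.const_mul _)]
    refine Finset.sum_congr rfl fun ρ _ => ?_
    rw [integral_const_mul, hGval π ρ]
  rw [Finset.sum_congr rfl fun π _ => hsum π]
  -- projections of the index sets
  have hAfst : ∀ π, Finset.image Prod.fst (A π) = K := by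
    intro π
    rw [hAdef, Finset.image_image]
    apply Finset.ext
    intro x
    simp only [Finset.mem_image, Finset.mem_univ, true_and, Function.comp_apply]
    constructor
    · rintro ⟨i, rfl⟩; exact hkmem (π i)
    · intro hx
      obtain ⟨i, hi⟩ := hksurj x hx
      exact ⟨π⁻¹ i, by simp [hi]⟩
  have hAsnd : ∀ π, Finset.image Prod.snd (A π) = Kt := by
    intro π
    rw [hAdef, Finset.image_image]
    apply Finset.ext
    intro x
    simp only [Finset.mem_image, Finset.mem_univ, true_and, Function.comp_apply]
    constructor
    · rintro ⟨i, rfl⟩; exact hktmem i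
    · intro hx
      obtain ⟨i, hi⟩ := hktsurj x hx
      exact ⟨i, hi⟩
  have hBfst : ∀ ρ, Finset.image Prod.fst (B ρ) = L := by
    intro ρ
    rw [hBdef, Finset.image_image]
    apply Finset.ext
    intro x
    simp only [Finset.mem_image, Finset.mem_univ, true_and, Function.comp_apply]
    constructor
    · rintro ⟨i, rfl⟩; exact hlmem i
    · intro hx
      obtain ⟨i, hi⟩ := hlsurj x hx
      exact ⟨i, hi⟩
  have hBsnd : ∀ ρ, Finset.image Prod.snd (B ρ) = Lt := by
    intro ρ
    rw [hBdef, Finset.image_image]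
    apply Finset.ext
    intro x
    simp only [Finset.mem_image, Finset.mem_univ, true_and, Function.comp_apply]
    constructor
    · rintro ⟨i, rfl⟩; exact hltmem (ρ i)
    · intro hx
      obtain ⟨i, hi⟩ := hltsurj x hx
      exact ⟨ρ⁻¹ i, by simp [hi]⟩
  by_cases hcond : K = L ∧ Kt = Lt
  · obtain ⟨h1, h2⟩ := hcond
    subst h1
    subst h2
    rw [if_pos ⟨rfl, rfl⟩]
    have hkl : l = k := rfl
    have hktlt : lt = kt := rfl
    have hABiff : ∀ π ρ : Equiv.Perm (Fin r), (A π = B ρ) ↔ ρ = π⁻¹ := by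
      intro π ρ
      constructor
      · intro hAB
        have hcomp : ∀ i, ρ (π i) = i := by
          intro i
          have hmem : (k (π i), kt i) ∈ B ρ := by
            rw [← hAB, hAdef]
            exact Finset.mem_image_of_mem _ (Finset.mem_univ i)
          rw [hBdef] at hmem
          simp only [Finset.mem_image, Finset.mem_univ, true_and] at hmem
          obtain ⟨j, hj⟩ := hmem
          have hj1 : l j = k (π i) := congrArg Prod.fst hj
          have hj2 : lt (ρ j) = kt i := congrArg Prod.snd hj
          rw [hkl] at hj1
          rw [hktlt] at hj2
          have hji : j = π i := hkinj hj1
          rw [hji] at hj2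
          exact hktinj hj2
        apply Equiv.ext
        intro x
        have hx := hcomp (π⁻¹ x)
        rwa [show π (π⁻¹ x) = x from π.apply_symm_apply x] at hx
      · rintro rfl
        rw [hAdef, hBdef, hkl, hktlt]
        apply Finset.ext
        intro p
        simp only [Finset.mem_image, Finset.mem_univ, true_and]
        constructor
        · rintro ⟨i, rfl⟩
          exact ⟨π i, by simp⟩
        · rintro ⟨j, rfl⟩
          exact ⟨π⁻¹ j, by simp⟩
    have hterm : ∀ π : Equiv.Perm (Fin r),
        (∑ ρ : Equiv.Perm (Fin r), c π ρ * (if A π = B ρ then ((σ ^ 2 : ℝ) : ℂ) ^ r else 0))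
          = ((σ ^ 2 : ℝ) : ℂ) ^ r := by
      intro π
      have hrw : ∀ ρ : Equiv.Perm (Fin r),
          c π ρ * (if A π = B ρ then ((σ ^ 2 : ℝ) : ℂ) ^ r else 0)
            = if ρ = π⁻¹ then c π ρ * ((σ ^ 2 : ℝ) : ℂ) ^ r else 0 := by
        intro ρ
        by_cases h : ρ = π⁻¹
        · rw [if_pos h, if_pos ((hABiff π ρ).2 h)]
        · rw [if_neg h, if_neg (fun hc => h ((hABiff π ρ).1 hc)), mul_zero]
      rw [Finset.sum_congr rfl fun ρ _ => hrw ρ,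
        Finset.sum_ite_eq' Finset.univ π⁻¹ (fun ρ => c π ρ * ((σ ^ 2 : ℝ) : ℂ) ^ r),
        if_pos (Finset.mem_univ _)]
      have hsign : c π π⁻¹ = 1 := by
        rw [hcdef]
        dsimp only
        rw [Equiv.Perm.sign_inv]
        rcases Int.units_eq_one_or (Equiv.Perm.sign π) with h | h <;> rw [h] <;> norm_num
      rw [hsign, one_mul]
    rw [Finset.sum_congr rfl fun π _ => hterm π, Finset.sum_const, Finset.card_univ,
      Fintype.card_perm, Fintype.card_fin, nsmul_eq_mul]
    congr 1
    push_cast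
    rw [pow_mul]
  · rw [if_neg hcond]
    have hABne : ∀ π ρ, A π ≠ B ρ := by
      intro π ρ hAB
      apply hcond
      constructor
      · rw [← hAfst π, ← hBfst ρ, hAB]
      · rw [← hAsnd π, ← hBsnd ρ, hAB]
    apply Finset.sum_eq_zero
    intro π _
    apply Finset.sum_eq_zero
    intro ρ _
    rw [if_neg (hABne π ρ), mul_zero]
end

section
/- Let N ≥ 1 and 1 ≤ r ≤ N, and let X be a random N×N complex matrix whose entries x_{i,j} form a jointly independent family of complex random variables with E[x_{i,j}] = 0 and E[|x_{i,j}|^2] = σ^2 for some σ > 0. Let K, L ⊆ {1,…,N} be subsets of cardinality r. Then the random variable det((X^* X)[K, L]) is integrable, and its expectation equals (N!/(N−r)!) σ^{2r} if K = L, and equals 0 otherwise. -/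
open MeasureTheory ProbabilityTheory Matrix Finset
open scoped ComplexConjugate

section AuxLemmas
variable {Ω : Type*} [MeasurableSpace Ω] {μ : Measure Ω}

private lemma iIndepFun_congr_ae {ι : Type*} {β : Type*} [mβ : MeasurableSpace β]
    {f g : ι → Ω → β} (h : iIndepFun f μ) (hfg : ∀ i, f i =ᵐ[μ] g i) :
    iIndepFun g μ := by
  rw [iIndepFun_iff_measure_inter_preimage_eq_mul] at h ⊢
  intro S sets hsets
  have hae : ∀ᵐ ω ∂μ, ∀ i ∈ S, f i ω = g i ω := by
    rw [Filter.eventually_all_finset]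
    exact fun i _ => hfg i
  have h1 : μ (⋂ i ∈ S, g i ⁻¹' sets i) = μ (⋂ i ∈ S, f i ⁻¹' sets i) := by
    apply measure_congr
    rw [Filter.eventuallyEq_set]
    filter_upwards [hae] with ω hω
    simp only [Set.mem_iInter, Set.mem_preimage]
    exact ⟨fun H i hi => (hω i hi) ▸ H i hi, fun H i hi => (hω i hi).symm ▸ H i hi⟩
  rw [h1, h S hsets]
  refine Finset.prod_congr rfl fun i hi => ?_
  apply measure_congr
  rw [Filter.eventuallyEq_set]
  filter_upwards [hfg i] with ω hω
  simp only [Set.mem_preimage, hω]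

private lemma integral_mul_of_indepFun [IsProbabilityMeasure μ] {X Y : Ω → ℂ}
    (h : IndepFun X Y μ) (hX : Integrable X μ) (hY : Integrable Y μ) :
    Integrable (fun ω => X ω * Y ω) μ ∧
      ∫ ω, X ω * Y ω ∂μ = (∫ ω, X ω ∂μ) * ∫ ω, Y ω ∂μ := by
  have hXm := hX.aemeasurable
  have hYm := hY.aemeasurable
  have hmap : μ.map (fun ω => (X ω, Y ω)) = (μ.map X).prod (μ.map Y) :=
    (indepFun_iff_map_prod_eq_prod_map_map hXm hYm).1 h
  have hXi : Integrable (id : ℂ → ℂ) (μ.map X) := by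
    rw [integrable_map_measure aestronglyMeasurable_id hXm]; exact hX
  have hYi : Integrable (id : ℂ → ℂ) (μ.map Y) := by
    rw [integrable_map_measure aestronglyMeasurable_id hYm]; exact hY
  have hprod : Integrable (fun p : ℂ × ℂ => p.1 * p.2) ((μ.map X).prod (μ.map Y)) :=
    hXi.mul_prod hYi
  have hmeas : AEStronglyMeasurable (fun p : ℂ × ℂ => p.1 * p.2)
      (μ.map (fun ω => (X ω, Y ω))) :=
    (measurable_fst.mul measurable_snd).aestronglyMeasurable
  have hint : Integrable (fun ω => X ω * Y ω) μ :=
    (integrable_map_measure hmeas (hXm.prodMk hYm)).1 (by rw [hmap]; exact hprod)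
  refine ⟨hint, ?_⟩
  have h1 : ∫ ω, X ω * Y ω ∂μ = ∫ p : ℂ × ℂ, p.1 * p.2 ∂(μ.map (fun ω => (X ω, Y ω))) := by
    rw [integral_map (hXm.prodMk hYm) hmeas]
  rw [h1, hmap]
  have h2 := integral_prod_mul (μ := μ.map X) (ν := μ.map Y) (f := (id : ℂ → ℂ))
    (g := (id : ℂ → ℂ))
  simp only [id] at h2
  have h3 : ∫ (x : ℂ), x ∂(μ.map X) = ∫ ω, X ω ∂μ := integral_map hXm aestronglyMeasurable_id
  have h4 : ∫ (x : ℂ), x ∂(μ.map Y) = ∫ ω, Y ω ∂μ := integral_map hYm aestronglyMeasurable_id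
  rw [h2, h3, h4]

private lemma integral_finset_prod_of_iIndepFun [IsProbabilityMeasure μ] {ι : Type*}
    {Y : ι → Ω → ℂ} (h : iIndepFun Y μ)
    (hmeas : ∀ i, Measurable (Y i)) (s : Finset ι) (hint : ∀ i ∈ s, Integrable (Y i) μ) :
    Integrable (fun ω => ∏ i ∈ s, Y i ω) μ ∧
      ∫ ω, ∏ i ∈ s, Y i ω ∂μ = ∏ i ∈ s, ∫ ω, Y i ω ∂μ := by
  classical
  induction s using Finset.cons_induction with
  | empty => simp
  | cons a s ha ih =>
    have hint' : ∀ i ∈ s, Integrable (Y i) μ := fun i hi => hint i (Finset.mem_cons_of_mem hi)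
    obtain ⟨ih1, ih2⟩ := ih hint'
    have hindep : IndepFun (Y a) (fun ω => ∏ i ∈ s, Y i ω) μ := by
      have h' := (h.indepFun_finsetProd_of_notMem hmeas ha).symm
      have heq : (∏ j ∈ s, Y j) = fun ω => ∏ i ∈ s, Y i ω := by
        funext ω; exact Finset.prod_apply ω s Y
      rwa [heq] at h'
    obtain ⟨h1, h2⟩ := integral_mul_of_indepFun hindep (hint a (Finset.mem_cons_self a s)) ih1
    constructor
    · simp only [Finset.prod_cons]; exact h1
    · simp only [Finset.prod_cons]; rw [h2, ih2]

private lemma conj_mul_self' (z : ℂ) : (starRingEnd ℂ) z * z = ((‖z‖^2 : ℝ) : ℂ) := by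
  rw [mul_comm, Complex.mul_conj, Complex.normSq_eq_norm_sq]

private lemma signsum {r N : ℕ} (f : Fin r → Fin N) :
    ∑ τ : Equiv.Perm (Fin r), ((Equiv.Perm.sign τ : ℤ) : ℂ) *
        (if ∀ j, f (τ j) = f j then 1 else 0)
      = if Function.Injective f then 1 else 0 := by
  classical
  have hdet : ∑ τ : Equiv.Perm (Fin r), ((Equiv.Perm.sign τ : ℤ) : ℂ) *
      (if ∀ j, f (τ j) = f j then 1 else 0)
      = (Matrix.of fun i j : Fin r => if f i = f j then (1:ℂ) else 0).det := by
    rw [Matrix.det_apply]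
    refine Finset.sum_congr rfl fun τ _ => ?_
    rw [Units.smul_def, zsmul_eq_mul]
    congr 1
    simp only [Matrix.of_apply]
    rw [Finset.prod_boole]
    simp
  rw [hdet]
  by_cases hinj : Function.Injective f
  · rw [if_pos hinj]
    have h1 : (Matrix.of fun i j : Fin r => if f i = f j then (1:ℂ) else 0) = 1 := by
      ext i j
      by_cases hij : i = j
      · subst hij; simp
      · simp only [Matrix.of_apply, Matrix.one_apply, if_neg hij,
          if_neg (fun h => hij (hinj h))]
    rw [h1, Matrix.det_one]
  · rw [if_neg hinj]
    rw [Function.not_injective_iff] at hinj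
    obtain ⟨i, j, hfij, hij⟩ := hinj
    apply Matrix.det_zero_of_row_eq hij
    funext k
    simp [Matrix.of_apply, hfij]

private lemma countinj (r N : ℕ) :
    ∑ f ∈ Fintype.piFinset (fun _ : Fin r => (Finset.univ : Finset (Fin N))),
        (if Function.Injective f then (1:ℂ) else 0)
      = (N.descFactorial r : ℂ) := by
  classical
  rw [Fintype.piFinset_univ, Finset.sum_boole]
  norm_cast
  have h1 : (Finset.univ.filter fun f : Fin r → Fin N => Function.Injective f).card
      = Fintype.card {f : Fin r → Fin N // Function.Injective f} := (Fintype.card_subtype _).symm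
  rw [h1, Fintype.card_congr (Equiv.subtypeInjectiveEquivEmbedding (Fin r) (Fin N)),
    Fintype.card_embedding_eq, Fintype.card_fin, Fintype.card_fin]

private lemma det_expand {N r : ℕ} (km lm : Fin r → Fin N) (M : Matrix (Fin N) (Fin N) ℂ) :
    ((Mᴴ * M).submatrix km lm).det
      = ∑ τ : Equiv.Perm (Fin r),
          ∑ f ∈ Fintype.piFinset (fun _ : Fin r => (univ : Finset (Fin N))),
          ((Equiv.Perm.sign τ : ℤ) : ℂ) *
            ∏ j, ((starRingEnd ℂ) (M (f j) (km (τ j))) * M (f j) (lm j)) := by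
  rw [Matrix.det_apply]
  refine Finset.sum_congr rfl fun τ _ => ?_
  rw [show (∏ j, ((Mᴴ * M).submatrix km lm) (τ j) j)
      = ∏ j, ∑ m : Fin N, (starRingEnd ℂ) (M m (km (τ j))) * M m (lm j) from
    Finset.prod_congr rfl fun j _ => by
      simp [Matrix.submatrix_apply, Matrix.mul_apply, Matrix.conjTranspose_apply,
        RCLike.star_def]]
  rw [Finset.prod_univ_sum, Finset.smul_sum]
  refine Finset.sum_congr rfl fun f _ => ?_
  rw [Units.smul_def, zsmul_eq_mul]

private lemma minor_term_integral [IsProbabilityMeasure μ] (N r : ℕ) (σ : ℝ)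
    (Z : Fin N × Fin N → Ω → ℂ)
    (hZsm : ∀ p, StronglyMeasurable (Z p))
    (hindepZ : iIndepFun Z μ)
    (hZint : ∀ p, Integrable (Z p) μ)
    (hZconj : ∀ p, Integrable (fun ω => (starRingEnd ℂ) (Z p ω)) μ)
    (hZsq : ∀ p, Integrable (fun ω => ‖Z p ω‖^2) μ)
    (hZmean : ∀ p, ∫ ω, Z p ω ∂μ = 0)
    (hZvar : ∀ p, ∫ ω, ‖Z p ω‖^2 ∂μ = σ^2)
    (km lm : Fin r → Fin N) (hkm_inj : Function.Injective km)
    (hlm_inj : Function.Injective lm)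
    (τ : Equiv.Perm (Fin r)) (f : Fin r → Fin N) :
    Integrable (fun ω => ∏ j, ((starRingEnd ℂ) (Z (f j, km (τ j)) ω) * Z (f j, lm j) ω)) μ ∧
    ∫ ω, ∏ j, ((starRingEnd ℂ) (Z (f j, km (τ j)) ω) * Z (f j, lm j) ω) ∂μ
      = if Finset.image (fun j => (f j, km (τ j))) univ
          = Finset.image (fun j => (f j, lm j)) univ
        then ((σ:ℂ))^(2*r) else 0 := by
  classical
  set pa : Fin r → Fin N × Fin N := fun j => (f j, km (τ j)) with hpa
  set pb : Fin r → Fin N × Fin N := fun j => (f j, lm j) with hpb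
  have hpa_inj : Function.Injective pa := fun a b h => τ.injective (hkm_inj (congrArg Prod.snd h))
  have hpb_inj : Function.Injective pb := fun a b h => hlm_inj (congrArg Prod.snd h)
  set A : Finset (Fin N × Fin N) := Finset.image pa univ with hA
  set B : Finset (Fin N × Fin N) := Finset.image pb univ with hB
  have hφ : ∀ p : Fin N × Fin N,
      Measurable (fun z : ℂ =>
        (if p ∈ A then (starRingEnd ℂ) z else 1) * (if p ∈ B then z else 1)) := by
    intro p
    apply Measurable.mul
    · split_ifs
      · exact RCLike.continuous_conj.measurable
      · exact measurable_const
    · split_ifs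
      · exact measurable_id
      · exact measurable_const
  have hYindep : iIndepFun
      (fun p ω => (if p ∈ A then (starRingEnd ℂ) (Z p ω) else 1) *
        (if p ∈ B then Z p ω else 1)) μ :=
    hindepZ.comp _ hφ
  have hYmeas : ∀ p, Measurable
      (fun ω => (if p ∈ A then (starRingEnd ℂ) (Z p ω) else 1) *
        (if p ∈ B then Z p ω else 1)) :=
    fun p => (hφ p).comp (hZsm p).measurable
  have hYint : ∀ p ∈ A ∪ B, Integrable
      (fun ω => (if p ∈ A then (starRingEnd ℂ) (Z p ω) else 1) *
        (if p ∈ B then Z p ω else 1)) μ := by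
    intro p hp
    by_cases hpA : p ∈ A <;> by_cases hpB : p ∈ B
    · simp only [if_pos hpA, if_pos hpB]
      exact ((hZsq p).ofReal (𝕜 := ℂ)).congr (ae_of_all _ fun ω => (conj_mul_self' _).symm)
    · simp only [if_pos hpA, if_neg hpB, mul_one]
      exact hZconj p
    · simp only [if_neg hpA, if_pos hpB, one_mul]
      exact hZint p
    · exact absurd hp (by simp [Finset.mem_union, hpA, hpB])
  have hprod_eq : ∀ ω, ∏ j, ((starRingEnd ℂ) (Z (pa j) ω) * Z (pb j) ω)
      = ∏ p ∈ A ∪ B, ((if p ∈ A then (starRingEnd ℂ) (Z p ω) else 1) *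
          (if p ∈ B then Z p ω else 1)) := by
    intro ω
    rw [Finset.prod_mul_distrib, Finset.prod_mul_distrib,
      Finset.prod_ite_mem (A ∪ B) A, Finset.prod_ite_mem (A ∪ B) B,
      Finset.union_inter_cancel_left, Finset.union_inter_cancel_right, hA, hB,
      Finset.prod_image (fun a _ b _ h => hpa_inj h),
      Finset.prod_image (fun a _ b _ h => hpb_inj h)]
  obtain ⟨hPint, hPval⟩ := integral_finset_prod_of_iIndepFun hYindep hYmeas (A ∪ B) hYint
  constructor
  · exact hPint.congr (ae_of_all _ fun ω => (hprod_eq ω).symm)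
  · rw [integral_congr_ae (ae_of_all _ hprod_eq), hPval]
    have hfactor : ∀ p ∈ A ∪ B,
        ∫ ω, ((if p ∈ A then (starRingEnd ℂ) (Z p ω) else 1) *
          (if p ∈ B then Z p ω else 1)) ∂μ
          = if p ∈ A ∧ p ∈ B then ((σ:ℂ))^2 else 0 := by
      intro p hp
      by_cases hpA : p ∈ A <;> by_cases hpB : p ∈ B
      · simp only [if_pos hpA, if_pos hpB]
        rw [integral_congr_ae (ae_of_all _ fun ω => conj_mul_self' (Z p ω)),
          show ∫ ω, ((‖Z p ω‖^2 : ℝ) : ℂ) ∂μ = ((∫ ω, ‖Z p ω‖^2 ∂μ : ℝ) : ℂ) from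
            integral_ofReal,
          hZvar p, if_pos ⟨hpA, hpB⟩]
        push_cast
        ring
      · simp only [if_pos hpA, if_neg hpB, mul_one]
        rw [integral_conj, hZmean p, if_neg (by tauto)]
        simp
      · simp only [if_neg hpA, if_pos hpB, one_mul]
        rw [hZmean p, if_neg (by tauto)]
      · exact absurd hp (by simp [Finset.mem_union, hpA, hpB])
    rw [Finset.prod_congr rfl hfactor]
    by_cases hAB : A = B
    · rw [if_pos hAB, hAB, Finset.union_self,
        Finset.prod_congr rfl (fun p hp => if_pos ⟨hAB ▸ hp, hp⟩), Finset.prod_const]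
      have hcard : B.card = r := by
        rw [hB, Finset.card_image_of_injective _ hpb_inj, Finset.card_univ, Fintype.card_fin]
      rw [hcard, ← pow_mul]
    · rw [if_neg hAB]
      have hex : ∃ p ∈ A ∪ B, ¬(p ∈ A ∧ p ∈ B) := by
        by_contra hcon
        push_neg at hcon
        apply hAB
        apply Finset.Subset.antisymm
        · exact fun p hp => (hcon p (Finset.mem_union_left _ hp)).2
        · exact fun p hp => (hcon p (Finset.mem_union_right _ hp)).1
      obtain ⟨p, hp, hnp⟩ := hex
      exact Finset.prod_eq_zero hp (if_neg hnp)

end AuxLemmas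

/-- **Lemma 4, Eq. (15):** for a Wigner matrix `X` with independent entries of mean zero and
variance `σ²`, and subsets `K, L ⊆ {1,…,N}` of cardinality `r`,
`E[det (X*X)[K,L]] = (N!/(N−r)!) σ^{2r}` if `K = L`, and `= 0` otherwise. -/
theorem expected_minor_of_hermitised_matrix
    {Ω : Type*} [MeasurableSpace Ω] (μ : Measure Ω) [IsProbabilityMeasure μ]
    (N r : ℕ) (hN : 1 ≤ N) (hr1 : 1 ≤ r) (hrN : r ≤ N)
    (σ : ℝ) (hσ : 0 < σ)
    (X : Ω → Matrix (Fin N) (Fin N) ℂ)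
    (hindep : iIndepFun
      (fun (p : Fin N × Fin N) ω => X ω p.1 p.2) μ)
    (hL2 : ∀ i j, MemLp (fun ω => X ω i j) 2 μ)
    (hmean : ∀ i j, ∫ ω, X ω i j ∂μ = 0)
    (hvar : ∀ i j, ∫ ω, ‖X ω i j‖ ^ 2 ∂μ = σ ^ 2)
    (K L : Finset (Fin N)) (hK : K.card = r) (hL : L.card = r) :
    Integrable (fun ω =>
      (((X ω)ᴴ * X ω).submatrix (fun i : Fin r => (K.orderIsoOfFin hK i : Fin N))
          (fun j : Fin r => (L.orderIsoOfFin hL j : Fin N))).det) μ ∧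
    ∫ ω, (((X ω)ᴴ * X ω).submatrix (fun i : Fin r => (K.orderIsoOfFin hK i : Fin N))
          (fun j : Fin r => (L.orderIsoOfFin hL j : Fin N))).det ∂μ
      = if K = L then ((N.factorial : ℂ) / ((N - r).factorial : ℂ)) * ((σ : ℂ)) ^ (2 * r)
        else 0 := by
  classical
  set km : Fin r → Fin N := fun i => (K.orderIsoOfFin hK i : Fin N) with hkm_def
  set lm : Fin r → Fin N := fun j => (L.orderIsoOfFin hL j : Fin N) with hlm_def
  have hkm_inj : Function.Injective km := fun a b h =>
    (K.orderIsoOfFin hK).injective (Subtype.ext h)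
  have hlm_inj : Function.Injective lm := fun a b h =>
    (L.orderIsoOfFin hL).injective (Subtype.ext h)
  have himK : Finset.image km univ = K := by
    ext x
    simp only [Finset.mem_image, Finset.mem_univ, true_and]
    constructor
    · rintro ⟨i, rfl⟩; exact (K.orderIsoOfFin hK i).2
    · intro hx
      exact ⟨(K.orderIsoOfFin hK).symm ⟨x, hx⟩,
        congrArg Subtype.val ((K.orderIsoOfFin hK).apply_symm_apply ⟨x, hx⟩)⟩
  have himL : Finset.image lm univ = L := by
    ext x
    simp only [Finset.mem_image, Finset.mem_univ, true_and]
    constructor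
    · rintro ⟨i, rfl⟩; exact (L.orderIsoOfFin hL i).2
    · intro hx
      exact ⟨(L.orderIsoOfFin hL).symm ⟨x, hx⟩,
        congrArg Subtype.val ((L.orderIsoOfFin hL).apply_symm_apply ⟨x, hx⟩)⟩
  -- measurable representatives of the entries
  set Z : Fin N × Fin N → Ω → ℂ :=
    fun p => ((hL2 p.1 p.2).aestronglyMeasurable).mk (fun ω => X ω p.1 p.2) with hZdef
  have hZsm : ∀ p, StronglyMeasurable (Z p) :=
    fun p => (hL2 p.1 p.2).aestronglyMeasurable.stronglyMeasurable_mk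
  have hZeq : ∀ p : Fin N × Fin N, (fun ω => X ω p.1 p.2) =ᵐ[μ] Z p :=
    fun p => (hL2 p.1 p.2).aestronglyMeasurable.ae_eq_mk
  have hindepZ : iIndepFun Z μ := iIndepFun_congr_ae hindep hZeq
  have hZL2 : ∀ p, MemLp (Z p) 2 μ := fun p => (hL2 p.1 p.2).ae_eq (hZeq p)
  have hZint : ∀ p, Integrable (Z p) μ := fun p => (hZL2 p).integrable one_le_two
  have hZmean : ∀ p, ∫ ω, Z p ω ∂μ = 0 := fun p => by
    rw [← integral_congr_ae (hZeq p)]; exact hmean p.1 p.2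
  have hZvar : ∀ p, ∫ ω, ‖Z p ω‖^2 ∂μ = σ^2 := fun p => by
    rw [← hvar p.1 p.2]
    apply integral_congr_ae
    filter_upwards [hZeq p] with ω hω
    rw [hω]
  have hZsq : ∀ p, Integrable (fun ω => ‖Z p ω‖^2) μ := fun p =>
    (memLp_two_iff_integrable_sq_norm (hZsm p).aestronglyMeasurable).1 (hZL2 p)
  have hZconj : ∀ p, Integrable (fun ω => (starRingEnd ℂ) (Z p ω)) μ := fun p =>
    (hZint p).norm.mono'
      (RCLike.continuous_conj.comp_aestronglyMeasurable (hZint p).1)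
      (ae_of_all _ fun ω => le_of_eq (RCLike.norm_conj _))
  have haeZ : ∀ᵐ ω ∂μ, ∀ p : Fin N × Fin N, X ω p.1 p.2 = Z p ω :=
    (MeasureTheory.ae_all_iff).2 (fun p => hZeq p)
  have hterm := fun (τ : Equiv.Perm (Fin r)) (f : Fin r → Fin N) =>
    minor_term_integral (μ := μ) N r σ Z hZsm hindepZ hZint hZconj hZsq hZmean hZvar
      km lm hkm_inj hlm_inj τ f
  have hdet_ae : (fun ω => (((X ω)ᴴ * X ω).submatrix km lm).det)
      =ᵐ[μ] (fun ω => ∑ τ : Equiv.Perm (Fin r),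
        ∑ f ∈ Fintype.piFinset (fun _ : Fin r => (univ : Finset (Fin N))),
          ((Equiv.Perm.sign τ : ℤ) : ℂ) *
            ∏ j, ((starRingEnd ℂ) (Z (f j, km (τ j)) ω) * Z (f j, lm j) ω)) := by
    filter_upwards [haeZ] with ω hω
    rw [det_expand km lm (X ω)]
    refine Finset.sum_congr rfl fun τ _ => Finset.sum_congr rfl fun f _ => ?_
    congr 1
    refine Finset.prod_congr rfl fun j _ => ?_
    rw [hω (f j, km (τ j)), hω (f j, lm j)]
  have hFint : Integrable (fun ω => ∑ τ : Equiv.Perm (Fin r),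
      ∑ f ∈ Fintype.piFinset (fun _ : Fin r => (univ : Finset (Fin N))),
        ((Equiv.Perm.sign τ : ℤ) : ℂ) *
          ∏ j, ((starRingEnd ℂ) (Z (f j, km (τ j)) ω) * Z (f j, lm j) ω)) μ :=
    integrable_finset_sum _ fun τ _ =>
      integrable_finset_sum _ fun f _ => ((hterm τ f).1.const_mul _)
  constructor
  · exact hFint.congr hdet_ae.symm
  · rw [integral_congr_ae hdet_ae,
      integral_finset_sum _ (fun τ _ =>
        integrable_finset_sum _ (fun f _ => ((hterm τ f).1.const_mul _)))]
    have hval : ∀ (τ : Equiv.Perm (Fin r)),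
        ∫ ω, ∑ f ∈ Fintype.piFinset (fun _ : Fin r => (univ : Finset (Fin N))),
          ((Equiv.Perm.sign τ : ℤ) : ℂ) *
            ∏ j, ((starRingEnd ℂ) (Z (f j, km (τ j)) ω) * Z (f j, lm j) ω) ∂μ
        = ∑ f ∈ Fintype.piFinset (fun _ : Fin r => (univ : Finset (Fin N))),
            ((Equiv.Perm.sign τ : ℤ) : ℂ) *
            (if Finset.image (fun j => (f j, km (τ j))) univ
                = Finset.image (fun j => (f j, lm j)) univ
              then ((σ:ℂ))^(2*r) else 0) := by
      intro τ
      rw [integral_finset_sum _ (fun f _ => ((hterm τ f).1.const_mul _))]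
      refine Finset.sum_congr rfl fun f _ => ?_
      rw [integral_const_mul, (hterm τ f).2]
    rw [Finset.sum_congr rfl (fun τ _ => hval τ)]
    by_cases hKL : K = L
    · subst hKL
      have hlmkm : lm = km := rfl
      rw [if_pos rfl]
      have hiff : ∀ (τ : Equiv.Perm (Fin r)) (f : Fin r → Fin N),
          (Finset.image (fun j => (f j, km (τ j))) univ
            = Finset.image (fun j => (f j, km j)) univ)
            ↔ ∀ j, f (τ j) = f j := by
        intro τ f
        constructor
        · intro h j
          have hmem : (f j, km (τ j)) ∈ Finset.image (fun j => (f j, km j)) univ := by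
            rw [← h]; exact Finset.mem_image_of_mem _ (Finset.mem_univ j)
          obtain ⟨j', _, hj'⟩ := Finset.mem_image.1 hmem
          have h3 : j' = τ j := hkm_inj (congrArg Prod.snd hj')
          have h4 : f j' = f j := congrArg Prod.fst hj'
          rw [← h3]; exact h4
        · intro h
          apply Finset.eq_of_subset_of_card_le
          · intro p hp
            obtain ⟨j, _, rfl⟩ := Finset.mem_image.1 hp
            refine Finset.mem_image.2 ⟨τ j, Finset.mem_univ _, ?_⟩
            rw [h j]
          · rw [Finset.card_image_of_injective _
                (fun a b (hab : (f a, km a) = (f b, km b)) =>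
                  hkm_inj (congrArg Prod.snd hab)),
              Finset.card_image_of_injective _
                (fun a b (hab : (f a, km (τ a)) = (f b, km (τ b))) =>
                  τ.injective (hkm_inj (congrArg Prod.snd hab)))]
      calc ∑ τ : Equiv.Perm (Fin r),
            ∑ f ∈ Fintype.piFinset (fun _ : Fin r => (univ : Finset (Fin N))),
            ((Equiv.Perm.sign τ : ℤ) : ℂ) *
            (if Finset.image (fun j => (f j, km (τ j))) univ
                = Finset.image (fun j => (f j, lm j)) univ
              then ((σ:ℂ))^(2*r) else 0)
          = ∑ f ∈ Fintype.piFinset (fun _ : Fin r => (univ : Finset (Fin N))),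
              (∑ τ : Equiv.Perm (Fin r), ((Equiv.Perm.sign τ : ℤ) : ℂ) *
                (if ∀ j, f (τ j) = f j then 1 else 0)) * ((σ:ℂ))^(2*r) := by
            rw [Finset.sum_comm]
            refine Finset.sum_congr rfl fun f _ => ?_
            rw [Finset.sum_mul]
            refine Finset.sum_congr rfl fun τ _ => ?_
            rw [hlmkm, mul_assoc]
            congr 1
            rw [if_congr (hiff τ f) rfl rfl]
            split_ifs <;> ring
        _ = ∑ f ∈ Fintype.piFinset (fun _ : Fin r => (univ : Finset (Fin N))),
              (if Function.Injective f then (1:ℂ) else 0) * ((σ:ℂ))^(2*r) := by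
            refine Finset.sum_congr rfl fun f _ => ?_
            rw [signsum f]
        _ = (N.descFactorial r : ℂ) * ((σ:ℂ))^(2*r) := by
            rw [← Finset.sum_mul, countinj]
        _ = ((N.factorial : ℂ) / ((N - r).factorial : ℂ)) * ((σ:ℂ))^(2*r) := by
            congr 1
            rw [eq_div_iff (by exact_mod_cast (Nat.factorial_ne_zero (N-r)))]
            norm_cast
            rw [mul_comm]
            exact Nat.factorial_mul_descFactorial hrN
    · rw [if_neg hKL]
      apply Finset.sum_eq_zero
      intro τ _
      apply Finset.sum_eq_zero
      intro f _
      have hne : Finset.image (fun j => (f j, km (τ j))) univ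
          ≠ Finset.image (fun j => (f j, lm j)) univ := by
        intro hcon
        apply hKL
        have h1 : Finset.image Prod.snd (Finset.image (fun j => (f j, km (τ j))) univ) = K := by
          rw [Finset.image_image,
            show (Prod.snd ∘ fun j : Fin r => (f j, km (τ j))) = km ∘ τ from rfl,
            show Finset.image (km ∘ ⇑τ) univ = Finset.image km (Finset.image (⇑τ) univ) from
              (Finset.image_image).symm,
            Finset.image_univ_equiv, himK]
        have h2 : Finset.image Prod.snd (Finset.image (fun j => (f j, lm j)) univ) = L := by
          rw [Finset.image_image,
            show (Prod.snd ∘ fun j : Fin r => (f j, lm j)) = lm from rfl, himL]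
        rw [← h1, ← h2, hcon]
      rw [if_neg hne, mul_zero]
end

section
/- Fix N ≥ 1. For each M ≥ 1 let σ_1, …, σ_M > 0, set τ_M = σ_1⋯σ_M, and assume lim_{M→∞} τ_M^{1/M} = σ for some σ > 0. For each M, suppose the polynomial x ↦ Σ_{ν=0}^{N} (−1)^{N−ν} binom(N,ν)^{M+1} ((N−ν)!)^M τ_M^{2(N−ν)} x^ν (that is, τ_M^{2N} p_N^{(M)}(x/τ_M^2)) has N roots, all real and positive, listed in nondecreasing order as z_1^{(M)} ≤ z_2^{(M)} ≤ … ≤ z_N^{(M)} (with multiplicity). Then for every j ∈ {1,…,N}, lim_{M→∞} (1/(2M)) log z_j^{(M)} = (1/2)(log j + log σ^2). -/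
open Filter Finset

/-- Vieta-type coefficient extraction. -/
lemma coeff_of_prod {N : ℕ} (a : ℕ → ℂ) (w : Fin N → ℂ)
    (h : ∀ x : ℂ, ∑ ν ∈ Finset.range (N+1), a ν * x ^ ν = ∏ j : Fin N, (x - w j))
    {m : ℕ} (hm : m ≤ N) :
    ∑ S ∈ Finset.powersetCard m Finset.univ, ∏ i ∈ S, w i = (-1 : ℂ) ^ m * a (N - m) := by
  set p : Polynomial ℂ := ∑ ν ∈ Finset.range (N+1), Polynomial.C (a ν) * Polynomial.X ^ ν with hp
  set q : Polynomial ℂ := ∏ j : Fin N, (Polynomial.X - Polynomial.C (w j)) with hq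
  have hpq : p = q := by
    apply Polynomial.funext
    intro x
    rw [hp, hq]
    simp only [Polynomial.eval_finset_sum, Polynomial.eval_mul, Polynomial.eval_C,
      Polynomial.eval_pow, Polynomial.eval_X, Polynomial.eval_prod, Polynomial.eval_sub]
    exact h x
  have h1 : p.coeff (N - m) = a (N - m) := by
    rw [hp, Polynomial.finset_sum_coeff]
    simp only [Polynomial.coeff_C_mul, Polynomial.coeff_X_pow, mul_ite, mul_one, mul_zero]
    rw [Finset.sum_ite_eq (Finset.range (N+1)) (N - m) a]
    simp [Nat.lt_succ_iff, Nat.sub_le]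
  have h2 : q.coeff (N - m) = (-1 : ℂ) ^ m *
      ∑ S ∈ Finset.powersetCard m Finset.univ, ∏ i ∈ S, w i := by
    have hq2 : q = ((Finset.univ.val.map w).map fun t => Polynomial.X - Polynomial.C t).prod := by
      rw [hq, Finset.prod, Multiset.map_map]
      rfl
    have hcard : Multiset.card (Finset.univ.val.map w) = N := by
      simp
    have hk : N - m ≤ Multiset.card (Finset.univ.val.map w) := by
      rw [hcard]; omega
    rw [hq2, Multiset.prod_X_sub_C_coeff _ hk, hcard, Nat.sub_sub_self hm,
      Finset.esymm_map_val]
  rw [hpq, h2] at h1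
  rw [← h1, ← mul_assoc, ← pow_add]
  have : Even (m + m) := ⟨m, by ring⟩
  rw [this.neg_one_pow, one_mul]

lemma strictMono_shift {m N : ℕ} (f : Fin m → Fin N) (hf : StrictMono f) :
    ∀ (d : ℕ) (i : Fin m) (h : (i : ℕ) + d < m), (f i : ℕ) + d ≤ (f ⟨(i : ℕ) + d, h⟩ : ℕ) := by
  intro d
  induction d with
  | zero =>
    intro i h
    simp
  | succ d ih =>
    intro i h
    have h' : (i : ℕ) + d < m := by omega
    have h1 := ih i h'
    have h2 : f ⟨(i : ℕ) + d, h'⟩ < f ⟨(i : ℕ) + (d+1), h⟩ := by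
      apply hf
      rw [Fin.lt_def]
      simp
    rw [Fin.lt_def] at h2
    omega

lemma strictMono_upper {m N : ℕ} (f : Fin m → Fin N) (hf : StrictMono f) (k : Fin m) :
    (f k : ℕ) ≤ N - m + (k : ℕ) := by
  have hk := k.isLt
  have h : (k : ℕ) + (m - 1 - (k : ℕ)) < m := by omega
  have h1 := strictMono_shift f hf (m - 1 - (k : ℕ)) k h
  have h2 : (f ⟨(k : ℕ) + (m - 1 - (k : ℕ)), h⟩ : ℕ) < N := Fin.is_lt _
  omega

/-- product over any finset of given card is at most product over a "top" finset of same card -/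
lemma prod_le_prod_top {N a : ℕ} (u : Fin N → ℝ) (h0 : ∀ i, 0 ≤ u i) (hmono : Monotone u)
    (S T : Finset (Fin N)) (hS : S.card = N - a) (hT : T.card = N - a) (ha : a ≤ N)
    (hTa : ∀ i ∈ T, a ≤ (i : ℕ)) :
    ∏ i ∈ S, u i ≤ ∏ i ∈ T, u i := by
  have hmapS : S = Finset.map (S.orderEmbOfFin hS).toEmbedding Finset.univ := by
    ext i
    simp only [Finset.mem_map, Finset.mem_univ, true_and, RelEmbedding.coe_toEmbedding]
    constructor
    · intro hi
      have : i ∈ Set.range (S.orderEmbOfFin hS) := by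
        rw [Finset.range_orderEmbOfFin]
        exact hi
      obtain ⟨k, hk⟩ := this
      exact ⟨k, hk⟩
    · rintro ⟨k, rfl⟩
      exact Finset.orderEmbOfFin_mem S hS k
  have hmapT : T = Finset.map (T.orderEmbOfFin hT).toEmbedding Finset.univ := by
    ext i
    simp only [Finset.mem_map, Finset.mem_univ, true_and, RelEmbedding.coe_toEmbedding]
    constructor
    · intro hi
      have : i ∈ Set.range (T.orderEmbOfFin hT) := by
        rw [Finset.range_orderEmbOfFin]
        exact hi
      obtain ⟨k, hk⟩ := this
      exact ⟨k, hk⟩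
    · rintro ⟨k, rfl⟩
      exact Finset.orderEmbOfFin_mem T hT k
  rw [hmapS, hmapT, Finset.prod_map, Finset.prod_map]
  apply Finset.prod_le_prod
  · intro k _
    exact h0 _
  · intro k _
    apply hmono
    show (S.orderEmbOfFin hS) k ≤ (T.orderEmbOfFin hT) k
    have hNa : N - (N - a) = a := by omega
    have hup : ((S.orderEmbOfFin hS k) : ℕ) ≤ N - (N - a) + (k : ℕ) :=
      strictMono_upper _ (S.orderEmbOfFin hS).strictMono k
    have hdown : a + (k : ℕ) ≤ ((T.orderEmbOfFin hT k) : ℕ) := by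
      have hkl := k.isLt
      have hm : 0 < N - a := by omega
      have h0T : a ≤ ((T.orderEmbOfFin hT ⟨0, hm⟩) : ℕ) :=
        hTa _ (Finset.orderEmbOfFin_mem T hT _)
      have h3 := strictMono_shift _ (T.orderEmbOfFin hT).strictMono (k : ℕ) ⟨0, hm⟩
        (by simp [hkl])
      have heq : (⟨((⟨0, hm⟩ : Fin (N - a)) : ℕ) + (k : ℕ), by simp [hkl]⟩ : Fin (N - a)) = k := by
        apply Fin.ext
        simp only [Fin.val_mk]
        omega
      rw [heq] at h3
      omega
    rw [Fin.le_def]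
    omega

/-- **Theorem 3 (Lyapunov-type limit of the zeros):** if the averaged characteristic polynomial
`Σ_{ν=0}^N (−1)^{N−ν} C(N,ν)^{M+1} ((N−ν)!)^M τ_M^{2(N−ν)} x^ν` of the hermitised product of
`M` Wigner matrices with variances `σ_k² > 0` (where `τ_M = σ_1⋯σ_M` and
`τ_M^{1/M} → σ > 0`) factors as `∏_{j=1}^N (x − z_j^{(M)})` with real positive zeros listed in
nondecreasing order, then `(1/(2M)) log z_j^{(M)} → (1/2)(log j + log σ²)` for each `j`. -/
theorem lyapunov_limit_of_zeros
    (N : ℕ) (hN : 1 ≤ N)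
    (σs : (M : ℕ) → Fin M → ℝ) (hσs : ∀ M k, 0 < σs M k)
    (σ : ℝ) (hσ : 0 < σ)
    (hlim : Tendsto (fun M : ℕ => (∏ k, σs M k) ^ ((1 : ℝ) / M)) atTop (nhds σ))
    (z : (M : ℕ) → Fin N → ℝ)
    (hzpos : ∀ M, 1 ≤ M → ∀ j, 0 < z M j)
    (hzmono : ∀ M, 1 ≤ M → Monotone (z M))
    (hfact : ∀ M, 1 ≤ M → ∀ x : ℂ,
      ∑ ν ∈ Finset.range (N + 1),
          (-1 : ℂ) ^ (N - ν) * (N.choose ν : ℂ) ^ (M + 1) * ((N - ν).factorial : ℂ) ^ M *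
            (((∏ k, σs M k : ℝ) : ℂ)) ^ (2 * (N - ν)) * x ^ ν
        = ∏ j : Fin N, (x - (z M j : ℂ))) :
    ∀ j : Fin N,
      Tendsto (fun M : ℕ => (1 / (2 * (M : ℝ))) * Real.log (z M j)) atTop
        (nhds ((1 / 2) * (Real.log ((j : ℝ) + 1) + Real.log (σ ^ 2)))) := by
  intro j
  set τ : ℕ → ℝ := fun M => ∏ k, σs M k with hτdef
  have hτpos : ∀ M, 0 < τ M := fun M => Finset.prod_pos fun k _ => hσs M k
  have jlt := j.isLt
  set jv := (j : ℕ) with hjv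
  set m := N - jv with hmdef
  have hm1 : 1 ≤ m := by omega
  have hmN : m ≤ N := by omega
  -- the elementary symmetric function values
  have hE : ∀ M, 1 ≤ M → ∀ m' ≤ N,
      ∑ S ∈ Finset.powersetCard m' Finset.univ, ∏ i ∈ S, z M i
        = (N.choose m' : ℝ) ^ (M+1) * (m'.factorial : ℝ) ^ M * (τ M) ^ (2*m') := by
    intro M hM m' hm'
    have hc := coeff_of_prod
      (fun ν => (-1 : ℂ) ^ (N - ν) * (N.choose ν : ℂ) ^ (M + 1) * ((N - ν).factorial : ℂ) ^ M *
            ((τ M : ℝ) : ℂ) ^ (2 * (N - ν)))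
      (fun i => (z M i : ℂ)) (hfact M hM) hm'
    simp only [Nat.sub_sub_self hm', Nat.choose_symm hm'] at hc
    have hs : (-1 : ℂ)^m' * (-1 : ℂ)^m' = 1 := by
      rw [← pow_add]
      exact Even.neg_one_pow ⟨m', by ring⟩
    rw [← mul_assoc, ← mul_assoc, ← mul_assoc, hs, one_mul] at hc
    have key : ((∑ S ∈ Finset.powersetCard m' Finset.univ, ∏ i ∈ S, z M i : ℝ) : ℂ)
        = (((N.choose m' : ℝ) ^ (M+1) * (m'.factorial : ℝ) ^ M * (τ M) ^ (2*m') : ℝ) : ℂ) := by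
      push_cast
      rw [hc]
    exact_mod_cast key
  -- notation
  set E : ℕ → ℕ → ℝ := fun M m' => (N.choose m' : ℝ) ^ (M+1) * (m'.factorial : ℝ) ^ M * (τ M) ^ (2*m') with hEdef
  have hEpos : ∀ M m', m' ≤ N → 0 < E M m' := by
    intro M m' hm'
    have hcp : 0 < N.choose m' := Nat.choose_pos hm'
    have := hτpos M
    positivity
  have hE' : ∀ M, 1 ≤ M → ∀ m' ≤ N,
      ∑ S ∈ Finset.powersetCard m' Finset.univ, ∏ i ∈ S, z M i = E M m' := hE
  set P : ℕ → ℝ := fun M => ∏ i ∈ Finset.Ici j, z M i with hPdef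
  set Q : ℕ → ℝ := fun M => ∏ i ∈ Finset.Ioi j, z M i with hQdef
  have hIci_card : (Finset.Ici j).card = N - jv := Fin.card_Ici j
  have hIoi_card : (Finset.Ioi j).card = N - (jv + 1) := by
    rw [Fin.card_Ioi]; omega
  have hPQ : ∀ M, P M = z M j * Q M := by
    intro M
    rw [hPdef, hQdef]
    simp only
    rw [← Finset.Ioi_insert j, Finset.prod_insert (by simp)]
  have hPpos : ∀ M, 1 ≤ M → 0 < P M := fun M hM =>
    Finset.prod_pos fun i _ => hzpos M hM i
  have hQpos : ∀ M, 1 ≤ M → 0 < Q M := fun M hM =>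
    Finset.prod_pos fun i _ => hzpos M hM i
  -- bounds
  have hP_le : ∀ M, 1 ≤ M → P M ≤ E M m := by
    intro M hM
    rw [← hE' M hM m hmN]
    apply Finset.single_le_sum (f := fun S => ∏ i ∈ S, z M i)
    · intro S _
      exact Finset.prod_nonneg fun i _ => (hzpos M hM i).le
    · rw [Finset.mem_powersetCard]
      exact ⟨Finset.subset_univ _, by rw [hIci_card]⟩
  have hQ_le : ∀ M, 1 ≤ M → Q M ≤ E M (m-1) := by
    intro M hM
    rw [← hE' M hM (m-1) (by omega)]
    apply Finset.single_le_sum (f := fun S => ∏ i ∈ S, z M i)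
    · intro S _
      exact Finset.prod_nonneg fun i _ => (hzpos M hM i).le
    · rw [Finset.mem_powersetCard]
      refine ⟨Finset.subset_univ _, by rw [hIoi_card]; omega⟩
  have hE_leP : ∀ M, 1 ≤ M → E M m ≤ (N.choose m : ℝ) * P M := by
    intro M hM
    rw [← hE' M hM m hmN]
    have hcard : (Finset.powersetCard m (Finset.univ : Finset (Fin N))).card = N.choose m := by
      rw [Finset.card_powersetCard, Finset.card_univ, Fintype.card_fin]
    calc ∑ S ∈ Finset.powersetCard m Finset.univ, ∏ i ∈ S, z M i
        ≤ (Finset.powersetCard m (Finset.univ : Finset (Fin N))).card • P M := by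
          apply Finset.sum_le_card_nsmul
          intro S hS
          rw [Finset.mem_powersetCard] at hS
          exact prod_le_prod_top (a := jv) (z M) (fun i => (hzpos M hM i).le) (hzmono M hM)
            S (Finset.Ici j) (by rw [hS.2]) hIci_card (by omega)
            (fun i hi => by rw [Finset.mem_Ici] at hi; exact hi)
      _ = (N.choose m : ℝ) * P M := by rw [hcard, nsmul_eq_mul]
  have hE_leQ : ∀ M, 1 ≤ M → E M (m-1) ≤ (N.choose (m-1) : ℝ) * Q M := by
    intro M hM
    rw [← hE' M hM (m-1) (by omega)]
    have hcard : (Finset.powersetCard (m-1) (Finset.univ : Finset (Fin N))).card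
        = N.choose (m-1) := by
      rw [Finset.card_powersetCard, Finset.card_univ, Fintype.card_fin]
    calc ∑ S ∈ Finset.powersetCard (m-1) Finset.univ, ∏ i ∈ S, z M i
        ≤ (Finset.powersetCard (m-1) (Finset.univ : Finset (Fin N))).card • Q M := by
          apply Finset.sum_le_card_nsmul
          intro S hS
          rw [Finset.mem_powersetCard] at hS
          exact prod_le_prod_top (a := jv + 1) (z M) (fun i => (hzpos M hM i).le) (hzmono M hM)
            S (Finset.Ioi j) (by rw [hS.2]; omega) hIoi_card (by omega)
            (fun i hi => by rw [Finset.mem_Ioi, Fin.lt_def] at hi; omega)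
      _ = (N.choose (m-1) : ℝ) * Q M := by rw [hcard, nsmul_eq_mul]
  -- two-sided bounds on z M j
  have hc1 : (0:ℝ) < (N.choose m : ℝ) := by exact_mod_cast Nat.choose_pos hmN
  have hc0 : (0:ℝ) < (N.choose (m-1) : ℝ) := by
    exact_mod_cast Nat.choose_pos (show m - 1 ≤ N by omega)
  have hzlow : ∀ M, 1 ≤ M → E M m / ((N.choose m : ℝ) * E M (m-1)) ≤ z M j := by
    intro M hM
    have hEm1 := hEpos M (m-1) (by omega)
    have hz := hzpos M hM j
    rw [div_le_iff₀ (by positivity)]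
    have hzQ : P M = z M j * Q M := hPQ M
    have h1 := hE_leP M hM
    have h2 := hQ_le M hM
    have hQp := hQpos M hM
    nlinarith [mul_le_mul_of_nonneg_left h2 (mul_pos hc1 hz).le]
  have hzhigh : ∀ M, 1 ≤ M → z M j ≤ (N.choose (m-1) : ℝ) * E M m / E M (m-1) := by
    intro M hM
    have hEm1 := hEpos M (m-1) (by omega)
    have hz := hzpos M hM j
    rw [le_div_iff₀ hEm1]
    have hzQ : P M = z M j * Q M := hPQ M
    have h1 := hE_leQ M hM
    have h2 := hP_le M hM
    have hQp := hQpos M hM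
    nlinarith [mul_le_mul_of_nonneg_left h1 hz.le]
  -- log expansions
  set c1 := Real.log (N.choose m : ℝ) with hc1def
  set c0 := Real.log (N.choose (m-1) : ℝ) with hc0def
  set d1 := Real.log (m.factorial : ℝ) with hd1def
  set d0 := Real.log ((m-1).factorial : ℝ) with hd0def
  have hfac1 : (0:ℝ) < (m.factorial : ℝ) := by exact_mod_cast m.factorial_pos
  have hfac0 : (0:ℝ) < ((m-1).factorial : ℝ) := by exact_mod_cast (m-1).factorial_pos
  have hlogEm : ∀ M, Real.log (E M m) = ((M:ℝ)+1)*c1 + (M:ℝ)*d1 + (2*(m:ℝ))*Real.log (τ M) := by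
    intro M
    have hτp := hτpos M
    rw [hc1def, hd1def, hEdef]
    simp only
    rw [Real.log_mul (by positivity) (by positivity),
      Real.log_mul (by positivity) (by positivity),
      Real.log_pow, Real.log_pow, Real.log_pow]
    push_cast
    ring
  have hlogEm1 : ∀ M, Real.log (E M (m-1))
      = ((M:ℝ)+1)*c0 + (M:ℝ)*d0 + (2*((m:ℝ)-1))*Real.log (τ M) := by
    intro M
    have hτp := hτpos M
    rw [hc0def, hd0def, hEdef]
    simp only
    rw [Real.log_mul (by positivity) (by positivity),
      Real.log_mul (by positivity) (by positivity),
      Real.log_pow, Real.log_pow, Real.log_pow]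
    push_cast [Nat.cast_sub hm1]
    ring
  set lo : ℕ → ℝ := fun M => ((M:ℝ)+1)/(2*(M:ℝ)) * (c1 - c0) + (1/2)*(d1 - d0)
      + (1/(M:ℝ)) * Real.log (τ M) - (1/(2*(M:ℝ))) * c1 with hlodef
  set hi : ℕ → ℝ := fun M => ((M:ℝ)+1)/(2*(M:ℝ)) * (c1 - c0) + (1/2)*(d1 - d0)
      + (1/(M:ℝ)) * Real.log (τ M) + (1/(2*(M:ℝ))) * c0 with hhidef
  have hlow : ∀ M, 1 ≤ M → lo M ≤ (1/(2*(M:ℝ))) * Real.log (z M j) := by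
    intro M hM
    have hM0 : (M:ℝ) ≠ 0 := by
      have : (1:ℝ) ≤ (M:ℝ) := by exact_mod_cast hM
      linarith
    have hEm := hEpos M m hmN
    have hEm1 := hEpos M (m-1) (by omega)
    have harg : (0:ℝ) < E M m / ((N.choose m : ℝ) * E M (m-1)) := by positivity
    have hlog1 : Real.log (E M m / ((N.choose m : ℝ) * E M (m-1))) ≤ Real.log (z M j) :=
      Real.log_le_log harg (hzlow M hM)
    calc lo M = (1/(2*(M:ℝ))) * Real.log (E M m / ((N.choose m : ℝ) * E M (m-1))) := by
          rw [Real.log_div hEm.ne' (mul_pos hc1 hEm1).ne',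
            Real.log_mul hc1.ne' hEm1.ne', hlogEm M, hlogEm1 M, ← hc1def]
          simp only [hlodef]
          field_simp
          ring
      _ ≤ (1/(2*(M:ℝ))) * Real.log (z M j) := by
          apply mul_le_mul_of_nonneg_left hlog1
          positivity
  have hhigh : ∀ M : ℕ, 1 ≤ M → (1/(2*(M:ℝ))) * Real.log (z M j) ≤ hi M := by
    intro M hM
    have hM0 : (M:ℝ) ≠ 0 := by
      have : (1:ℝ) ≤ (M:ℝ) := by exact_mod_cast hM
      linarith
    have hEm := hEpos M m hmN
    have hEm1 := hEpos M (m-1) (by omega)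
    have hz := hzpos M hM j
    have hlog1 : Real.log (z M j) ≤ Real.log ((N.choose (m-1) : ℝ) * E M m / E M (m-1)) :=
      Real.log_le_log hz (hzhigh M hM)
    calc (1/(2*(M:ℝ))) * Real.log (z M j)
        ≤ (1/(2*(M:ℝ))) * Real.log ((N.choose (m-1) : ℝ) * E M m / E M (m-1)) := by
          apply mul_le_mul_of_nonneg_left hlog1
          positivity
      _ = hi M := by
          rw [Real.log_div (mul_pos hc0 hEm).ne' hEm1.ne',
            Real.log_mul hc0.ne' hEm.ne', hlogEm M, hlogEm1 M, ← hc0def]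
          simp only [hhidef]
          field_simp
          ring
  -- limits
  have hT0 : Tendsto (fun M : ℕ => 1/(M:ℝ)) atTop (nhds 0) := tendsto_one_div_atTop_nhds_zero_nat
  have hT1 : Tendsto (fun M : ℕ => ((M:ℝ)+1)/(2*(M:ℝ))) atTop (nhds (1/2)) := by
    have h2 : Tendsto (fun M : ℕ => (1 + 1/(M:ℝ))/2) atTop (nhds ((1 + 0)/2)) :=
      (tendsto_const_nhds.add hT0).div_const 2
    norm_num at h2
    apply h2.congr'
    filter_upwards [eventually_ge_atTop 1] with M hM
    have hMp : (0:ℝ) < (M:ℝ) := by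
      have : (1:ℝ) ≤ (M:ℝ) := by exact_mod_cast hM
      linarith
    have hM0 : (M:ℝ) ≠ 0 := hMp.ne'
    rw [div_eq_div_iff (by norm_num) (by positivity)]
    field_simp
  have hTτ : Tendsto (fun M : ℕ => (1/(M:ℝ)) * Real.log (τ M)) atTop (nhds (Real.log σ)) := by
    have hcont := (Real.continuousAt_log hσ.ne').tendsto.comp hlim
    apply hcont.congr
    intro M
    simp only [Function.comp_apply]
    exact Real.log_rpow (hτpos M) _
  have hTc : ∀ c : ℝ, Tendsto (fun M : ℕ => (1/(2*(M:ℝ))) * c) atTop (nhds 0) := by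
    intro c
    have h := hT0.mul_const (c/2)
    rw [zero_mul] at h
    apply h.congr
    intro M
    simp only [one_div, mul_inv]
    ring
  have hTlo : Tendsto lo atTop
      (nhds ((1/2)*(c1-c0) + (1/2)*(d1-d0) + Real.log σ - 0)) := by
    simp only [hlodef]
    exact (((hT1.mul_const (c1-c0)).add tendsto_const_nhds).add hTτ).sub (hTc c1)
  have hThi : Tendsto hi atTop
      (nhds ((1/2)*(c1-c0) + (1/2)*(d1-d0) + Real.log σ + 0)) := by
    simp only [hhidef]
    exact (((hT1.mul_const (c1-c0)).add tendsto_const_nhds).add hTτ).add (hTc c0)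
  -- identify the limit value
  have hnat : N.choose m * m.factorial = (jv+1) * (N.choose (m-1) * (m-1).factorial) := by
    have f1 := Nat.choose_mul_factorial_mul_factorial hmN
    have f2 := Nat.choose_mul_factorial_mul_factorial (show m - 1 ≤ N by omega)
    have h3 : N - (m-1) = (N - m) + 1 := by omega
    rw [h3, Nat.factorial_succ] at f2
    have hj1 : jv + 1 = N - m + 1 := by omega
    apply Nat.eq_of_mul_eq_mul_right (Nat.factorial_pos (N-m))
    rw [hj1]
    calc N.choose m * m.factorial * (N-m).factorial = N.factorial := f1
      _ = N.choose (m-1) * (m-1).factorial * ((N - m + 1) * (N-m).factorial) := f2.symm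
      _ = (N - m + 1) * (N.choose (m-1) * (m-1).factorial) * (N-m).factorial := by ring
  have hkey : c1 + d1 = Real.log ((jv:ℝ)+1) + (c0 + d0) := by
    have hr : (N.choose m : ℝ) * (m.factorial : ℝ)
        = ((jv:ℝ)+1) * ((N.choose (m-1) : ℝ) * ((m-1).factorial : ℝ)) := by
      exact_mod_cast congrArg (Nat.cast : ℕ → ℝ) hnat
    calc c1 + d1
        = Real.log ((N.choose m : ℝ) * (m.factorial:ℝ)) := by
          rw [Real.log_mul hc1.ne' hfac1.ne', hc1def, hd1def]
      _ = Real.log (((jv:ℝ)+1) * ((N.choose (m-1):ℝ) * ((m-1).factorial:ℝ))) := by rw [hr]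
      _ = Real.log ((jv:ℝ)+1) + (c0 + d0) := by
          rw [Real.log_mul (by positivity) (by positivity),
            Real.log_mul hc0.ne' hfac0.ne', hc0def, hd0def]
  have hval : (1/2)*(c1-c0) + (1/2)*(d1-d0) + Real.log σ - 0
      = (1/2) * (Real.log ((jv:ℝ)+1) + Real.log (σ^2)) := by
    rw [Real.log_pow]
    push_cast
    linarith [hkey]
  have hval' : (1/2)*(c1-c0) + (1/2)*(d1-d0) + Real.log σ + 0
      = (1/2) * (Real.log ((jv:ℝ)+1) + Real.log (σ^2)) := by
    rw [← hval]; ring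
  rw [hval] at hTlo
  rw [hval'] at hThi
  have hgoal : Tendsto (fun M : ℕ => (1 / (2 * (M : ℝ))) * Real.log (z M j)) atTop
      (nhds ((1/2) * (Real.log ((jv:ℝ)+1) + Real.log (σ^2)))) := by
    apply tendsto_of_tendsto_of_tendsto_of_le_of_le' hTlo hThi
    · filter_upwards [eventually_ge_atTop 1] with M hM
      exact hlow M hM
    · filter_upwards [eventually_ge_atTop 1] with M hM
      exact hhigh M hM
  exact hgoal
end

section
/- Fix N ≥ 1 and 0 < ε < 1/2, and set q = N/(N+ε) ∈ (0,1). For u ∈ ℂ with |u| ∉ ⋃_{j=1}^{N} (j−ε, j+ε), define ν_u = ⌊|u|⌋ if |u| < N and ν_u = N if |u| > N. Then there exist a constant C > 0 and M_0 ≥ 1 such that for all M ≥ M_0 and all u ∈ ℂ with |u| ∉ ⋃_{j=1}^{N} (j−ε, j+ε): | Q_N^{(M)}(u) − binom(N, ν_u) (−1)^{ν_u} (u^{ν_u}/ν_u!)^M | ≤ C q^M · |binom(N, ν_u) (u^{ν_u}/ν_u!)^M|. -/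
open Finset

/-- The rescaled polynomial `Q_N^{(M)}(u) = Σ_{k=0}^N C(N,k) (−1)^k (u^k/k!)^M`. -/
noncomputable def Qpoly (N M : ℕ) (u : ℂ) : ℂ :=
  ∑ k ∈ Finset.range (N + 1), (N.choose k : ℂ) * (-1) ^ k * (u ^ k / (k.factorial : ℂ)) ^ M

/-- The index `ν_u`: equal to `⌊|u|⌋` if `|u| < N`, and to `N` if `|u| > N`. -/
noncomputable def nuIdx (N : ℕ) (u : ℂ) : ℕ :=
  if ‖u‖ < N then ⌊‖u‖⌋₊ else N

lemma fact_ratio (r : ℝ) (k : ℕ) :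
    r ^ (k + 1) / ((k + 1).factorial : ℝ)
      = (r / ((k : ℝ) + 1)) * (r ^ k / (k.factorial : ℝ)) := by
  have h1 : ((k.factorial : ℝ)) ≠ 0 := Nat.cast_ne_zero.mpr k.factorial_ne_zero
  have h2 : ((k : ℝ) + 1) ≠ 0 := by positivity
  rw [Nat.factorial_succ, pow_succ]
  push_cast
  field_simp

lemma aux_up (r q : ℝ) (hr : 0 ≤ r) (ν : ℕ) (hr1 : r ≤ (ν : ℝ) + 1)
    (hq : r ≤ q * ((ν : ℝ) + 1)) :
    ∀ k, ν + 1 ≤ k → r ^ k / (k.factorial : ℝ) ≤ q * (r ^ ν / (ν.factorial : ℝ)) := by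
  have hfp : (0 : ℝ) < (ν.factorial : ℝ) := by exact_mod_cast ν.factorial_pos
  refine Nat.le_induction ?_ ?_
  · rw [fact_ratio]
    have hq' : r / ((ν : ℝ) + 1) ≤ q := by
      rw [div_le_iff₀ (by positivity)]; exact hq
    exact mul_le_mul_of_nonneg_right hq' (by positivity)
  · intro k hk ih
    rw [fact_ratio]
    have h1 : r / ((k : ℝ) + 1) ≤ 1 := by
      rw [div_le_one (by positivity)]
      have : (ν : ℝ) + 1 ≤ (k : ℝ) + 1 := by
        have : (ν : ℝ) ≤ (k : ℝ) := by exact_mod_cast (Nat.le_of_succ_le hk)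
        linarith
      linarith
    calc (r / ((k : ℝ) + 1)) * (r ^ k / (k.factorial : ℝ))
        ≤ 1 * (r ^ k / (k.factorial : ℝ)) :=
          mul_le_mul_of_nonneg_right h1 (by positivity)
      _ = r ^ k / (k.factorial : ℝ) := one_mul _
      _ ≤ q * (r ^ ν / (ν.factorial : ℝ)) := ih

lemma aux_down (r q : ℝ) (hrpos : 0 < r) (ν : ℕ) (hνr : (ν : ℝ) ≤ r)
    (hq : (ν : ℝ) ≤ q * r) :
    ∀ d k, k + d + 1 = ν → r ^ k / (k.factorial : ℝ) ≤ q * (r ^ ν / (ν.factorial : ℝ)) := by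
  intro d
  induction d with
  | zero =>
    intro k hk
    subst hk
    rw [fact_ratio]
    -- goal: r^k/k! ≤ q * ((r/(k+1)) * (r^k/k!))
    have hpos : (0 : ℝ) < r ^ k / (k.factorial : ℝ) := by positivity
    have h1 : 1 ≤ q * (r / ((k : ℝ) + 1)) := by
      rw [mul_div_assoc'] at *
      rw [le_div_iff₀ (by positivity)]
      push_cast at hq
      linarith
    calc r ^ k / (k.factorial : ℝ) = 1 * (r ^ k / (k.factorial : ℝ)) := (one_mul _).symm
      _ ≤ (q * (r / ((k : ℝ) + 1))) * (r ^ k / (k.factorial : ℝ)) :=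
          mul_le_mul_of_nonneg_right h1 (le_of_lt hpos)
      _ = q * ((r / ((k : ℝ) + 1)) * (r ^ k / (k.factorial : ℝ))) := by ring
  | succ d ih =>
    intro k hk
    have hk' : (k + 1) + d + 1 = ν := by omega
    have h2 := ih (k + 1) hk'
    have hkν : (k : ℝ) + 1 ≤ r := by
      have : k + 1 ≤ ν := by omega
      have : ((k : ℝ) + 1) ≤ (ν : ℝ) := by exact_mod_cast this
      linarith
    have h1 : 1 ≤ r / ((k : ℝ) + 1) := by
      rw [le_div_iff₀ (by positivity)]; linarith
    calc r ^ k / (k.factorial : ℝ) = 1 * (r ^ k / (k.factorial : ℝ)) := (one_mul _).symm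
      _ ≤ (r / ((k : ℝ) + 1)) * (r ^ k / (k.factorial : ℝ)) :=
          mul_le_mul_of_nonneg_right h1 (by positivity)
      _ = r ^ (k + 1) / ((k + 1).factorial : ℝ) := (fact_ratio r k).symm
      _ ≤ q * (r ^ ν / (ν.factorial : ℝ)) := h2



/-- **Proposition 5 (asymptotics away from the annuli):** with `q = N/(N+ε)`, uniformly for
`u` with `|u| ∉ ⋃_{j=1}^N (j−ε, j+ε)`,
`Q_N^{(M)}(u) = C(N,ν_u) (−1)^{ν_u} (u^{ν_u}/ν_u!)^M (1 + O(q^M))` as `M → ∞`. -/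
theorem Qpoly_asymptotics_away_from_annuli
    (N : ℕ) (hN : 1 ≤ N) (ε : ℝ) (hε : 0 < ε) (hε' : ε < 1 / 2) :
    ∃ C : ℝ, 0 < C ∧ ∃ M₀ : ℕ, 1 ≤ M₀ ∧ ∀ M : ℕ, M₀ ≤ M → ∀ u : ℂ,
      (∀ j : ℕ, 1 ≤ j → j ≤ N → ‖u‖ ∉ Set.Ioo ((j : ℝ) - ε) ((j : ℝ) + ε)) →
      ‖Qpoly N M u - (N.choose (nuIdx N u) : ℂ) * (-1) ^ (nuIdx N u) *
          (u ^ (nuIdx N u) / ((nuIdx N u).factorial : ℂ)) ^ M‖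
        ≤ C * ((N : ℝ) / ((N : ℝ) + ε)) ^ M *
          ‖(N.choose (nuIdx N u) : ℂ) * (u ^ (nuIdx N u) / ((nuIdx N u).factorial : ℂ)) ^ M‖ := by
  refine ⟨2 ^ N, by positivity, 1, le_refl 1, ?_⟩
  intro M hM u hAnn
  set r : ℝ := ‖u‖ with hr
  set ν : ℕ := nuIdx N u with hν
  set q : ℝ := (N : ℝ) / ((N : ℝ) + ε) with hqdef
  have hrnn : 0 ≤ r := norm_nonneg u
  have hq0 : 0 ≤ q := by positivity
  have hNε : (0 : ℝ) < (N : ℝ) + ε := by positivity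
  have hνN : ν ≤ N := by
    rw [hν]; unfold nuIdx; rw [← hr]
    split
    · exact le_of_lt ((Nat.floor_lt hrnn).mpr (by exact_mod_cast ‹_›))
    · exact le_refl N
  have hνr : (ν : ℝ) ≤ r := by
    rw [hν]; unfold nuIdx; rw [← hr]
    split
    · exact Nat.floor_le hrnn
    · next h => exact le_of_not_gt h
  -- key inequality: every other term's base is at most q times the dominant base
  have hkey : ∀ k, k ≤ N → k ≠ ν →
      r ^ k / (k.factorial : ℝ) ≤ q * (r ^ ν / (ν.factorial : ℝ)) := by
    intro k hkN hkne
    rcases lt_or_gt_of_ne hkne with hlt | hgt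
    · -- k < ν
      have hν1 : 1 ≤ ν := by omega
      have hrν : (ν : ℝ) + ε ≤ r := by
        have hA := hAnn ν hν1 hνN
        rw [Set.mem_Ioo] at hA
        push_neg at hA
        exact hA (by linarith)
      have hrpos : 0 < r := by linarith [Nat.cast_nonneg (α := ℝ) ν]
      have hq' : (ν : ℝ) ≤ q * r := by
        rw [hqdef, div_mul_eq_mul_div, le_div_iff₀ hNε]
        have hc : (ν : ℝ) ≤ (N : ℝ) := by exact_mod_cast hνN
        nlinarith [Nat.cast_nonneg (α := ℝ) N]
      exact aux_down r q hrpos ν hνr hq' (ν - k - 1) k (by omega)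
    · -- k > ν
      have hνltN : ν < N := lt_of_lt_of_le hgt hkN
      have hrN : r < (N : ℝ) := by
        by_contra h
        have : ν = N := by
          rw [hν]; unfold nuIdx; rw [← hr, if_neg h]
        omega
      have hνf : ν = ⌊r⌋₊ := by
        rw [hν]; unfold nuIdx; rw [← hr, if_pos hrN]
      have hrlt : r < (ν : ℝ) + 1 := by
        rw [hνf]; exact Nat.lt_floor_add_one r
      have hrup : r ≤ (ν : ℝ) + 1 - ε := by
        have hA := hAnn (ν + 1) (by omega) (by omega)
        rw [Set.mem_Ioo] at hA
        push_neg at hA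
        by_contra h
        push_neg at h
        have := hA (by push_cast; linarith)
        push_cast at this
        linarith
      have hq' : r ≤ q * ((ν : ℝ) + 1) := by
        rw [hqdef, div_mul_eq_mul_div, le_div_iff₀ hNε]
        have hc : (ν : ℝ) + 1 ≤ (N : ℝ) := by exact_mod_cast hνltN
        nlinarith
      exact aux_up r q hrnn ν (by linarith) hq' k hgt
  -- rewrite the difference as the sum over the other indices
  have hmem : ν ∈ Finset.range (N + 1) := Finset.mem_range.mpr (by omega)
  have hsum : Qpoly N M u - (N.choose ν : ℂ) * (-1) ^ ν * (u ^ ν / (ν.factorial : ℂ)) ^ M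
      = ∑ k ∈ (Finset.range (N + 1)).erase ν,
          (N.choose k : ℂ) * (-1) ^ k * (u ^ k / (k.factorial : ℂ)) ^ M := by
    rw [Qpoly, ← Finset.add_sum_erase _ _ hmem]
    ring
  have hnorm : ∀ k, ‖(N.choose k : ℂ) * (-1 : ℂ) ^ k * (u ^ k / (k.factorial : ℂ)) ^ M‖
      = (N.choose k : ℝ) * (r ^ k / (k.factorial : ℝ)) ^ M := by
    intro k
    rw [norm_mul, norm_mul, norm_pow, norm_pow, norm_div, norm_pow]
    simp [Complex.norm_natCast, hr]
  have hdom : 0 ≤ r ^ ν / (ν.factorial : ℝ) := by positivity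
  rw [hsum]
  have hchoose1 : (1 : ℝ) ≤ (N.choose ν : ℝ) := by
    exact_mod_cast Nat.one_le_iff_ne_zero.mpr (Nat.choose_pos hνN).ne'
  calc ‖∑ k ∈ (Finset.range (N + 1)).erase ν,
          (N.choose k : ℂ) * (-1) ^ k * (u ^ k / (k.factorial : ℂ)) ^ M‖
      ≤ ∑ k ∈ (Finset.range (N + 1)).erase ν,
          ‖(N.choose k : ℂ) * (-1) ^ k * (u ^ k / (k.factorial : ℂ)) ^ M‖ :=
        norm_sum_le _ _
    _ ≤ ∑ k ∈ (Finset.range (N + 1)).erase ν,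
          (N.choose k : ℝ) * (q ^ M * (r ^ ν / (ν.factorial : ℝ)) ^ M) := by
        refine Finset.sum_le_sum ?_
        intro k hk
        rw [hnorm k]
        have hkN : k ≤ N := by
          have := Finset.mem_range.mp (Finset.mem_of_mem_erase hk); omega
        have hkne : k ≠ ν := Finset.ne_of_mem_erase hk
        have h0 : 0 ≤ r ^ k / (k.factorial : ℝ) := by positivity
        have h1 : (r ^ k / (k.factorial : ℝ)) ^ M ≤ q ^ M * (r ^ ν / (ν.factorial : ℝ)) ^ M := by
          rw [← mul_pow]
          exact pow_le_pow_left₀ h0 (hkey k hkN hkne) M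
        exact mul_le_mul_of_nonneg_left h1 (Nat.cast_nonneg _)
    _ = (∑ k ∈ (Finset.range (N + 1)).erase ν, (N.choose k : ℝ))
          * (q ^ M * (r ^ ν / (ν.factorial : ℝ)) ^ M) := by
        rw [Finset.sum_mul]
    _ ≤ (2 : ℝ) ^ N * (q ^ M * (r ^ ν / (ν.factorial : ℝ)) ^ M) := by
        refine mul_le_mul_of_nonneg_right ?_ (by positivity)
        have h1 : (∑ k ∈ (Finset.range (N + 1)).erase ν, (N.choose k : ℝ))
            ≤ ∑ k ∈ Finset.range (N + 1), (N.choose k : ℝ) :=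
          Finset.sum_le_sum_of_subset_of_nonneg (Finset.erase_subset _ _)
            (fun i _ _ => Nat.cast_nonneg _)
        have h2 : (∑ k ∈ Finset.range (N + 1), (N.choose k : ℝ)) = 2 ^ N := by
          exact_mod_cast congrArg (Nat.cast : ℕ → ℝ) (Nat.sum_range_choose N)
        linarith
    _ ≤ 2 ^ N * q ^ M * ‖(N.choose ν : ℂ) * (u ^ ν / (ν.factorial : ℂ)) ^ M‖ := by
        have hnorm2 : ‖(N.choose ν : ℂ) * (u ^ ν / (ν.factorial : ℂ)) ^ M‖
            = (N.choose ν : ℝ) * (r ^ ν / (ν.factorial : ℝ)) ^ M := by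
          rw [norm_mul, norm_pow, norm_div, norm_pow]
          simp [Complex.norm_natCast, hr]
        rw [hnorm2, mul_assoc]
        refine mul_le_mul_of_nonneg_left ?_ (by positivity)
        refine mul_le_mul_of_nonneg_left ?_ (by positivity)
        exact le_mul_of_one_le_left (by positivity) hchoose1
end

section
/- Fix N ≥ 1, ν ∈ {1,…,N}, and a compact set 𝒦 ⊂ ℂ. Then there exist q ∈ (0,1), a constant C > 0, and M_0 ≥ 1 such that for all M ≥ M_0 and all w ∈ 𝒦: | Q_N^{(M)}(ν + w/M) − binom(N, ν−1) (−1)^{ν−1} ((ν + w/M)^{ν−1}/(ν−1)!)^M · (1 − ((N+1−ν)/ν)(1 + w/(νM))^M) | ≤ C q^M · | binom(N, ν−1) ((ν + w/M)^{ν−1}/(ν−1)!)^M |. -/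
open Finset



lemma fact_le_mul_pow (k m : ℕ) : (k + m).factorial ≤ k.factorial * (k + m) ^ m := by
  induction m with
  | zero => simp
  | succ m ih =>
      calc (k + (m + 1)).factorial = (k + m + 1) * (k + m).factorial := by
            rw [← Nat.add_assoc]; exact Nat.factorial_succ _
        _ ≤ (k + m + 1) * (k.factorial * (k + m) ^ m) := Nat.mul_le_mul_left _ ih
        _ ≤ (k + m + 1) * (k.factorial * (k + m + 1) ^ m) :=
            Nat.mul_le_mul_left _ (Nat.mul_le_mul_left _ (Nat.pow_le_pow_left (Nat.le_succ _) m))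
        _ = k.factorial * (k + (m + 1)) ^ (m + 1) := by
            rw [← Nat.add_assoc, pow_succ]; ring

lemma mul_pow_le_fact (v m : ℕ) : v.factorial * (v + 1) ^ m ≤ (v + m).factorial := by
  induction m with
  | zero => simp
  | succ m ih =>
      calc v.factorial * (v + 1) ^ (m + 1) = (v + 1) * (v.factorial * (v + 1) ^ m) := by ring
        _ ≤ (v + 1) * (v + m).factorial := Nat.mul_le_mul_left _ ih
        _ ≤ (v + m + 1) * (v + m).factorial := Nat.mul_le_mul_right _ (by omega)
        _ = (v + (m + 1)).factorial := by rw [← Nat.add_assoc]; exact (Nat.factorial_succ _).symm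

lemma key_ratio (s k : ℕ) (t : ℝ) (ht1 : (s : ℝ) + 3/4 ≤ t) (ht2 : t ≤ (s : ℝ) + 5/4)
    (hk1 : k ≠ s) (hk2 : k ≠ s + 1) :
    t ^ k / (k.factorial : ℝ) ≤
      max ((s : ℝ) / ((s : ℝ) + 3/4)) (((s : ℝ) + 5/4) ^ 2 / (((s : ℝ) + 1) * ((s : ℝ) + 2)))
        * (t ^ s / (s.factorial : ℝ)) := by
  have hs0 : (0 : ℝ) ≤ (s : ℝ) := Nat.cast_nonneg s
  have ht0 : (0 : ℝ) < t := by linarith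
  have hkf : (0 : ℝ) < (k.factorial : ℝ) := by exact_mod_cast k.factorial_pos
  have hsf : (0 : ℝ) < (s.factorial : ℝ) := by exact_mod_cast s.factorial_pos
  rcases Nat.lt_or_ge k s with hks | hks
  · -- k < s : use the first bound
    obtain ⟨m, rfl⟩ : ∃ m, s = k + (m + 1) := ⟨s - k - 1, by omega⟩
    refine le_trans ?_ (mul_le_mul_of_nonneg_right (le_max_left _ _) (by positivity))
    have hA : ((k + (m + 1)).factorial : ℝ) ≤
        (k.factorial : ℝ) * (((k + (m + 1) : ℕ) : ℝ)) ^ (m + 1) := by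
      exact_mod_cast fact_le_mul_pow k (m + 1)
    set S : ℝ := ((k + (m + 1) : ℕ) : ℝ) with hS
    have hS0 : 0 ≤ S := Nat.cast_nonneg _
    have hSt : S ≤ t := by linarith
    have h2 : S ^ (m + 1) * (S + 3/4) ≤ S * t ^ (m + 1) := by
      have e1 : S ^ (m + 1) * (S + 3/4) = (S * (S + 3/4)) * S ^ m := by rw [pow_succ]; ring
      have e2 : S * t ^ (m + 1) = (S * t) * t ^ m := by rw [pow_succ]; ring
      rw [e1, e2]
      have h3 : S * (S + 3/4) ≤ S * t := mul_le_mul_of_nonneg_left ht1 hS0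
      exact mul_le_mul h3 (pow_le_pow_left₀ hS0 hSt m) (by positivity) (by positivity)
    have key1 : t ^ k * ((k + (m + 1)).factorial : ℝ) * (S + 3/4)
        ≤ S * t ^ (k + (m + 1)) * (k.factorial : ℝ) := by
      calc t ^ k * ((k + (m + 1)).factorial : ℝ) * (S + 3/4)
          ≤ t ^ k * ((k.factorial : ℝ) * S ^ (m + 1)) * (S + 3/4) := by
            gcongr
        _ = (t ^ k * (k.factorial : ℝ)) * (S ^ (m + 1) * (S + 3/4)) := by ring
        _ ≤ (t ^ k * (k.factorial : ℝ)) * (S * t ^ (m + 1)) :=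
            mul_le_mul_of_nonneg_left h2 (by positivity)
        _ = S * t ^ (k + (m + 1)) * (k.factorial : ℝ) := by rw [pow_add]; ring
    rw [div_mul_div_comm, div_le_div_iff₀ hkf (by positivity)]
    nlinarith [key1]
  · -- k ≥ s + 2 : use the second bound
    obtain ⟨m, rfl⟩ : ∃ m, k = s + (m + 2) := ⟨k - s - 2, by omega⟩
    refine le_trans ?_ (mul_le_mul_of_nonneg_right (le_max_right _ _) (by positivity))
    set S : ℝ := (s : ℝ) with hS
    have hA : ((s + 1).factorial : ℝ) * (((s + 2 : ℕ) : ℝ)) ^ (m + 1)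
        ≤ ((s + 1 + (m + 1)).factorial : ℝ) := by exact_mod_cast mul_pow_le_fact (s + 1) (m + 1)
    have hidx : s + 1 + (m + 1) = s + (m + 2) := by omega
    rw [hidx] at hA
    have hA2 : (s.factorial : ℝ) * ((S + 1) * (S + 2) ^ (m + 1))
        ≤ ((s + (m + 2)).factorial : ℝ) := by
      have : ((s + 1).factorial : ℝ) = (S + 1) * (s.factorial : ℝ) := by
        rw [Nat.factorial_succ]; push_cast; ring
      rw [this] at hA
      have : (((s + 2 : ℕ) : ℝ)) = S + 2 := by push_cast; ring
      rw [this] at hA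
      nlinarith [hA]
    have hB : t ^ (m + 2) ≤ (S + 5/4) ^ 2 * (S + 2) ^ m := by
      calc t ^ (m + 2) ≤ (S + 5/4) ^ (m + 2) := pow_le_pow_left₀ ht0.le ht2 _
        _ = (S + 5/4) ^ 2 * (S + 5/4) ^ m := by rw [pow_add]; ring
        _ ≤ (S + 5/4) ^ 2 * (S + 2) ^ m := by
            exact mul_le_mul_of_nonneg_left
              (pow_le_pow_left₀ (by positivity) (by linarith) m) (by positivity)
    have key2 : t ^ (s + (m + 2)) * ((S + 1) * (S + 2)) * (s.factorial : ℝ)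
        ≤ (S + 5/4) ^ 2 * t ^ s * ((s + (m + 2)).factorial : ℝ) := by
      calc t ^ (s + (m + 2)) * ((S + 1) * (S + 2)) * (s.factorial : ℝ)
          = (t ^ s * (s.factorial : ℝ) * ((S + 1) * (S + 2))) * t ^ (m + 2) := by
            rw [pow_add]; ring
        _ ≤ (t ^ s * (s.factorial : ℝ) * ((S + 1) * (S + 2))) *
              ((S + 5/4) ^ 2 * (S + 2) ^ m) := mul_le_mul_of_nonneg_left hB (by positivity)
        _ = (S + 5/4) ^ 2 * t ^ s * ((s.factorial : ℝ) * ((S + 1) * (S + 2) ^ (m + 1))) := by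
            rw [pow_succ]; ring
        _ ≤ (S + 5/4) ^ 2 * t ^ s * ((s + (m + 2)).factorial : ℝ) :=
            mul_le_mul_of_nonneg_left hA2 (by positivity)
    rw [div_mul_div_comm, div_le_div_iff₀ hkf (by positivity)]
    nlinarith [key2]


/-- **Proposition 6 (local asymptotics near `u = ν` at scale `1/M`):** for fixed
`ν ∈ {1,…,N}` and a compact set `𝒦 ⊂ ℂ`, there are `q ∈ (0,1)`, `C > 0` and `M₀` such that
for all `M ≥ M₀` and `w ∈ 𝒦`,
`|Q_N^{(M)}(ν + w/M) − C(N,ν−1)(−1)^{ν−1}((ν+w/M)^{ν−1}/(ν−1)!)^M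
  (1 − ((N+1−ν)/ν)(1 + w/(νM))^M)| ≤ C q^M |C(N,ν−1)((ν+w/M)^{ν−1}/(ν−1)!)^M|`. -/
theorem Qpoly_local_asymptotics
    (N ν : ℕ) (hN : 1 ≤ N) (hν1 : 1 ≤ ν) (hνN : ν ≤ N)
    (𝒦 : Set ℂ) (h𝒦 : IsCompact 𝒦) :
    ∃ q : ℝ, q ∈ Set.Ioo (0 : ℝ) 1 ∧ ∃ C : ℝ, 0 < C ∧ ∃ M₀ : ℕ, 1 ≤ M₀ ∧
      ∀ M : ℕ, M₀ ≤ M → ∀ w ∈ 𝒦,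
        ‖Qpoly N M ((ν : ℂ) + w / M) -
            (N.choose (ν - 1) : ℂ) * (-1) ^ (ν - 1) *
              (((ν : ℂ) + w / M) ^ (ν - 1) / ((ν - 1).factorial : ℂ)) ^ M *
              (1 - ((N + 1 - ν : ℕ) : ℂ) / (ν : ℂ) * (1 + w / ((ν : ℂ) * M)) ^ M)‖
          ≤ C * q ^ M *
            ‖(N.choose (ν - 1) : ℂ) *
              (((ν : ℂ) + w / M) ^ (ν - 1) / ((ν - 1).factorial : ℂ)) ^ M‖ := by
  obtain ⟨s, rfl⟩ : ∃ s, ν = s + 1 := ⟨ν - 1, by omega⟩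
  obtain ⟨R, hR⟩ := h𝒦.isBounded.exists_norm_le
  have hR0 : (0 : ℝ) ≤ R ∨ 𝒦 = ∅ := by
    rcases Set.eq_empty_or_nonempty 𝒦 with h | ⟨w, hw⟩
    · exact Or.inr h
    · exact Or.inl (le_trans (norm_nonneg w) (hR w hw))
  set q1 : ℝ := (s : ℝ) / ((s : ℝ) + 3/4) with hq1
  set q2 : ℝ := ((s : ℝ) + 5/4) ^ 2 / (((s : ℝ) + 1) * ((s : ℝ) + 2)) with hq2
  have hs0 : (0 : ℝ) ≤ (s : ℝ) := Nat.cast_nonneg s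
  refine ⟨max q1 q2, ⟨lt_max_of_lt_right (by positivity), max_lt ?_ ?_⟩,
    ((N : ℝ) + 1) * 2 ^ N, by positivity, 4 * ⌈R⌉₊ + 1, by omega, ?_⟩
  · rw [hq1, div_lt_one (by positivity)]; linarith
  · rw [hq2, div_lt_one (by positivity)]; nlinarith
  intro M hM w hw
  have hM1 : 1 ≤ M := by omega
  have hMR : (0 : ℝ) < (M : ℝ) := by exact_mod_cast Nat.pos_of_ne_zero (by omega)
  have hRw : ‖w‖ ≤ R := hR w hw
  have h4R : 4 * R ≤ (M : ℝ) := by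
    have h1 : R ≤ (⌈R⌉₊ : ℝ) := Nat.le_ceil R
    have h2 : (4 * ⌈R⌉₊ + 1 : ℕ) ≤ M := hM
    have h3 : ((4 * ⌈R⌉₊ + 1 : ℕ) : ℝ) ≤ (M : ℝ) := by exact_mod_cast h2
    push_cast at h3
    linarith
  have hwM : ‖w / (M : ℂ)‖ ≤ 1/4 := by
    rw [norm_div, Complex.norm_natCast, div_le_iff₀ hMR]
    linarith
  set u : ℂ := ((s + 1 : ℕ) : ℂ) + w / (M : ℂ) with hu
  set t : ℝ := ‖u‖ with htdef
  have hnorm_cast : ‖((s + 1 : ℕ) : ℂ)‖ = (s : ℝ) + 1 := by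
    rw [Complex.norm_natCast]; push_cast; ring
  have ht1 : (s : ℝ) + 3/4 ≤ t := by
    have := norm_add_le u (-(w / (M : ℂ)))
    simp only [hu, add_neg_cancel_right, norm_neg] at this
    rw [hnorm_cast] at this
    linarith
  have ht2 : t ≤ (s : ℝ) + 5/4 := by
    have := norm_add_le ((s + 1 : ℕ) : ℂ) (w / (M : ℂ))
    rw [hnorm_cast] at this
    linarith
  have ht0 : (0 : ℝ) < t := by linarith
  have hu0 : u ≠ 0 := by
    intro h; rw [h] at htdef; simp at htdef; linarith [htdef ▸ ht1]
  simp only [Nat.add_sub_cancel, Nat.add_sub_add_right]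
  set f : ℕ → ℂ := fun k => (N.choose k : ℂ) * (-1) ^ k * (u ^ k / (k.factorial : ℂ)) ^ M with hf
  have hMne : (M : ℂ) ≠ 0 := Nat.cast_ne_zero.mpr (by omega)
  have hs1ne : ((s : ℂ) + 1) ≠ 0 := by
    intro h
    have := congrArg Complex.re h
    push_cast at this
    simp at this
    linarith
  have hsfne : ((s.factorial : ℕ) : ℂ) ≠ 0 := Nat.cast_ne_zero.mpr s.factorial_ne_zero
  have hP : 1 + w / (((s + 1 : ℕ) : ℂ) * (M : ℂ)) = u / ((s : ℂ) + 1) := by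
    rw [hu]; push_cast; field_simp
  have hTP : u ^ s / (s.factorial : ℂ) * (u / ((s : ℂ) + 1))
      = u ^ (s + 1) / ((s + 1).factorial : ℂ) := by
    rw [Nat.factorial_succ, pow_succ]
    push_cast
    field_simp
  have hchoose : (N.choose (s + 1) : ℂ) * ((s : ℂ) + 1)
      = (N.choose s : ℂ) * ((N - s : ℕ) : ℂ) := by
    exact_mod_cast congrArg (Nat.cast : ℕ → ℂ) (Nat.choose_succ_right_eq N s)
  have hmain : (N.choose s : ℂ) * (-1) ^ s * (u ^ s / (s.factorial : ℂ)) ^ M *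
      (1 - ((N - s : ℕ) : ℂ) / ((s + 1 : ℕ) : ℂ) * (1 + w / (((s + 1 : ℕ) : ℂ) * (M : ℂ))) ^ M)
      = f s + f (s + 1) := by
    have e2 : (u ^ (s + 1) / (((s + 1).factorial : ℕ) : ℂ)) ^ M
        = (u ^ s / (s.factorial : ℂ)) ^ M * (u / ((s : ℂ) + 1)) ^ M := by
      rw [← mul_pow, hTP]
    have hcast : ((s + 1 : ℕ) : ℂ) = (s : ℂ) + 1 := by push_cast; ring
    simp only [hf]
    rw [hP, e2, hcast, pow_succ (-1 : ℂ)]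
    have hc3 : (N.choose s : ℂ) * (((N - s : ℕ) : ℂ) / ((s : ℂ) + 1)) = (N.choose (s + 1) : ℂ) := by
      rw [mul_div_assoc', div_eq_iff hs1ne]
      exact hchoose.symm
    linear_combination (-(-1 : ℂ) ^ s * (u ^ s / (s.factorial : ℂ)) ^ M
      * (u / ((s : ℂ) + 1)) ^ M) * hc3
  have hsmem : s ∈ Finset.range (N + 1) := mem_range.mpr (by omega)
  have hs1mem : s + 1 ∈ (Finset.range (N + 1)).erase s :=
    mem_erase.mpr ⟨by omega, mem_range.mpr (by omega)⟩
  have hsum : Qpoly N M u - (f s + f (s + 1))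
      = ∑ k ∈ ((Finset.range (N + 1)).erase s).erase (s + 1), f k := by
    rw [Qpoly, ← Finset.add_sum_erase _ f hsmem, ← Finset.add_sum_erase _ f hs1mem]
    ring
  rw [hmain, hsum]
  have hq2pos : (0 : ℝ) < q2 := by rw [hq2]; positivity
  have hqpos : (0 : ℝ) < max q1 q2 := lt_max_of_lt_right hq2pos
  have hnormRHS : ‖(N.choose s : ℂ) * (u ^ s / (s.factorial : ℂ)) ^ M‖
      = (N.choose s : ℝ) * (t ^ s / (s.factorial : ℝ)) ^ M := by
    rw [norm_mul, norm_pow, norm_div, norm_pow, Complex.norm_natCast, Complex.norm_natCast,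
      ← htdef]
  have hbound : ∀ k ∈ ((Finset.range (N + 1)).erase s).erase (s + 1),
      ‖f k‖ ≤ 2 ^ N * (max q1 q2) ^ M * (t ^ s / (s.factorial : ℝ)) ^ M := by
    intro k hk
    obtain ⟨hk1, hk2, hk3⟩ : k ≠ s + 1 ∧ k ≠ s ∧ k ∈ Finset.range (N + 1) := by
      have h1 := Finset.mem_erase.mp hk
      have h2 := Finset.mem_erase.mp h1.2
      exact ⟨h1.1, h2.1, h2.2⟩
    have hnf : ‖f k‖ = (N.choose k : ℝ) * (t ^ k / (k.factorial : ℝ)) ^ M := by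
      simp only [hf]
      rw [norm_mul, norm_mul, norm_pow, norm_pow, norm_div, norm_pow, norm_neg, norm_one,
        Complex.norm_natCast, Complex.norm_natCast, one_pow, mul_one, ← htdef]
    rw [hnf]
    have hch : (N.choose k : ℝ) ≤ 2 ^ N := by
      have h : N.choose k ≤ 2 ^ N := by
        calc N.choose k ≤ ∑ i ∈ Finset.range (N + 1), N.choose i :=
              Finset.single_le_sum (fun i _ => Nat.zero_le _) hk3
          _ = 2 ^ N := Nat.sum_range_choose N
      exact_mod_cast h
    have hkr := key_ratio s k t ht1 ht2 hk2 hk1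
    have hkrM : (t ^ k / (k.factorial : ℝ)) ^ M
        ≤ (max q1 q2) ^ M * (t ^ s / (s.factorial : ℝ)) ^ M := by
      rw [← mul_pow]
      exact pow_le_pow_left₀ (by positivity) hkr M
    calc (N.choose k : ℝ) * (t ^ k / (k.factorial : ℝ)) ^ M
        ≤ 2 ^ N * ((max q1 q2) ^ M * (t ^ s / (s.factorial : ℝ)) ^ M) :=
          mul_le_mul hch hkrM (by positivity) (by positivity)
      _ = 2 ^ N * (max q1 q2) ^ M * (t ^ s / (s.factorial : ℝ)) ^ M := by ring
  have hcard : ((((Finset.range (N + 1)).erase s).erase (s + 1)).card : ℝ) ≤ (N : ℝ) + 1 := by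
    have h : (((Finset.range (N + 1)).erase s).erase (s + 1)).card ≤ N + 1 := by
      calc (((Finset.range (N + 1)).erase s).erase (s + 1)).card
          ≤ ((Finset.range (N + 1)).erase s).card := Finset.card_erase_le
        _ ≤ (Finset.range (N + 1)).card := Finset.card_erase_le
        _ = N + 1 := Finset.card_range _
    exact_mod_cast h
  have hCs1 : (1 : ℝ) ≤ (N.choose s : ℝ) := by
    exact_mod_cast Nat.one_le_iff_ne_zero.mpr (Nat.choose_pos (by omega : s ≤ N)).ne'
  calc ‖∑ k ∈ ((Finset.range (N + 1)).erase s).erase (s + 1), f k‖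
      ≤ ∑ k ∈ ((Finset.range (N + 1)).erase s).erase (s + 1), ‖f k‖ := norm_sum_le _ _
    _ ≤ ∑ _k ∈ ((Finset.range (N + 1)).erase s).erase (s + 1),
          (2 ^ N * (max q1 q2) ^ M * (t ^ s / (s.factorial : ℝ)) ^ M) :=
        Finset.sum_le_sum hbound
    _ = ((((Finset.range (N + 1)).erase s).erase (s + 1)).card : ℝ) *
          (2 ^ N * (max q1 q2) ^ M * (t ^ s / (s.factorial : ℝ)) ^ M) := by
        rw [Finset.sum_const, nsmul_eq_mul]
    _ ≤ ((N : ℝ) + 1) * (2 ^ N * (max q1 q2) ^ M * (t ^ s / (s.factorial : ℝ)) ^ M) :=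
        mul_le_mul_of_nonneg_right hcard (by positivity)
    _ ≤ ((N : ℝ) + 1) * 2 ^ N * (max q1 q2) ^ M *
          ‖(N.choose s : ℂ) * (u ^ s / (s.factorial : ℂ)) ^ M‖ := by
        rw [hnormRHS]
        have hB : (t ^ s / (s.factorial : ℝ)) ^ M
            ≤ (N.choose s : ℝ) * (t ^ s / (s.factorial : ℝ)) ^ M :=
          le_mul_of_one_le_left (by positivity) hCs1
        calc ((N : ℝ) + 1) * (2 ^ N * (max q1 q2) ^ M * (t ^ s / (s.factorial : ℝ)) ^ M)
            = ((N : ℝ) + 1) * 2 ^ N * (max q1 q2) ^ M * (t ^ s / (s.factorial : ℝ)) ^ M := by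
              ring
          _ ≤ ((N : ℝ) + 1) * 2 ^ N * (max q1 q2) ^ M *
                ((N.choose s : ℝ) * (t ^ s / (s.factorial : ℝ)) ^ M) :=
              mul_le_mul_of_nonneg_left hB (by positivity)
end

section
/- Fix N ≥ 1 and ν ∈ {1,…,N}. Then, uniformly for w in compact subsets of ℂ, Q_N^{(M)}(ν + w/M) / [ binom(N, ν−1) (−1)^{ν−1} (ν^{ν−1}/(ν−1)!)^M ] converges, as M → ∞, to e^{w(1 − 1/ν)} · (1 − ((N+1−ν)/ν) e^{w/ν}). That is, for every compact set 𝒦 ⊂ ℂ and every δ > 0 there is M_0 such that for all M ≥ M_0 and all w ∈ 𝒦 the difference between the quotient and the limit function has modulus at most δ. -/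
open Finset

lemma exp_diff_bound (a b : ℂ) (h : ‖a - b‖ ≤ 1) :
    ‖Complex.exp a - Complex.exp b‖ ≤ 2 * Real.exp ‖b‖ * ‖a - b‖ := by
  have h1 : Complex.exp a - Complex.exp b = Complex.exp b * (Complex.exp (a - b) - 1) := by
    rw [mul_sub, ← Complex.exp_add, mul_one]; ring_nf
  rw [h1, norm_mul]
  have h2 : ‖Complex.exp (a - b) - 1‖ ≤ 2 * ‖a - b‖ := Complex.norm_exp_sub_one_le h
  have h3 : ‖Complex.exp b‖ ≤ Real.exp ‖b‖ := by
    rw [Complex.norm_exp]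
    exact Real.exp_le_exp.mpr ((le_abs_self b.re).trans (Complex.abs_re_le_norm b))
  calc ‖Complex.exp b‖ * ‖Complex.exp (a - b) - 1‖
      ≤ Real.exp ‖b‖ * (2 * ‖a - b‖) :=
        mul_le_mul h3 h2 (norm_nonneg _) (Real.exp_nonneg _)
    _ = 2 * Real.exp ‖b‖ * ‖a - b‖ := by ring

lemma key_exp (c : ℕ) (S ε : ℝ) (hS : 1 ≤ S) (hε : 0 < ε) :
    ∃ M₀ : ℕ, 1 ≤ M₀ ∧ ∀ M : ℕ, M₀ ≤ M → ∀ z : ℂ, ‖z‖ ≤ S →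
      ‖(1 + z / M) ^ (c * M) - Complex.exp (c * z)‖ ≤ ε := by
  have hES : 0 < 2 * Real.exp (c * S) := by positivity
  set ε' : ℝ := min 1 (ε / (2 * Real.exp (c * S))) with hε'def
  have hε' : 0 < ε' := lt_min one_pos (by positivity)
  obtain ⟨M₁, hM₁⟩ := exists_nat_ge (max (2 * S) (c * S ^ 2 / ε'))
  refine ⟨M₁ + 1, Nat.le_add_left 1 M₁, fun M hM z hz => ?_⟩
  have hMR : (M : ℝ) ≥ max (2 * S) (c * S ^ 2 / ε') := by
    calc (M : ℝ) ≥ (M₁ + 1 : ℕ) := by exact_mod_cast hM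
      _ ≥ (M₁ : ℝ) := by push_cast; linarith
      _ ≥ _ := hM₁
  have hM2S : (M : ℝ) ≥ 2 * S := le_trans (le_max_left _ _) hMR
  have hMc : (M : ℝ) ≥ c * S ^ 2 / ε' := le_trans (le_max_right _ _) hMR
  have hMpos : (0 : ℝ) < M := by linarith
  have hMC : (M : ℂ) ≠ 0 := by exact_mod_cast hMpos.ne'
  set u : ℂ := z / M with hu_def
  have hu : ‖u‖ ≤ S / M := by
    rw [hu_def, norm_div, Complex.norm_natCast]
    exact div_le_div_of_nonneg_right hz hMpos.le |>.trans_eq rfl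
  have huhalf : ‖u‖ ≤ 1 / 2 := by
    refine hu.trans ?_
    rw [div_le_div_iff₀ hMpos two_pos]
    linarith
  have h1 : (1 : ℂ) + u ≠ 0 := by
    intro h
    have hu1 : u = -1 := by linear_combination h
    rw [hu1] at huhalf
    norm_num at huhalf
  have hrw : (1 + u) ^ (c * M) = Complex.exp (((c * M : ℕ) : ℂ) * Complex.log (1 + u)) := by
    rw [Complex.exp_nat_mul, Complex.exp_log h1]
  rw [hrw]
  set a : ℂ := ((c * M : ℕ) : ℂ) * Complex.log (1 + u)
  set b : ℂ := (c : ℂ) * z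
  have hub : ((c * M : ℕ) : ℂ) * u = b := by
    rw [hu_def]; push_cast; field_simp; ring
  have hab : a - b = ((c * M : ℕ) : ℂ) * (Complex.log (1 + u) - u) := by
    rw [mul_sub, hub]
  have hlog : ‖Complex.log (1 + u) - u‖ ≤ ‖u‖ ^ 2 := by
    have := Complex.norm_log_one_add_sub_self_le (z := u) (by linarith)
    have h2 : (1 - ‖u‖)⁻¹ ≤ 2 := by
      rw [inv_le_comm₀ (by linarith) two_pos]; linarith
    calc ‖Complex.log (1 + u) - u‖ ≤ ‖u‖ ^ 2 * (1 - ‖u‖)⁻¹ / 2 := this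
      _ ≤ ‖u‖ ^ 2 * 2 / 2 := by
          have := mul_le_mul_of_nonneg_left h2 (sq_nonneg ‖u‖)
          linarith
      _ = ‖u‖ ^ 2 := by ring
  have habn : ‖a - b‖ ≤ ε' := by
    rw [hab, norm_mul]
    have hn : ‖((c * M : ℕ) : ℂ)‖ = (c : ℝ) * M := by
      rw [Complex.norm_natCast]; push_cast; ring
    rw [hn]
    have hu2 : ‖u‖ ^ 2 ≤ (S / M) ^ 2 := by
      apply pow_le_pow_left₀ (norm_nonneg _) hu
    have : (c : ℝ) * M * ‖Complex.log (1 + u) - u‖ ≤ c * M * ((S / M) ^ 2) := by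
      apply mul_le_mul_of_nonneg_left (hlog.trans hu2) (by positivity)
    refine this.trans ?_
    have hkey : (c : ℝ) * M * ((S / M) ^ 2) = c * S ^ 2 / M := by
      field_simp
    rw [hkey]
    rw [div_le_iff₀ hMpos]
    calc (c : ℝ) * S ^ 2 = (c * S ^ 2 / ε') * ε' := by field_simp
      _ ≤ M * ε' := mul_le_mul_of_nonneg_right hMc hε'.le
      _ = ε' * M := by ring
  have hab1 : ‖a - b‖ ≤ 1 := habn.trans (min_le_left _ _)
  have hbn : ‖b‖ ≤ c * S := by
    rw [norm_mul, Complex.norm_natCast]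
    exact mul_le_mul_of_nonneg_left hz (Nat.cast_nonneg c)
  calc ‖Complex.exp a - Complex.exp b‖ ≤ 2 * Real.exp ‖b‖ * ‖a - b‖ := exp_diff_bound a b hab1
    _ ≤ 2 * Real.exp (c * S) * ε' := by
        apply mul_le_mul (mul_le_mul_of_nonneg_left (Real.exp_le_exp.mpr hbn) two_pos.le)
          habn (norm_nonneg _) (by positivity)
    _ ≤ 2 * Real.exp (c * S) * (ε / (2 * Real.exp (c * S))) := by
        apply mul_le_mul_of_nonneg_left (min_le_right _ _) hES.le
    _ = ε := by field_simp

lemma fact_split (k m : ℕ) (h : k ≤ m) :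
    k.factorial * ∏ i ∈ Ico (k + 1) (m + 1), i = m.factorial := by
  rw [← Finset.prod_Ico_id_eq_factorial k, ← Finset.prod_Ico_id_eq_factorial m]
  exact Finset.prod_Ico_consecutive _ (Nat.le_add_left 1 k) (by omega)

lemma fact_pow_lt (m k : ℕ) (h1 : k ≠ m) (h2 : k ≠ m + 1) :
    m.factorial * (m + 1) ^ k < k.factorial * (m + 1) ^ m := by
  rcases lt_or_gt_of_ne h1 with hlt | hgt
  · -- k < m
    have hsplit := fact_split k m hlt.le
    have hprod : ∏ i ∈ Ico (k + 1) (m + 1), i < ∏ i ∈ Ico (k + 1) (m + 1), (m + 1) := by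
      apply Finset.prod_lt_prod (f := fun i => i) (g := fun _ => m + 1)
      · intro i hi; rw [Finset.mem_Ico] at hi; omega
      · intro i hi; rw [Finset.mem_Ico] at hi; omega
      · exact ⟨k + 1, Finset.mem_Ico.mpr ⟨le_refl _, by omega⟩, by omega⟩
    rw [Finset.prod_const, Nat.card_Ico] at hprod
    calc m.factorial * (m + 1) ^ k
        = k.factorial * (∏ i ∈ Ico (k + 1) (m + 1), i) * (m + 1) ^ k := by rw [hsplit]
      _ < k.factorial * (m + 1) ^ (m + 1 - (k + 1)) * (m + 1) ^ k := by
          gcongr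
          all_goals first | exact hprod | positivity | exact Nat.factorial_pos _
      _ = k.factorial * (m + 1) ^ m := by
          rw [mul_assoc, ← pow_add]
          congr 2
          omega
  · -- k > m + 1
    have hm1k : m + 1 ≤ k := by omega
    have hsplit := fact_split m k (by omega)
    have hprod : ∏ i ∈ Ico (m + 1) (k + 1), (m + 1) < ∏ i ∈ Ico (m + 1) (k + 1), i := by
      apply Finset.prod_lt_prod (f := fun _ => m + 1) (g := fun i => i)
      · intro i hi; omega
      · intro i hi; rw [Finset.mem_Ico] at hi; omega
      · exact ⟨k, Finset.mem_Ico.mpr ⟨by omega, by omega⟩, by omega⟩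
    rw [Finset.prod_const, Nat.card_Ico] at hprod
    calc m.factorial * (m + 1) ^ k
        = m.factorial * (m + 1) ^ (k + 1 - (m + 1)) * (m + 1) ^ m := by
          rw [mul_assoc, ← pow_add]; congr 2; omega
      _ < m.factorial * (∏ i ∈ Ico (m + 1) (k + 1), i) * (m + 1) ^ m := by
          gcongr
          all_goals first | exact hprod | positivity | exact Nat.factorial_pos _
      _ = k.factorial * (m + 1) ^ m := by rw [hsplit]

lemma key_decay (C ρ ε : ℝ) (hρ0 : 0 ≤ ρ) (hρ1 : ρ < 1) (hε : 0 < ε) :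
    ∃ M₀ : ℕ, 1 ≤ M₀ ∧ ∀ M : ℕ, M₀ ≤ M → C * ρ ^ M ≤ ε := by
  have h := (tendsto_pow_atTop_nhds_zero_of_lt_one hρ0 hρ1).const_mul C
  rw [mul_zero] at h
  have h2 : ∀ᶠ M in Filter.atTop, |C * ρ ^ M - 0| < ε := by
    have := h (Metric.ball_mem_nhds 0 hε)
    simpa [Metric.mem_ball, Real.dist_eq, abs_mul, abs_pow] using this
  rw [Filter.eventually_atTop] at h2
  obtain ⟨a, ha⟩ := h2
  exact ⟨max a 1, le_max_right _ _, fun M hM => by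
    have := ha M (le_trans (le_max_left _ _) hM)
    rw [sub_zero, abs_mul, abs_pow] at this
    calc C * ρ ^ M ≤ |C| * |ρ| ^ M := by
          apply mul_le_mul (le_abs_self C) (pow_le_pow_left₀ hρ0 (le_abs_self ρ) M)
            (by positivity) (abs_nonneg C)
      _ ≤ ε := this.le⟩

lemma per_k (N ν : ℕ) (hν1 : 1 ≤ ν) (hνN : ν ≤ N) (S δ' : ℝ) (hS : 1 ≤ S) (hδ' : 0 < δ')
    (k : ℕ) :
    ∃ M₀ : ℕ, 1 ≤ M₀ ∧ ∀ M : ℕ, M₀ ≤ M → ∀ w : ℂ, ‖w‖ ≤ S →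
      ‖(N.choose k : ℂ) * (-1) ^ k * (((ν : ℂ) + w / M) ^ k / (k.factorial : ℂ)) ^ M /
          ((N.choose (ν - 1) : ℂ) * (-1) ^ (ν - 1) *
            ((ν : ℂ) ^ (ν - 1) / ((ν - 1).factorial : ℂ)) ^ M) -
        ((if k = ν - 1 then Complex.exp (w * (1 - 1 / (ν : ℂ))) else 0) +
          (if k = ν then -(((N + 1 - ν : ℕ) : ℂ) / (ν : ℂ)) * Complex.exp w else 0))‖ ≤ δ' := by
  have hν0 : (ν : ℂ) ≠ 0 := Nat.cast_ne_zero.mpr (by omega)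
  have hνR : (0 : ℝ) < (ν : ℝ) := by exact_mod_cast Nat.pos_of_ne_zero (by omega)
  have hch : (N.choose (ν - 1) : ℂ) ≠ 0 :=
    Nat.cast_ne_zero.mpr (Nat.choose_pos (by omega)).ne'
  have hsg : ((-1 : ℂ)) ^ (ν - 1) ≠ 0 := pow_ne_zero _ (by norm_num)
  have hC : (N.choose (ν - 1) : ℂ) * (-1) ^ (ν - 1) ≠ 0 := mul_ne_zero hch hsg
  have hfν : (((ν - 1).factorial : ℂ)) ≠ 0 := Nat.cast_ne_zero.mpr (Nat.factorial_ne_zero _)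
  have hνpow : ((ν : ℂ)) ^ (ν - 1) ≠ 0 := pow_ne_zero _ hν0
  by_cases hk1 : k = ν - 1
  · -- case k = ν - 1
    subst hk1
    obtain ⟨M₀, hM₀1, hM₀⟩ := key_exp (ν - 1) S δ' hS hδ'
    refine ⟨M₀, hM₀1, fun M hM w hw => ?_⟩
    have hMC : (M : ℂ) ≠ 0 := Nat.cast_ne_zero.mpr (by omega)
    have hterm :
        (N.choose (ν - 1) : ℂ) * (-1) ^ (ν - 1) *
            (((ν : ℂ) + w / M) ^ (ν - 1) / ((ν - 1).factorial : ℂ)) ^ M /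
          ((N.choose (ν - 1) : ℂ) * (-1) ^ (ν - 1) *
            ((ν : ℂ) ^ (ν - 1) / ((ν - 1).factorial : ℂ)) ^ M) =
        (1 + (w / (ν : ℂ)) / (M : ℂ)) ^ ((ν - 1) * M) := by
      rw [mul_div_mul_left _ _ hC, ← div_pow, pow_mul]
      congr 2
      rw [div_div_div_cancel_right₀ hfν, ← div_pow]
      congr 1
      rw [add_div, div_self hν0, div_div, div_div, mul_comm]
    rw [hterm]
    have hz : ‖w / (ν : ℂ)‖ ≤ S := by
      rw [norm_div, Complex.norm_natCast]
      exact (div_le_self (norm_nonneg w) (by exact_mod_cast hν1)).trans hw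
    have hexp : Complex.exp (((ν - 1 : ℕ) : ℂ) * (w / (ν : ℂ))) =
        Complex.exp (w * (1 - 1 / (ν : ℂ))) := by
      congr 1
      have : ((ν - 1 : ℕ) : ℂ) = (ν : ℂ) - 1 := by
        push_cast [Nat.cast_sub hν1]; ring
      rw [this]
      field_simp
    have := hM₀ M hM (w / (ν : ℂ)) hz
    rw [hexp] at this
    rw [if_pos rfl, if_neg (show ¬ (ν - 1 = ν) by omega), add_zero]
    exact this
  · by_cases hk2 : k = ν
    · rcases hk2.symm with rfl
      have hνm : ν - 1 + 1 = ν := by omega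
      have hchooseC : (N.choose ν : ℂ) * ν = (N.choose (ν - 1) : ℂ) * ((N + 1 - ν : ℕ) : ℂ) := by
        have h := Nat.choose_succ_right_eq N (ν - 1)
        rw [hνm] at h
        have h2 : N - (ν - 1) = N + 1 - ν := by omega
        rw [h2] at h
        exact_mod_cast congrArg (fun n : ℕ => (n : ℂ)) h
      have hsign : ((-1 : ℂ)) ^ ν = -((-1 : ℂ)) ^ (ν - 1) := by
        conv_lhs => rw [← hνm]
        rw [pow_succ]; ring
      have hfacν : (ν.factorial : ℂ) = (ν : ℂ) * ((ν - 1).factorial : ℂ) := by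
        have h : ν.factorial = ν * (ν - 1).factorial := by
          conv_lhs => rw [← hνm]
          rw [Nat.factorial_succ, hνm]
        rw [h]; push_cast; ring
      have hpowsucc : ((ν : ℂ)) ^ ν = (ν : ℂ) ^ (ν - 1) * (ν : ℂ) := by
        conv_lhs => rw [← hνm]
        rw [pow_succ, hνm]
      have hNp1 : (0 : ℝ) < (N : ℝ) + 1 := by positivity
      obtain ⟨M₀, hM₀1, hM₀⟩ := key_exp ν S (δ' / ((N : ℝ) + 1)) hS (by positivity)
      refine ⟨M₀, hM₀1, fun M hM w hw => ?_⟩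
      have hMC : (M : ℂ) ≠ 0 := Nat.cast_ne_zero.mpr (by omega)
      have hbase : (1 + w / (ν : ℂ) / (M : ℂ)) = ((ν : ℂ) + w / M) / ν := by
        field_simp
      have hterm :
          (N.choose ν : ℂ) * (-1) ^ ν *
              (((ν : ℂ) + w / M) ^ ν / (ν.factorial : ℂ)) ^ M /
            ((N.choose (ν - 1) : ℂ) * (-1) ^ (ν - 1) *
              ((ν : ℂ) ^ (ν - 1) / ((ν - 1).factorial : ℂ)) ^ M) =
          (-(((N + 1 - ν : ℕ) : ℂ) / (ν : ℂ))) *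
            (1 + (w / (ν : ℂ)) / (M : ℂ)) ^ (ν * M) := by
        rw [mul_div_mul_comm, ← div_pow, pow_mul]
        congr 1
        · rw [hsign, div_eq_iff (mul_ne_zero hch hsg)]
          field_simp
          linear_combination (-1 : ℂ) * hchooseC
        · congr 1
          rw [hbase, div_pow, hpowsucc, hfacν]
          field_simp
      rw [hterm, if_neg (show ¬ (ν = ν - 1) by omega), if_pos rfl, zero_add]
      have hz : ‖w / (ν : ℂ)‖ ≤ S := by
        rw [norm_div, Complex.norm_natCast]
        exact (div_le_self (norm_nonneg w) (by exact_mod_cast hν1)).trans hw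
      have hexpw : Complex.exp ((ν : ℂ) * (w / (ν : ℂ))) = Complex.exp w := by
        congr 1; field_simp
      have hkey := hM₀ M hM (w / (ν : ℂ)) hz
      rw [hexpw] at hkey
      have hcoef : ‖(-(((N + 1 - ν : ℕ) : ℂ) / (ν : ℂ)))‖ ≤ (N : ℝ) + 1 := by
        rw [norm_neg, norm_div, Complex.norm_natCast, Complex.norm_natCast]
        refine (div_le_self (Nat.cast_nonneg _) (by exact_mod_cast hν1)).trans ?_
        exact_mod_cast Nat.le_succ_of_le (by omega : N + 1 - ν ≤ N)
      calc ‖(-(((N + 1 - ν : ℕ) : ℂ) / (ν : ℂ))) * (1 + (w / (ν : ℂ)) / (M : ℂ)) ^ (ν * M) -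
              (-(((N + 1 - ν : ℕ) : ℂ) / (ν : ℂ))) * Complex.exp w‖
          = ‖(-(((N + 1 - ν : ℕ) : ℂ) / (ν : ℂ)))‖ *
              ‖(1 + (w / (ν : ℂ)) / (M : ℂ)) ^ (ν * M) - Complex.exp w‖ := by
            rw [← mul_sub, norm_mul]
        _ ≤ ((N : ℝ) + 1) * (δ' / ((N : ℝ) + 1)) :=
            mul_le_mul hcoef hkey (norm_nonneg _) hNp1.le
        _ = δ' := by field_simp
    · -- k ∉ {ν-1, ν}: term tends to 0
      have hνm : ν - 1 + 1 = ν := by omega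
      have hfkR : (0 : ℝ) < (k.factorial : ℝ) := by exact_mod_cast k.factorial_pos
      have hfνR : (0 : ℝ) < ((ν - 1).factorial : ℝ) := by exact_mod_cast (ν - 1).factorial_pos
      have hchR : (0 : ℝ) < (N.choose (ν - 1) : ℝ) := by
        exact_mod_cast Nat.choose_pos (by omega : ν - 1 ≤ N)
      set ρ : ℝ := (ν : ℝ) ^ k * ((ν - 1).factorial : ℝ) / ((k.factorial : ℝ) * (ν : ℝ) ^ (ν - 1)) with hρdef
      have hρ0 : 0 ≤ ρ := by positivity
      have hρ1 : ρ < 1 := by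
        rw [hρdef, div_lt_one (by positivity)]
        have h := fact_pow_lt (ν - 1) k hk1 (by omega)
        rw [hνm] at h
        have hcR : ((ν - 1).factorial : ℝ) * (ν : ℝ) ^ k < (k.factorial : ℝ) * (ν : ℝ) ^ (ν - 1) := by
          exact_mod_cast h
        linarith [hcR]
      set C : ℝ := (N.choose k : ℝ) / (N.choose (ν - 1) : ℝ) * Real.exp (S * k / ν) with hCdef
      obtain ⟨M₀, hM₀1, hM₀⟩ := key_decay C ρ δ' hρ0 hρ1 hδ'
      refine ⟨M₀, hM₀1, fun M hM w hw => ?_⟩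
      rw [if_neg hk1, if_neg hk2, add_zero, sub_zero]
      have hMR : (0 : ℝ) < (M : ℝ) := by exact_mod_cast (by omega : 0 < M)
      set β : ℝ := ‖(ν : ℂ) + w / M‖ with hβdef
      have hβ0 : 0 ≤ β := norm_nonneg _
      have hβ : β ≤ (ν : ℝ) + S / M := by
        rw [hβdef]
        calc ‖(ν : ℂ) + w / M‖ ≤ ‖(ν : ℂ)‖ + ‖w / (M : ℂ)‖ := norm_add_le _ _
          _ ≤ (ν : ℝ) + S / M := by
              rw [Complex.norm_natCast, norm_div, Complex.norm_natCast]
              gcongr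
      have hnorm : ‖(N.choose k : ℂ) * (-1) ^ k * (((ν : ℂ) + w / M) ^ k / (k.factorial : ℂ)) ^ M /
          ((N.choose (ν - 1) : ℂ) * (-1) ^ (ν - 1) *
            ((ν : ℂ) ^ (ν - 1) / ((ν - 1).factorial : ℂ)) ^ M)‖ =
          (N.choose k : ℝ) * (β ^ k / (k.factorial : ℝ)) ^ M /
            ((N.choose (ν - 1) : ℝ) * ((ν : ℝ) ^ (ν - 1) / ((ν - 1).factorial : ℝ)) ^ M) := by
        simp [norm_div, norm_mul, norm_pow, Complex.norm_natCast, hβdef]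
      rw [hnorm]
      have e2 : (1 + S / ((ν : ℝ) * M)) ≤ Real.exp (S / ((ν : ℝ) * M)) := by
        have := Real.add_one_le_exp (S / ((ν : ℝ) * M))
        linarith
      have hmain : (β ^ k / (k.factorial : ℝ)) ^ M ≤
          Real.exp (S * k / ν) * ((ν : ℝ) ^ k / (k.factorial : ℝ)) ^ M := by
        have e1 : ((ν : ℝ) + S / M) = (ν : ℝ) * (1 + S / ((ν : ℝ) * M)) := by
          field_simp
        have hexp1 : ((1 + S / ((ν : ℝ) * M)) ^ k) ^ M ≤ Real.exp (S * k / ν) := by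
          have h0 : (0 : ℝ) ≤ 1 + S / ((ν : ℝ) * M) := by positivity
          calc ((1 + S / ((ν : ℝ) * M)) ^ k) ^ M
              ≤ ((Real.exp (S / ((ν : ℝ) * M))) ^ k) ^ M := by gcongr
            _ = Real.exp ((M : ℝ) * ((k : ℝ) * (S / ((ν : ℝ) * M)))) := by
                rw [← Real.exp_nat_mul, ← Real.exp_nat_mul]
            _ = Real.exp (S * k / ν) := by
                congr 1
                field_simp
        calc (β ^ k / (k.factorial : ℝ)) ^ M
            ≤ (((ν : ℝ) + S / M) ^ k / (k.factorial : ℝ)) ^ M := by gcongr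
          _ = ((ν : ℝ) ^ k / (k.factorial : ℝ)) ^ M * ((1 + S / ((ν : ℝ) * M)) ^ k) ^ M := by
              rw [e1, mul_pow]; ring
          _ ≤ ((ν : ℝ) ^ k / (k.factorial : ℝ)) ^ M * Real.exp (S * k / ν) := by
              have hb : (0 : ℝ) ≤ ((ν : ℝ) ^ k / (k.factorial : ℝ)) ^ M := by positivity
              exact mul_le_mul_of_nonneg_left hexp1 hb
          _ = Real.exp (S * k / ν) * ((ν : ℝ) ^ k / (k.factorial : ℝ)) ^ M := by ring
      have hρB : ρ * ((ν : ℝ) ^ (ν - 1) / ((ν - 1).factorial : ℝ)) =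
          (ν : ℝ) ^ k / (k.factorial : ℝ) := by
        rw [hρdef]; field_simp
      have hfinal : (N.choose k : ℝ) * (β ^ k / (k.factorial : ℝ)) ^ M /
            ((N.choose (ν - 1) : ℝ) * ((ν : ℝ) ^ (ν - 1) / ((ν - 1).factorial : ℝ)) ^ M) ≤
          C * ρ ^ M := by
        rw [div_le_iff₀ (by positivity)]
        calc (N.choose k : ℝ) * (β ^ k / (k.factorial : ℝ)) ^ M
            ≤ (N.choose k : ℝ) * (Real.exp (S * k / ν) * ((ν : ℝ) ^ k / (k.factorial : ℝ)) ^ M) :=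
              mul_le_mul_of_nonneg_left hmain (Nat.cast_nonneg _)
          _ = C * ρ ^ M * ((N.choose (ν - 1) : ℝ) *
                ((ν : ℝ) ^ (ν - 1) / ((ν - 1).factorial : ℝ)) ^ M) := by
              rw [← hρB, mul_pow, hCdef]
              field_simp
      exact hfinal.trans (hM₀ M hM)

/-- Uniformly on compact subsets of `ℂ`,
`Q_N^{(M)}(ν + w/M) / [C(N,ν−1)(−1)^{ν−1}(ν^{ν−1}/(ν−1)!)^M]` converges, as `M → ∞`, to
`e^{w(1−1/ν)} (1 − ((N+1−ν)/ν) e^{w/ν})`. -/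
theorem Qpoly_local_limit
    (N ν : ℕ) (hN : 1 ≤ N) (hν1 : 1 ≤ ν) (hνN : ν ≤ N)
    (𝒦 : Set ℂ) (h𝒦 : IsCompact 𝒦) (δ : ℝ) (hδ : 0 < δ) :
    ∃ M₀ : ℕ, ∀ M : ℕ, M₀ ≤ M → ∀ w ∈ 𝒦,
      ‖Qpoly N M ((ν : ℂ) + w / M) /
          ((N.choose (ν - 1) : ℂ) * (-1) ^ (ν - 1) *
            ((ν : ℂ) ^ (ν - 1) / ((ν - 1).factorial : ℂ)) ^ M) -
        Complex.exp (w * (1 - 1 / (ν : ℂ))) *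
          (1 - ((N + 1 - ν : ℕ) : ℂ) / (ν : ℂ) * Complex.exp (w / (ν : ℂ)))‖ ≤ δ := by
  have hν0 : (ν : ℂ) ≠ 0 := Nat.cast_ne_zero.mpr (by omega)
  obtain ⟨S₀, hS₀⟩ := h𝒦.isBounded.exists_norm_le
  set S : ℝ := max S₀ 1 with hSdef
  have hS : 1 ≤ S := le_max_right _ _
  have hbound : ∀ w ∈ 𝒦, ‖w‖ ≤ S := fun w hw => (hS₀ w hw).trans (le_max_left _ _)
  set δ' : ℝ := δ / (N + 1) with hδ'def
  have hδ' : 0 < δ' := by positivity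
  have main := fun k => per_k N ν hν1 hνN S δ' hS hδ' k
  choose g hg1 hg2 using main
  refine ⟨(Finset.range (N + 1)).sup g, fun M hM w hw => ?_⟩
  have hbw : ‖w‖ ≤ S := hbound w hw
  have hgM : ∀ k ∈ Finset.range (N + 1), g k ≤ M :=
    fun k hk => le_trans (Finset.le_sup hk) hM
  -- rewrite the limit function as a sum
  have hL : Complex.exp (w * (1 - 1 / (ν : ℂ))) *
        (1 - ((N + 1 - ν : ℕ) : ℂ) / (ν : ℂ) * Complex.exp (w / (ν : ℂ))) =
      ∑ k ∈ Finset.range (N + 1),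
        ((if k = ν - 1 then Complex.exp (w * (1 - 1 / (ν : ℂ))) else 0) +
          (if k = ν then -(((N + 1 - ν : ℕ) : ℂ) / (ν : ℂ)) * Complex.exp w else 0)) := by
    rw [Finset.sum_add_distrib, Finset.sum_ite_eq' (Finset.range (N + 1)) (ν - 1),
      Finset.sum_ite_eq' (Finset.range (N + 1)) ν]
    rw [if_pos (Finset.mem_range.mpr (by omega)), if_pos (Finset.mem_range.mpr (by omega))]
    have hexp : Complex.exp (w * (1 - 1 / (ν : ℂ))) * Complex.exp (w / (ν : ℂ)) =
        Complex.exp w := by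
      rw [← Complex.exp_add]
      congr 1
      field_simp
      ring
    rw [mul_sub, mul_one, mul_comm (((N + 1 - ν : ℕ) : ℂ) / (ν : ℂ)) _, ← mul_assoc, hexp]
    ring
  have hQ : Qpoly N M ((ν : ℂ) + w / M) /
        ((N.choose (ν - 1) : ℂ) * (-1) ^ (ν - 1) *
          ((ν : ℂ) ^ (ν - 1) / ((ν - 1).factorial : ℂ)) ^ M) =
      ∑ k ∈ Finset.range (N + 1),
        (N.choose k : ℂ) * (-1) ^ k * (((ν : ℂ) + w / M) ^ k / (k.factorial : ℂ)) ^ M /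
          ((N.choose (ν - 1) : ℂ) * (-1) ^ (ν - 1) *
            ((ν : ℂ) ^ (ν - 1) / ((ν - 1).factorial : ℂ)) ^ M) := by
    rw [Qpoly, Finset.sum_div]
  rw [hQ, hL, ← Finset.sum_sub_distrib]
  calc ‖∑ k ∈ Finset.range (N + 1), _‖
      ≤ ∑ k ∈ Finset.range (N + 1),
          ‖(N.choose k : ℂ) * (-1) ^ k * (((ν : ℂ) + w / M) ^ k / (k.factorial : ℂ)) ^ M /
            ((N.choose (ν - 1) : ℂ) * (-1) ^ (ν - 1) *
              ((ν : ℂ) ^ (ν - 1) / ((ν - 1).factorial : ℂ)) ^ M) -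
          ((if k = ν - 1 then Complex.exp (w * (1 - 1 / (ν : ℂ))) else 0) +
            (if k = ν then -(((N + 1 - ν : ℕ) : ℂ) / (ν : ℂ)) * Complex.exp w else 0))‖ :=
        norm_sum_le _ _
    _ ≤ ∑ k ∈ Finset.range (N + 1), δ' :=
        Finset.sum_le_sum fun k hk => hg2 k M (hgM k hk) w hbw
    _ = δ := by
        rw [Finset.sum_const, Finset.card_range, nsmul_eq_mul, hδ'def]
        field_simp
        push_cast; ring
end

section
/- Fix N ≥ 1 and ν ∈ {1,…,N}. Then there exists M_0 ≥ 1 and, for each M ≥ M_0, a real number u_M > 0 with Q_N^{(M)}(u_M) = 0, such that lim_{M→∞} M (u_M − ν) = ν log( ν / (N + 1 − ν) ). Equivalently, p_N^{(M)} has a positive real zero x_M = u_M^M satisfying lim_{M→∞} ( log x_M − M log ν ) = log( ν / (N + 1 − ν) ). -/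
open Filter Finset

lemma aux1 (ν k : ℕ) : ∀ m, k ≤ m → m ≤ ν → ν ^ k * m.factorial ≤ ν ^ m * k.factorial := by
  intro m hkm
  induction m, hkm using Nat.le_induction with
  | base => intro _; exact le_rfl
  | succ m hm ih =>
    intro hm1
    calc ν ^ k * (m + 1).factorial = (ν ^ k * m.factorial) * (m + 1) := by
          rw [Nat.factorial_succ]; ring
      _ ≤ (ν ^ m * k.factorial) * (m + 1) := Nat.mul_le_mul_right _ (ih (by omega))
      _ ≤ (ν ^ m * k.factorial) * ν := Nat.mul_le_mul_left _ hm1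
      _ = ν ^ (m + 1) * k.factorial := by ring

lemma aux2 (ν m : ℕ) (hm : ν ≤ m) : ∀ k, m ≤ k → ν ^ k * m.factorial ≤ ν ^ m * k.factorial := by
  intro k hmk
  induction k, hmk using Nat.le_induction with
  | base => exact le_rfl
  | succ k hk ih =>
    calc ν ^ (k + 1) * m.factorial = ν * (ν ^ k * m.factorial) := by ring
      _ ≤ ν * (ν ^ m * k.factorial) := Nat.mul_le_mul_left _ ih
      _ ≤ (k + 1) * (ν ^ m * k.factorial) := Nat.mul_le_mul_right _ (by omega)
      _ = ν ^ m * (k + 1).factorial := by rw [Nat.factorial_succ]; ring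

lemma aux3 (ν k : ℕ) (hν : 1 ≤ ν) (hk : k + 2 ≤ ν ∨ ν + 1 ≤ k) :
    ν ^ k * ((ν + 1) * (ν - 1).factorial) ≤ ν ^ ν * k.factorial := by
  rcases hk with hk | hk
  · obtain ⟨j, rfl⟩ : ∃ j, ν = j + 2 := ⟨ν - 2, by omega⟩
    have h := aux1 (j + 2) k j (by omega) (by omega)
    have h2 : (j + 2 : ℕ) - 1 = j + 1 := by omega
    rw [h2, Nat.factorial_succ]
    calc (j+2) ^ k * ((j + 3) * ((j+1) * j.factorial))
        = (j ^ 2 + 4*j + 3) * ((j+2) ^ k * j.factorial) := by ring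
      _ ≤ (j ^ 2 + 4*j + 3) * ((j+2) ^ j * k.factorial) := Nat.mul_le_mul_left _ h
      _ ≤ (j+2) ^ 2 * ((j+2) ^ j * k.factorial) := Nat.mul_le_mul_right _ (by nlinarith)
      _ = (j+2) ^ (j + 2) * k.factorial := by ring
  · obtain ⟨i, rfl⟩ : ∃ i, ν = i + 1 := ⟨ν - 1, by omega⟩
    have h := aux2 (i + 1) (i + 2) (by omega) k (by omega)
    rw [Nat.factorial_succ, Nat.factorial_succ] at h
    have h2 : (i + 1 : ℕ) - 1 = i := by omega
    rw [h2]
    have : (i+1) * ((i+1) ^ k * ((i + 2) * i.factorial)) ≤ (i+1) * ((i+1) ^ (i+1) * k.factorial) := by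
      calc (i+1) * ((i+1) ^ k * ((i + 2) * i.factorial))
          = (i+1) ^ k * ((i + 2) * ((i+1) * i.factorial)) := by ring
        _ ≤ (i+1) ^ (i+2) * k.factorial := h
        _ = (i+1) * ((i+1) ^ (i+1) * k.factorial) := by ring
    exact Nat.le_of_mul_le_mul_left this (by omega)

noncomputable def qR (N M : ℕ) (x : ℝ) : ℝ :=
  ∑ k ∈ Finset.range (N + 1), (N.choose k : ℝ) * (-1) ^ k * (x ^ k / (k.factorial : ℝ)) ^ M

lemma Qpoly_eq (N M : ℕ) (x : ℝ) : Qpoly N M (x : ℂ) = ((qR N M x : ℝ) : ℂ) := by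
  simp only [Qpoly, qR]
  push_cast
  ring

lemma qR_cont (N M : ℕ) : Continuous (qR N M) := by
  unfold qR
  continuity

-- term bound
lemma term_bound (N w k M : ℕ) (hkN : k ≤ N) (hw : w + 1 ≤ N)
    (hk : k + 2 ≤ w + 1 ∨ w + 2 ≤ k) (s : ℝ) :
    (((w + 1 : ℝ) * Real.exp s) ^ k / k.factorial) ^ M ≤
      ((w + 1 : ℝ) / (w + 2)) ^ M * Real.exp (|s| * (N + 1) * M) *
        (((w + 1 : ℝ) * Real.exp s) ^ w / w.factorial) ^ M := by
  have hbase : ((w + 1 : ℝ) * Real.exp s) ^ k / k.factorial ≤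
      ((w + 1 : ℝ) / (w + 2)) * Real.exp (|s| * (N + 1)) *
        (((w + 1 : ℝ) * Real.exp s) ^ w / w.factorial) := by
    have hnat := aux3 (w + 1) k (by omega) (by omega)
    have h2 : (w + 1 : ℕ) - 1 = w := by omega
    rw [h2] at hnat
    have hnatR : ((w + 1 : ℝ)) ^ k * ((w + 2) * w.factorial) ≤ (w + 1 : ℝ) ^ (w + 1) * k.factorial := by
      exact_mod_cast hnat
    have hexp : Real.exp s ^ k ≤ Real.exp (|s| * (N + 1)) * Real.exp s ^ w := by
      rw [← Real.exp_nat_mul, ← Real.exp_nat_mul, ← Real.exp_add]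
      apply Real.exp_le_exp.2
      have h1 : s * k - s * w ≤ |s| * (N + 1) := by
        have : s * k - s * w = s * ((k : ℝ) - w) := by ring
        rw [this]
        calc s * ((k : ℝ) - w) ≤ |s * ((k : ℝ) - w)| := le_abs_self _
          _ = |s| * |(k : ℝ) - w| := abs_mul _ _
          _ ≤ |s| * (N + 1) := by
            apply mul_le_mul_of_nonneg_left _ (abs_nonneg s)
            rw [abs_le]
            constructor
            · have : (w : ℝ) ≤ N := by exact_mod_cast (by omega : w ≤ N)
              have : (k : ℝ) ≥ 0 := by positivity
              linarith
            · have : (k : ℝ) ≤ N := by exact_mod_cast hkN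
              have : (w : ℝ) ≥ 0 := by positivity
              linarith
      linarith
    have hkf : (0 : ℝ) < k.factorial := by exact_mod_cast k.factorial_pos
    have hwf : (0 : ℝ) < w.factorial := by exact_mod_cast w.factorial_pos
    have key : ((w + 1 : ℝ) ^ k * Real.exp s ^ k) * ((w + 2) * w.factorial) ≤
        ((w + 1 : ℝ) * Real.exp (|s| * (N + 1)) * ((w + 1 : ℝ) ^ w * Real.exp s ^ w)) * k.factorial := by
      calc ((w + 1 : ℝ) ^ k * Real.exp s ^ k) * ((w + 2) * w.factorial)
          = ((w + 1 : ℝ) ^ k * ((w + 2) * w.factorial)) * Real.exp s ^ k := by ring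
        _ ≤ ((w + 1 : ℝ) ^ (w + 1) * k.factorial) * (Real.exp (|s| * (N + 1)) * Real.exp s ^ w) := by
            apply mul_le_mul hnatR hexp (by positivity) (by positivity)
        _ = ((w + 1 : ℝ) * Real.exp (|s| * (N + 1)) * ((w + 1 : ℝ) ^ w * Real.exp s ^ w)) * k.factorial := by
            ring
    have hrhs : (w + 1 : ℝ) / (w + 2) * Real.exp (|s| * (N + 1)) *
        (((w + 1 : ℝ) * Real.exp s) ^ w / w.factorial) =
        ((w + 1 : ℝ) * Real.exp (|s| * (N + 1)) * ((w + 1 : ℝ) ^ w * Real.exp s ^ w)) /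
          ((w + 2) * w.factorial) := by
      rw [mul_pow]; field_simp
    rw [mul_pow, hrhs, div_le_div_iff₀ hkf (by positivity)]
    exact key
  calc (((w + 1 : ℝ) * Real.exp s) ^ k / k.factorial) ^ M
      ≤ (((w + 1 : ℝ) / (w + 2)) * Real.exp (|s| * (N + 1)) *
        (((w + 1 : ℝ) * Real.exp s) ^ w / w.factorial)) ^ M := by
        apply pow_le_pow_left₀ (by positivity) hbase
    _ = ((w + 1 : ℝ) / (w + 2)) ^ M * Real.exp (|s| * (N + 1)) ^ M *
        (((w + 1 : ℝ) * Real.exp s) ^ w / w.factorial) ^ M := by rw [mul_pow, mul_pow]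
    _ = ((w + 1 : ℝ) / (w + 2)) ^ M * Real.exp (|s| * (N + 1) * M) *
        (((w + 1 : ℝ) * Real.exp s) ^ w / w.factorial) ^ M := by
        rw [← Real.exp_nat_mul]; ring_nf
lemma F_est (N w M : ℕ) (hw : w + 1 ≤ N) (hM : 1 ≤ M) (L t : ℝ)
    (hL : Real.exp L = (w + 1 : ℝ) / ((N : ℝ) - w)) (ht : |t| ≤ 1) :
    |(-1 : ℝ) ^ w * qR N M ((w + 1 : ℝ) * Real.exp ((L + t) / M)) -
        (N.choose w : ℝ) * (1 - Real.exp t) *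
          (((w + 1 : ℝ) * Real.exp ((L + t) / M)) ^ w / w.factorial) ^ M| ≤
      2 ^ N * Real.exp ((|L| + 1) * (N + 1)) * ((w + 1 : ℝ) / (w + 2)) ^ M *
        (((w + 1 : ℝ) * Real.exp ((L + t) / M)) ^ w / w.factorial) ^ M := by
  have hM0 : (M : ℝ) ≠ 0 := by positivity
  set s : ℝ := (L + t) / M with hs
  set u : ℝ := (w + 1 : ℝ) * Real.exp s with hu
  have hu0 : 0 < u := by positivity
  set a : ℝ := u ^ w / w.factorial with ha
  have ha0 : 0 < a := by positivity
  set g : ℕ → ℝ := fun k => (-1 : ℝ) ^ w * ((N.choose k : ℝ) * (-1) ^ k * (u ^ k / k.factorial) ^ M)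
    with hg
  have hqR : (-1 : ℝ) ^ w * qR N M u = ∑ k ∈ Finset.range (N + 1), g k := by
    rw [qR, Finset.mul_sum]
  have hmem1 : w ∈ Finset.range (N + 1) := Finset.mem_range.2 (by omega)
  have hmem2 : w + 1 ∈ (Finset.range (N + 1)).erase w := by
    rw [Finset.mem_erase]
    exact ⟨by omega, Finset.mem_range.2 (by omega)⟩
  have hsplit : ∑ k ∈ Finset.range (N + 1), g k =
      g w + (g (w + 1) + ∑ k ∈ ((Finset.range (N + 1)).erase w).erase (w + 1), g k) := by
    rw [Finset.add_sum_erase _ g hmem2, Finset.add_sum_erase _ g hmem1]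
  have hsq : (-1 : ℝ) ^ w * (-1 : ℝ) ^ w = 1 := by
    rw [← pow_add]
    exact Even.neg_one_pow ⟨w, by ring⟩
  have hgw : g w = (N.choose w : ℝ) * a ^ M := by
    simp only [hg, ha]
    linear_combination ((N.choose w : ℝ) * (u ^ w / w.factorial) ^ M) * hsq
  have hNw0 : (0 : ℝ) < (N : ℝ) - w := by
    have : (w : ℝ) + 1 ≤ N := by exact_mod_cast hw
    linarith
  have hC : (N.choose (w + 1) : ℝ) * Real.exp L = N.choose w := by
    have hnat := Nat.choose_succ_right_eq N w
    have hcast : (N.choose (w + 1) : ℝ) * ((w : ℝ) + 1) = (N.choose w : ℝ) * ((N : ℝ) - w) := by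
      have h1 : ((N - w : ℕ) : ℝ) = (N : ℝ) - w := by
        rw [Nat.cast_sub (by omega)]
      calc (N.choose (w + 1) : ℝ) * ((w : ℝ) + 1) = ((N.choose (w + 1) * (w + 1) : ℕ) : ℝ) := by
            push_cast; ring
        _ = ((N.choose w * (N - w) : ℕ) : ℝ) := by rw [hnat]
        _ = (N.choose w : ℝ) * ((N : ℝ) - w) := by push_cast [h1]; ring
    rw [hL]
    field_simp
    linarith [hcast]
  have hub : u ^ (w + 1) / ((w + 1).factorial : ℝ) = a * Real.exp s := by
    rw [Nat.factorial_succ, pow_succ, ha]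
    have hwf : (w.factorial : ℝ) ≠ 0 := by positivity
    push_cast
    field_simp
    rw [hu]
  have hsM : s * M = L + t := div_mul_cancel₀ _ hM0
  have hgw1 : g (w + 1) = -((N.choose w : ℝ) * Real.exp t * a ^ M) := by
    have hsign : (-1 : ℝ) ^ w * (-1 : ℝ) ^ (w + 1) = -1 := by
      rw [pow_succ]
      linear_combination (-1 : ℝ) * hsq
    have hpow : (u ^ (w + 1) / ((w + 1).factorial : ℝ)) ^ M = a ^ M * (Real.exp L * Real.exp t) := by
      rw [hub, mul_pow, ← Real.exp_nat_mul, mul_comm (M : ℝ) s, hsM, Real.exp_add]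
    simp only [hg]
    rw [hpow]
    linear_combination ((N.choose (w + 1) : ℝ) * (a ^ M * (Real.exp L * Real.exp t))) * hsign +
      (-(Real.exp t * a ^ M)) * hC
  -- error bound on remaining sum
  set S := ((Finset.range (N + 1)).erase w).erase (w + 1) with hS
  set D : ℝ := Real.exp ((|L| + 1) * (N + 1)) * ((w + 1 : ℝ) / (w + 2)) ^ M * a ^ M with hD
  have hD0 : 0 ≤ D := by positivity
  have hterm : ∀ k ∈ S, |g k| ≤ (N.choose k : ℝ) * D := by
    intro k hk
    have hk1 : k ∈ Finset.range (N + 1) := Finset.mem_of_mem_erase (Finset.mem_of_mem_erase hk)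
    have hkN : k ≤ N := by have := Finset.mem_range.1 hk1; omega
    have hkw : k ≠ w := Finset.ne_of_mem_erase (Finset.mem_of_mem_erase hk)
    have hkw1 : k ≠ w + 1 := Finset.ne_of_mem_erase hk
    have habs : |g k| = (N.choose k : ℝ) * (u ^ k / k.factorial) ^ M := by
      simp only [hg, abs_mul, abs_pow, abs_neg, abs_one, one_pow, one_mul, Nat.abs_cast]
      rw [abs_of_nonneg (by positivity : (0:ℝ) ≤ u ^ k / (k.factorial : ℝ)), mul_one]
    rw [habs]
    have hb := term_bound N w k M hkN hw (by omega) s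
    have hexps : Real.exp (|s| * (N + 1) * M) ≤ Real.exp ((|L| + 1) * (N + 1)) := by
      apply Real.exp_le_exp.2
      have h1 : |s| * M = |L + t| := by
        rw [hs, abs_div, abs_of_nonneg (by positivity : (0:ℝ) ≤ (M:ℝ)),
          div_mul_cancel₀ _ hM0]
      have h2 : |L + t| ≤ |L| + 1 := le_trans (abs_add_le _ _) (by linarith)
      have hN1 : (0:ℝ) ≤ (N:ℝ) + 1 := by positivity
      calc |s| * (N + 1) * M = (|s| * M) * (N + 1) := by ring
        _ = |L + t| * (N + 1) := by rw [h1]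
        _ ≤ (|L| + 1) * (N + 1) := by
            apply mul_le_mul_of_nonneg_right h2 hN1
    apply mul_le_mul_of_nonneg_left _ (by positivity : (0:ℝ) ≤ (N.choose k : ℝ))
    rw [hD]
    calc (u ^ k / k.factorial) ^ M
        ≤ ((w + 1 : ℝ) / (w + 2)) ^ M * Real.exp (|s| * (N + 1) * M) * a ^ M := hb
      _ ≤ ((w + 1 : ℝ) / (w + 2)) ^ M * Real.exp ((|L| + 1) * (N + 1)) * a ^ M := by
          apply mul_le_mul_of_nonneg_right _ (le_of_lt (pow_pos ha0 M))
          exact mul_le_mul_of_nonneg_left hexps (by positivity)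
      _ = Real.exp ((|L| + 1) * (N + 1)) * ((w + 1 : ℝ) / (w + 2)) ^ M * a ^ M := by ring
  have hsum : |∑ k ∈ S, g k| ≤ 2 ^ N * D := by
    calc |∑ k ∈ S, g k| ≤ ∑ k ∈ S, |g k| := Finset.abs_sum_le_sum_abs _ _
      _ ≤ ∑ k ∈ S, (N.choose k : ℝ) * D := Finset.sum_le_sum hterm
      _ = (∑ k ∈ S, (N.choose k : ℝ)) * D := by rw [← Finset.sum_mul]
      _ ≤ (∑ k ∈ Finset.range (N + 1), (N.choose k : ℝ)) * D := by
          apply mul_le_mul_of_nonneg_right _ hD0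
          apply Finset.sum_le_sum_of_subset_of_nonneg
          · intro x hx; exact Finset.mem_of_mem_erase (Finset.mem_of_mem_erase hx)
          · intro i _ _; positivity
      _ = 2 ^ N * D := by
          rw [← Nat.cast_sum]
          rw [Nat.sum_range_choose]
          push_cast; ring
  have hfinal : (-1 : ℝ) ^ w * qR N M u - (N.choose w : ℝ) * (1 - Real.exp t) * a ^ M =
      ∑ k ∈ S, g k := by
    rw [hqR, hsplit, hgw, hgw1]
    ring
  rw [hfinal]
  calc |∑ k ∈ S, g k| ≤ 2 ^ N * D := hsum
    _ = 2 ^ N * Real.exp ((|L| + 1) * (N + 1)) * ((w + 1 : ℝ) / (w + 2)) ^ M * a ^ M := by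
        rw [hD]; ring

lemma exists_zero (N w M : ℕ) (hw : w + 1 ≤ N) (hM : 1 ≤ M) (L δ : ℝ)
    (hL : Real.exp L = (w + 1 : ℝ) / ((N : ℝ) - w))
    (hδ0 : 0 < δ) (hδ1 : δ ≤ 1 / 2)
    (hδB : 2 ^ N * Real.exp ((|L| + 1) * (N + 1)) * ((w + 1 : ℝ) / (w + 2)) ^ M ≤
      (N.choose w : ℝ) * δ / 4) :
    ∃ x : ℝ, (w + 1 : ℝ) * Real.exp ((L - δ) / M) ≤ x ∧
      x ≤ (w + 1 : ℝ) * Real.exp ((L + δ) / M) ∧ qR N M x = 0 := by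
  have hFc : Continuous (fun x => (-1 : ℝ) ^ w * qR N M x) := continuous_const.mul (qR_cont N M)
  set um : ℝ := (w + 1 : ℝ) * Real.exp ((L + -δ) / M) with hum
  set up : ℝ := (w + 1 : ℝ) * Real.exp ((L + δ) / M) with hup
  have hC1 : (1 : ℝ) ≤ (N.choose w : ℝ) := by
    exact_mod_cast Nat.one_le_iff_ne_zero.2 (Nat.choose_pos (by omega : w ≤ N)).ne'
  have hC0 : (0 : ℝ) < (N.choose w : ℝ) := by linarith
  have hmle : um ≤ up := by
    apply mul_le_mul_of_nonneg_left _ (by positivity : (0:ℝ) ≤ (w:ℝ) + 1)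
    apply Real.exp_le_exp.2
    apply div_le_div_of_nonneg_right (by linarith) (by positivity)
  have hAm0 : (0 : ℝ) < (um ^ w / w.factorial) ^ M := by positivity
  have hAp0 : (0 : ℝ) < (up ^ w / w.factorial) ^ M := by positivity
  -- estimates
  have hem := F_est N w M hw hM L (-δ) hL (by rw [abs_neg, abs_of_pos hδ0]; linarith)
  have hep := F_est N w M hw hM L δ hL (by rw [abs_of_pos hδ0]; linarith)
  rw [← hum] at hem
  rw [← hup] at hep
  have hBm : 2 ^ N * Real.exp ((|L| + 1) * (N + 1)) * ((w + 1 : ℝ) / (w + 2)) ^ M *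
      (um ^ w / w.factorial) ^ M ≤ (N.choose w : ℝ) * δ / 4 * (um ^ w / w.factorial) ^ M :=
    mul_le_mul_of_nonneg_right hδB hAm0.le
  have hBp : 2 ^ N * Real.exp ((|L| + 1) * (N + 1)) * ((w + 1 : ℝ) / (w + 2)) ^ M *
      (up ^ w / w.factorial) ^ M ≤ (N.choose w : ℝ) * δ / 4 * (up ^ w / w.factorial) ^ M :=
    mul_le_mul_of_nonneg_right hδB hAp0.le
  -- exp bounds
  have hexp1 : 1 - δ ≤ Real.exp (-δ) := by linarith [Real.add_one_le_exp (-δ)]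
  have hexp2 : (1 + δ) * Real.exp (-δ) ≤ 1 := by
    have h := Real.add_one_le_exp δ
    have e : Real.exp δ * Real.exp (-δ) = 1 := by
      rw [← Real.exp_add]; simp
    nlinarith [Real.exp_pos (-δ)]
  have hlow : δ / 2 ≤ 1 - Real.exp (-δ) := by nlinarith [Real.exp_pos (-δ)]
  have hhigh : 1 - Real.exp δ ≤ -δ := by linarith [Real.add_one_le_exp δ]
  -- sign at um : positive
  have hFm : 0 < (-1 : ℝ) ^ w * qR N M um := by
    have h1 := (abs_le.1 hem).1
    have h2 : (N.choose w : ℝ) * (δ / 2) * (um ^ w / w.factorial) ^ M ≤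
        (N.choose w : ℝ) * (1 - Real.exp (-δ)) * (um ^ w / w.factorial) ^ M := by
      apply mul_le_mul_of_nonneg_right _ hAm0.le
      exact mul_le_mul_of_nonneg_left hlow hC0.le
    have h3 : 0 < (N.choose w : ℝ) * (δ / 4) * (um ^ w / w.factorial) ^ M := by positivity
    linarith
  -- sign at up : negative
  have hFp : (-1 : ℝ) ^ w * qR N M up < 0 := by
    have h1 := (abs_le.1 hep).2
    have h2 : (N.choose w : ℝ) * (1 - Real.exp δ) * (up ^ w / w.factorial) ^ M ≤
        (N.choose w : ℝ) * (-δ) * (up ^ w / w.factorial) ^ M := by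
      apply mul_le_mul_of_nonneg_right _ hAp0.le
      exact mul_le_mul_of_nonneg_left hhigh hC0.le
    have h3 : 0 < (N.choose w : ℝ) * (δ / 4) * (up ^ w / w.factorial) ^ M := by positivity
    have h4 : 0 < (N.choose w : ℝ) * δ * (up ^ w / w.factorial) ^ M := by positivity
    linarith
  -- IVT
  have hsub := intermediate_value_Icc' hmle hFc.continuousOn
  have h0mem : (0 : ℝ) ∈ Set.Icc ((-1 : ℝ) ^ w * qR N M up) ((-1 : ℝ) ^ w * qR N M um) :=
    ⟨hFp.le, hFm.le⟩
  obtain ⟨x, hx, hFx⟩ := hsub h0mem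
  refine ⟨x, ?_, hx.2, ?_⟩
  · have h5 : (L + -δ) = L - δ := by ring
    rw [← h5]
    exact hx.1
  · rcases mul_eq_zero.1 hFx with h | h
    · exact absurd h (pow_ne_zero _ (by norm_num))
    · exact h

/-- For large `M`, `Q_N^{(M)}` has a positive real zero `u_M` near `ν` with
`M (u_M − ν) → ν log(ν/(N+1−ν))`; equivalently `p_N^{(M)}` has a positive zero `x_M = u_M^M`
with `log x_M − M log ν → log(ν/(N+1−ν))`. -/
theorem Qpoly_positive_zero_near_nu
    (N ν : ℕ) (hN : 1 ≤ N) (hν1 : 1 ≤ ν) (hνN : ν ≤ N) :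
    ∃ M₀ : ℕ, 1 ≤ M₀ ∧ ∃ u : ℕ → ℝ,
      (∀ M : ℕ, M₀ ≤ M → 0 < u M ∧ Qpoly N M ((u M : ℝ) : ℂ) = 0) ∧
      Tendsto (fun M : ℕ => (M : ℝ) * (u M - ν)) atTop
        (nhds ((ν : ℝ) * Real.log ((ν : ℝ) / ((N : ℝ) + 1 - ν)))) ∧
      Tendsto (fun M : ℕ => Real.log ((u M) ^ M) - (M : ℝ) * Real.log (ν : ℝ)) atTop
        (nhds (Real.log ((ν : ℝ) / ((N : ℝ) + 1 - ν)))) := by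
  obtain ⟨w, rfl⟩ : ∃ w, ν = w + 1 := ⟨ν - 1, by omega⟩
  have hw : w + 1 ≤ N := hνN
  have hNw0 : (0 : ℝ) < (N : ℝ) - w := by
    have : (w : ℝ) + 1 ≤ N := by exact_mod_cast hw
    linarith
  set L : ℝ := Real.log (((w + 1 : ℕ) : ℝ) / ((N : ℝ) + 1 - ((w + 1 : ℕ) : ℝ))) with hLdef
  have hrr : (((w + 1 : ℕ) : ℝ) / ((N : ℝ) + 1 - ((w + 1 : ℕ) : ℝ))) =
      ((w : ℝ) + 1) / ((N : ℝ) - w) := by push_cast; ring_nf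
  have hLr : Real.exp L = ((w : ℝ) + 1) / ((N : ℝ) - w) := by
    rw [hLdef, hrr, Real.exp_log (by positivity)]
  set γ : ℝ := ((w : ℝ) + 1) / ((w : ℝ) + 2) with hγdef
  have hγ0 : 0 < γ := by positivity
  have hγ1 : γ < 1 := by
    rw [hγdef, div_lt_one (by positivity)]
    linarith
  set B : ℝ := 2 ^ N * Real.exp ((|L| + 1) * ((N : ℝ) + 1)) with hBdef
  have hB0 : 0 < B := by positivity
  have hC1 : (1 : ℝ) ≤ (N.choose w : ℝ) := by
    exact_mod_cast Nat.one_le_iff_ne_zero.2 (Nat.choose_pos (by omega : w ≤ N)).ne'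
  have hC0 : (0 : ℝ) < (N.choose w : ℝ) := by linarith
  set δ : ℕ → ℝ := fun M => 4 * B * γ ^ M / (N.choose w : ℝ) with hδdef
  have hδ0 : ∀ M, 0 < δ M := fun M => by rw [hδdef]; positivity
  have hδlim : Tendsto δ atTop (nhds 0) := by
    have h1 := (tendsto_pow_atTop_nhds_zero_of_lt_one hγ0.le hγ1).const_mul
      (4 * B / (N.choose w : ℝ))
    rw [mul_zero] at h1
    apply h1.congr
    intro M
    rw [hδdef]
    ring
  obtain ⟨M₁, hM₁⟩ := eventually_atTop.1
    (hδlim.eventually (gt_mem_nhds (by norm_num : (0 : ℝ) < 1 / 2)))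
  set M₀ : ℕ := max (max M₁ (⌈|L| + 1⌉₊)) 1 with hM₀def
  have hM₀1 : 1 ≤ M₀ := le_max_right _ _
  have hMδ : ∀ M, M₀ ≤ M → δ M ≤ 1 / 2 := fun M hM =>
    (hM₁ M (le_trans (le_trans (le_max_left _ _) (le_max_left _ _)) hM)).le
  have hML : ∀ M, M₀ ≤ M → |L| + 1 ≤ (M : ℝ) := by
    intro M hM
    have h1 : (⌈|L| + 1⌉₊ : ℕ) ≤ M := le_trans (le_trans (le_max_right _ _) (le_max_left _ _)) hM
    calc |L| + 1 ≤ (⌈|L| + 1⌉₊ : ℝ) := Nat.le_ceil _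
      _ ≤ (M : ℝ) := by exact_mod_cast h1
  have key : ∀ M, M₀ ≤ M → ∃ x : ℝ, ((w : ℝ) + 1) * Real.exp ((L - δ M) / M) ≤ x ∧
      x ≤ ((w : ℝ) + 1) * Real.exp ((L + δ M) / M) ∧ qR N M x = 0 := by
    intro M hM
    apply exists_zero N w M hw (le_trans hM₀1 hM) L (δ M) hLr (hδ0 M) (hMδ M hM)
    have : (N.choose w : ℝ) * δ M / 4 = B * γ ^ M := by
      rw [hδdef]
      field_simp
    rw [this, hBdef]
  set u : ℕ → ℝ := fun M => if h : M₀ ≤ M then (key M h).choose else 1 with hudef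
  have huP : ∀ M, M₀ ≤ M → (((w : ℝ) + 1) * Real.exp ((L - δ M) / M) ≤ u M ∧
      u M ≤ ((w : ℝ) + 1) * Real.exp ((L + δ M) / M)) ∧ qR N M (u M) = 0 := by
    intro M h
    have hspec := (key M h).choose_spec
    rw [hudef]
    simp only [dif_pos h]
    exact ⟨⟨hspec.1, hspec.2.1⟩, hspec.2.2⟩
  have hu0 : ∀ M, M₀ ≤ M → 0 < u M := by
    intro M h
    have := (huP M h).1.1
    have h2 : (0 : ℝ) < ((w : ℝ) + 1) * Real.exp ((L - δ M) / M) := by positivity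
    linarith
  -- the s-estimate
  have hsest : ∀ M, M₀ ≤ M → |(M : ℝ) * Real.log (u M / ((w : ℝ) + 1)) - L| ≤ δ M := by
    intro M hM
    have hM0 : (0 : ℝ) < (M : ℝ) := by
      have : 1 ≤ M := le_trans hM₀1 hM
      exact_mod_cast this
    obtain ⟨⟨h1, h2⟩, _⟩ := huP M hM
    have hu0' := hu0 M hM
    have hd1 : Real.exp ((L - δ M) / M) ≤ u M / ((w : ℝ) + 1) := by
      rw [le_div_iff₀ (by positivity : (0:ℝ) < (w : ℝ) + 1)]
      linarith
    have hd2 : u M / ((w : ℝ) + 1) ≤ Real.exp ((L + δ M) / M) := by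
      rw [div_le_iff₀ (by positivity : (0:ℝ) < (w : ℝ) + 1)]
      linarith
    have hl1 : (L - δ M) / M ≤ Real.log (u M / ((w : ℝ) + 1)) := by
      calc (L - δ M) / M = Real.log (Real.exp ((L - δ M) / M)) := (Real.log_exp _).symm
        _ ≤ Real.log (u M / ((w : ℝ) + 1)) := Real.log_le_log (Real.exp_pos _) hd1
    have hl2 : Real.log (u M / ((w : ℝ) + 1)) ≤ (L + δ M) / M := by
      calc Real.log (u M / ((w : ℝ) + 1)) ≤ Real.log (Real.exp ((L + δ M) / M)) :=
            Real.log_le_log (by positivity) hd2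
        _ = (L + δ M) / M := Real.log_exp _
    rw [abs_le]
    constructor
    · have := mul_le_mul_of_nonneg_left hl1 hM0.le
      rw [mul_div_cancel₀ _ hM0.ne'] at this
      linarith
    · have := mul_le_mul_of_nonneg_left hl2 hM0.le
      rw [mul_div_cancel₀ _ hM0.ne'] at this
      linarith
  have hs : Tendsto (fun M : ℕ => (M : ℝ) * Real.log (u M / ((w : ℝ) + 1))) atTop (nhds L) := by
    rw [← tendsto_sub_nhds_zero_iff]
    apply squeeze_zero_norm' _ hδlim
    filter_upwards [eventually_atTop.2 ⟨M₀, fun M h => h⟩] with M hM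
    rw [Real.norm_eq_abs]
    exact hsest M hM
  refine ⟨M₀, hM₀1, u, ?_, ?_, ?_⟩
  · intro M hM
    refine ⟨hu0 M hM, ?_⟩
    rw [Qpoly_eq, Complex.ofReal_eq_zero]
    exact (huP M hM).2
  · -- first limit
    have hg0 : Tendsto (fun M : ℕ => (M : ℝ) *
        (Real.exp (Real.log (u M / ((w : ℝ) + 1))) - 1 - Real.log (u M / ((w : ℝ) + 1))))
        atTop (nhds 0) := by
      apply squeeze_zero_norm' _
        (tendsto_const_div_atTop_nhds_zero_nat ((|L| + 1) ^ 2))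
      filter_upwards [eventually_atTop.2 ⟨max M₀ 1, fun M h => h⟩] with M hM
      have hM' : M₀ ≤ M := le_trans (le_max_left _ _) hM
      have hM0 : (0 : ℝ) < (M : ℝ) := by
        have : 1 ≤ M := le_trans (le_max_right _ _) hM
        exact_mod_cast this
      set t : ℝ := Real.log (u M / ((w : ℝ) + 1)) with htdef
      have ht1 : |t| ≤ (|L| + 1) / M := by
        have h1 := hsest M hM'
        have h2 := hMδ M hM'
        have h3 : |(M : ℝ) * t| ≤ |L| + 1 := by
          calc |(M : ℝ) * t| ≤ |(M : ℝ) * t - L| + |L| := by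
                have := abs_add_le ((M : ℝ) * t - L) L
                simpa using this
            _ ≤ δ M + |L| := by linarith
            _ ≤ |L| + 1 := by linarith
        rw [abs_mul, abs_of_pos hM0] at h3
        rw [le_div_iff₀ hM0]
        linarith [h3]
      have ht2 : |t| ≤ 1 := by
        have := hML M hM'
        have h4 : (|L| + 1) / M ≤ 1 := by
          rw [div_le_one hM0]
          linarith
        linarith
      have hb := Real.abs_exp_sub_one_sub_id_le ht2
      rw [Real.norm_eq_abs, abs_mul, abs_of_pos hM0]
      calc (M : ℝ) * |Real.exp t - 1 - t| ≤ (M : ℝ) * t ^ 2 := by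
            apply mul_le_mul_of_nonneg_left hb hM0.le
        _ = (M : ℝ) * |t| ^ 2 := by rw [sq_abs]
        _ ≤ (M : ℝ) * ((|L| + 1) / M) ^ 2 := by
            apply mul_le_mul_of_nonneg_left _ hM0.le
            apply pow_le_pow_left₀ (abs_nonneg _) ht1
        _ = (|L| + 1) ^ 2 / M := by
            field_simp
    have hcomb := (hg0.const_mul ((w : ℝ) + 1)).add (hs.const_mul ((w : ℝ) + 1))
    rw [mul_zero, zero_add] at hcomb
    have htarget : (((w + 1 : ℕ) : ℝ) * L) = ((w : ℝ) + 1) * L := by push_cast; ring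
    rw [htarget]
    apply hcomb.congr'
    filter_upwards [eventually_atTop.2 ⟨M₀, fun M h => h⟩] with M hM
    have hu0' := hu0 M hM
    have hexp : Real.exp (Real.log (u M / ((w : ℝ) + 1))) = u M / ((w : ℝ) + 1) :=
      Real.exp_log (by positivity)
    rw [hexp]
    have : ((w + 1 : ℕ) : ℝ) = (w : ℝ) + 1 := by push_cast; ring
    rw [this]
    field_simp
    ring
  · -- second limit
    apply hs.congr'
    filter_upwards [eventually_atTop.2 ⟨M₀, fun M h => h⟩] with M hM
    have hu0' := hu0 M hM
    rw [Real.log_pow, Real.log_div hu0'.ne' (by positivity : ((w : ℝ) + 1) ≠ 0)]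
    have : ((w + 1 : ℕ) : ℝ) = (w : ℝ) + 1 := by push_cast; ring
    rw [this]
    ring
end

section
/- Fix N ≥ 1 and ε > 0. Then for every M ≥ 1 and every u ∈ ℂ with |u| ≥ N + ε: | Q_N^{(M)}(u) / [ (−1)^N (u^N/N!)^M ] − 1 | ≤ Σ_{k=0}^{N−1} binom(N,k) ( N/(N+ε) )^M. -/
open Finset

lemma fact_le_fact_mul_pow (k d : ℕ) : (k + d).factorial ≤ k.factorial * (k + d) ^ d := by
  induction d with
  | zero => simp
  | succ d ih =>
      calc (k + (d + 1)).factorial = (k + d + 1) * (k + d).factorial := by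
            rw [← Nat.add_assoc]; exact Nat.factorial_succ _
        _ ≤ (k + d + 1) * (k.factorial * (k + d) ^ d) := Nat.mul_le_mul_left _ ih
        _ ≤ (k + d + 1) * (k.factorial * (k + d + 1) ^ d) := by
            exact Nat.mul_le_mul_left _ (Nat.mul_le_mul_left _
              (Nat.pow_le_pow_left (Nat.le_succ _) d))
        _ = k.factorial * (k + d + 1) ^ (d + 1) := by ring

/-- **Estimate in the region `|u| ≥ N + ε`:** for every `M ≥ 1` and `|u| ≥ N + ε`,
`|Q_N^{(M)}(u)/((−1)^N (u^N/N!)^M) − 1| ≤ Σ_{k=0}^{N−1} C(N,k) (N/(N+ε))^M`. -/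
theorem Qpoly_estimate_outer_region
    (N : ℕ) (hN : 1 ≤ N) (ε : ℝ) (hε : 0 < ε) :
    ∀ M : ℕ, 1 ≤ M → ∀ u : ℂ, (N : ℝ) + ε ≤ ‖u‖ →
      ‖Qpoly N M u / ((-1 : ℂ) ^ N * (u ^ N / (N.factorial : ℂ)) ^ M) - 1‖
        ≤ ∑ k ∈ Finset.range N, (N.choose k : ℝ) * ((N : ℝ) / ((N : ℝ) + ε)) ^ M := by
  intro M hM u hu
  set A := ‖u‖ with hAdef
  have hNpos : (0:ℝ) < (N : ℝ) + ε := by positivity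
  have hApos : (0:ℝ) < A := lt_of_lt_of_le hNpos hu
  have hune : u ≠ 0 := norm_ne_zero_iff.mp (ne_of_gt hApos)
  set L : ℂ := (-1 : ℂ) ^ N * (u ^ N / (N.factorial : ℂ)) ^ M with hL
  have hLne : L ≠ 0 := by
    apply mul_ne_zero (pow_ne_zero _ (by norm_num))
    exact pow_ne_zero _ (div_ne_zero (pow_ne_zero _ hune)
      (Nat.cast_ne_zero.mpr (Nat.factorial_ne_zero N)))
  have hsplit : Qpoly N M u
      = (∑ k ∈ range N, (N.choose k : ℂ) * (-1) ^ k * (u ^ k / (k.factorial : ℂ)) ^ M) + L := by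
    rw [Qpoly, Finset.sum_range_succ, hL]
    simp
  have hrw : Qpoly N M u / L - 1
      = ∑ k ∈ range N, ((N.choose k : ℂ) * (-1) ^ k * (u ^ k / (k.factorial : ℂ)) ^ M) / L := by
    rw [hsplit, add_div, div_self hLne, add_sub_cancel_right, Finset.sum_div]
  rw [hrw]
  refine (norm_sum_le _ _).trans (Finset.sum_le_sum ?_)
  intro k hk
  have hkN : k < N := Finset.mem_range.mp hk
  have hkfpos : (0:ℝ) < (k.factorial : ℝ) := by positivity
  have hNfpos : (0:ℝ) < (N.factorial : ℝ) := by positivity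
  have hnorm : ‖((N.choose k : ℂ) * (-1) ^ k * (u ^ k / (k.factorial : ℂ)) ^ M) / L‖
      = (N.choose k : ℝ) * ((A ^ k / (k.factorial : ℝ)) / (A ^ N / (N.factorial : ℝ))) ^ M := by
    rw [hL]
    simp [hAdef, norm_div, norm_mul, norm_pow, Complex.norm_natCast,
      div_pow, mul_div_assoc]
  rw [hnorm]
  have hr0 : (0:ℝ) ≤ (N : ℝ) / ((N : ℝ) + ε) := by positivity
  have hr1 : (N : ℝ) / ((N : ℝ) + ε) ≤ 1 := by
    rw [div_le_one hNpos]; linarith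
  -- key bound: x ≤ r
  have hx : (A ^ k / (k.factorial : ℝ)) / (A ^ N / (N.factorial : ℝ))
      ≤ (N : ℝ) / ((N : ℝ) + ε) := by
    have hAN : A ^ N = A ^ k * A ^ (N - k) := by
      rw [← pow_add, Nat.add_sub_cancel' hkN.le]
    have heq : (A ^ k / (k.factorial : ℝ)) / (A ^ N / (N.factorial : ℝ))
        = ((N.factorial : ℝ) / (k.factorial : ℝ)) / A ^ (N - k) := by
      rw [hAN]; field_simp
    rw [heq]
    have h1 : ((N.factorial : ℝ) / (k.factorial : ℝ)) ≤ (N : ℝ) ^ (N - k) := by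
      rw [div_le_iff₀ hkfpos]
      have := fact_le_fact_mul_pow k (N - k)
      rw [Nat.add_sub_cancel' hkN.le] at this
      exact_mod_cast (by rw [mul_comm] at this; exact this : N.factorial ≤ N ^ (N - k) * k.factorial)
    have h2 : ((N : ℝ) + ε) ^ (N - k) ≤ A ^ (N - k) :=
      pow_le_pow_left₀ hNpos.le hu _
    have h3 : ((N.factorial : ℝ) / (k.factorial : ℝ)) / A ^ (N - k)
        ≤ (N : ℝ) ^ (N - k) / ((N : ℝ) + ε) ^ (N - k) := by
      apply div_le_div₀ (by positivity) h1 (by positivity) h2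
    refine h3.trans ?_
    rw [← div_pow]
    calc ((N : ℝ) / ((N : ℝ) + ε)) ^ (N - k) ≤ ((N : ℝ) / ((N : ℝ) + ε)) ^ 1 :=
          pow_le_pow_of_le_one hr0 hr1 (by omega)
      _ = (N : ℝ) / ((N : ℝ) + ε) := pow_one _
  have hxnn : (0:ℝ) ≤ (A ^ k / (k.factorial : ℝ)) / (A ^ N / (N.factorial : ℝ)) := by positivity
  exact mul_le_mul_of_nonneg_left (pow_le_pow_left₀ hxnn hx M) (by positivity)
end
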